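/- arXiv:1703.05685 — 3 statements merged into one kernel-verified Lean document; each statement's English description precedes it below -/
import Mathlib

section
/- Let G be a connected graph with at least one edge. Then γ(G) ≤ t(G), where γ(G) is the largest real zero of the adjoint polynomial of G and t(G) is the largest real zero of the matching polynomial of G. -/
open Polynomial

/-- A clique cover of `G`: a partition of the vertex set into parts each inducing a clique. -/
def SimpleGraph.IsCliqueCover {V : Type*} [Fintype V] [DecidableEq V] (G : SimpleGraph V)
    (P : Finpartition (Finset.univ : Finset V)) : Prop :=
  ∀ p ∈ P.parts, G.IsClique (p : Set V)

/-- `a_k(G)`: the number of clique covers of `G` with exactly `k` parts. -/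
noncomputable def numCliqueCovers {V : Type*} [Fintype V] [DecidableEq V] (G : SimpleGraph V)
    (k : ℕ) : ℕ :=
  {P : Finpartition (Finset.univ : Finset V) | G.IsCliqueCover P ∧ P.parts.card = k}.ncard

/-- A finset of vertices is independent: pairwise non-adjacent. -/
def SimpleGraph.IsIndepFinset {W : Type*} (H : SimpleGraph W) (s : Finset W) : Prop :=
  ∀ v ∈ s, ∀ w ∈ s, ¬ H.Adj v w

/-- `i_k(H)`: the number of independent sets of size `k` in `H`. -/
noncomputable def numIndepSets {W : Type*} (H : SimpleGraph W) (k : ℕ) : ℕ :=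
  {s : Finset W | H.IsIndepFinset s ∧ s.card = k}.ncard

/-- The auxiliary one-sided relation in the construction of `Ĝ`:
for edges `e = (u_i,u_j)`, `f = (u_k,u_l)` with `j ≤ l`, they are related iff
`i = k`, or `j = k`, or (`j = l` and `u_i, u_k` non-adjacent). -/
def hatRel {n : ℕ} (G : SimpleGraph (Fin n)) (e f : Fin n × Fin n) : Prop :=
  e.2 ≤ f.2 ∧ (e.1 = f.1 ∨ e.2 = f.1 ∨ (e.2 = f.2 ∧ ¬ G.Adj e.1 f.1))

/-- The graph `Ĝ` associated to `G` with its vertex ordering: vertices are the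
edges `(u_i,u_j)` with `i < j`. -/
def hatGraph {n : ℕ} (G : SimpleGraph (Fin n)) :
    SimpleGraph {p : Fin n × Fin n // p.1 < p.2 ∧ G.Adj p.1 p.2} where
  Adj e f := e ≠ f ∧ (hatRel G e.1 f.1 ∨ hatRel G f.1 e.1)
  symm := ⟨fun e f h => ⟨h.1.symm, h.2.symm⟩⟩
  loopless := ⟨fun e h => h.1 rfl⟩

/-- The independence polynomial `I(H,x) = Σ_k (-1)^k i_k(H) x^k` (over `ℝ`). -/
noncomputable def indepPoly {W : Type*} [Fintype W] (H : SimpleGraph W) : Polynomial ℝ :=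
  ∑ k ∈ Finset.range (Fintype.card W + 1), C ((-1 : ℝ) ^ k * (numIndepSets H k : ℝ)) * X ^ k

/-- The adjoint polynomial `h(G,x) = Σ_k (-1)^{n-k} a_k(G) x^k` (over `ℝ`). -/
noncomputable def adjPoly {V : Type*} [Fintype V] [DecidableEq V] (G : SimpleGraph V) :
    Polynomial ℝ :=
  ∑ k ∈ Finset.range (Fintype.card V + 1),
    C ((-1 : ℝ) ^ (Fintype.card V - k) * (numCliqueCovers G k : ℝ)) * X ^ k

/-- `h*(G,x) = x^n h(G,1/x) = Σ_k (-1)^k a_{n-k}(G) x^k` (over `ℝ`). -/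
noncomputable def hStarPoly {V : Type*} [Fintype V] [DecidableEq V] (G : SimpleGraph V) :
    Polynomial ℝ :=
  ∑ k ∈ Finset.range (Fintype.card V + 1),
    C ((-1 : ℝ) ^ k * (numCliqueCovers G (Fintype.card V - k) : ℝ)) * X ^ k

/-- Integer version of the independence polynomial. -/
noncomputable def indepPolyZ {W : Type*} [Fintype W] (H : SimpleGraph W) : Polynomial ℤ :=
  ∑ k ∈ Finset.range (Fintype.card W + 1), C ((-1 : ℤ) ^ k * (numIndepSets H k : ℤ)) * X ^ k

/-- Integer version of `h*`. -/
noncomputable def hStarPolyZ {V : Type*} [Fintype V] [DecidableEq V] (G : SimpleGraph V) :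
    Polynomial ℤ :=
  ∑ k ∈ Finset.range (Fintype.card V + 1),
    C ((-1 : ℤ) ^ k * (numCliqueCovers G (Fintype.card V - k) : ℤ)) * X ^ k

/-- A finset of edges forming a matching in `G`. -/
def SimpleGraph.IsMatchingFinset {V : Type*} (G : SimpleGraph V) (s : Finset (Sym2 V)) : Prop :=
  (↑s : Set (Sym2 V)) ⊆ G.edgeSet ∧
    ∀ e ∈ s, ∀ f ∈ s, e ≠ f → ∀ v, ¬(v ∈ e ∧ v ∈ f)

/-- `m_k(G)`: number of matchings of size `k`. -/
noncomputable def numMatchings {V : Type*} (G : SimpleGraph V) (k : ℕ) : ℕ :=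
  {s : Finset (Sym2 V) | G.IsMatchingFinset s ∧ s.card = k}.ncard

/-- The matching polynomial `M(G,x) = Σ_k (-1)^k m_k(G) x^{n-k}` (over `ℝ`). -/
noncomputable def matchPoly {V : Type*} [Fintype V] (G : SimpleGraph V) : Polynomial ℝ :=
  ∑ k ∈ Finset.range (Fintype.card V + 1),
    C ((-1 : ℝ) ^ k * (numMatchings G k : ℝ)) * X ^ (Fintype.card V - k)

/-- The line graph `L(G)`: vertices are the edges of `G`, adjacent iff distinct and
sharing an endpoint. -/
def lineGraph' {V : Type*} (G : SimpleGraph V) : SimpleGraph G.edgeSet where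
  Adj e f := e ≠ f ∧ ∃ v, v ∈ (e : Sym2 V) ∧ v ∈ (f : Sym2 V)
  symm := ⟨fun e f h => ⟨h.1.symm, h.2.choose, h.2.choose_spec.2, h.2.choose_spec.1⟩⟩
  loopless := ⟨fun e h => h.1 rfl⟩

/-- `H ∪ K₁`: the disjoint union of `H` with one isolated vertex. -/
def addIsolated {V : Type*} (H : SimpleGraph V) : SimpleGraph (V ⊕ Unit) where
  Adj x y := ∃ a b, x = Sum.inl a ∧ y = Sum.inl b ∧ H.Adj a b
  symm := ⟨by rintro x y ⟨a, b, rfl, rfl, h⟩; exact ⟨b, a, rfl, rfl, h.symm⟩⟩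
  loopless := ⟨by rintro x ⟨a, b, rfl, h, hadj⟩; cases Sum.inl_injective h; exact hadj.ne rfl⟩

/-- `b` is the smallest zero of `p` in `(0,1]`. -/
def IsBetaZero (p : Polynomial ℝ) (b : ℝ) : Prop :=
  b ∈ Set.Ioc (0 : ℝ) 1 ∧ p.eval b = 0 ∧ ∀ y ∈ Set.Ioc (0 : ℝ) 1, p.eval y = 0 → b ≤ y

/-- `g` is the largest real zero of `p`. -/
def IsGammaZero (p : Polynomial ℝ) (g : ℝ) : Prop :=
  p.eval g = 0 ∧ ∀ y : ℝ, p.eval y = 0 → y ≤ g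


namespace Aux
open Finset
set_option linter.unusedSectionVars false
set_option linter.unusedVariables false
set_option maxHeartbeats 1000000

set_option linter.unusedSectionVars false
variable {W : Type*} [DecidableEq W]

open Classical in
noncomputable def JJ (H : SimpleGraph W) (A : Finset W) (y : ℝ) : ℝ :=
  ∑ s ∈ A.powerset.filter (fun s => H.IsIndepFinset s), (-y) ^ s.card

open Classical in
noncomputable def delN (H : SimpleGraph W) (A : Finset W) (v : W) : Finset W :=
  A.filter (fun a => ¬(a = v ∨ H.Adj v a))

open Classical in
noncomputable def delN2 (H : SimpleGraph W) (A : Finset W) (u v : W) : Finset W :=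
  A.filter (fun a => ¬(a = u ∨ a = v ∨ H.Adj u a ∨ H.Adj v a))

lemma mem_delN {H : SimpleGraph W} {A : Finset W} {v a : W} :
    a ∈ delN H A v ↔ a ∈ A ∧ a ≠ v ∧ ¬ H.Adj v a := by
  classical
  rw [delN]; simp only [mem_filter]; tauto

lemma mem_delN2 {H : SimpleGraph W} {A : Finset W} {u v a : W} :
    a ∈ delN2 H A u v ↔ a ∈ A ∧ a ≠ u ∧ a ≠ v ∧ ¬ H.Adj u a ∧ ¬ H.Adj v a := by
  classical
  rw [delN2]; simp only [mem_filter]; tauto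

lemma delN_subset_erase (H : SimpleGraph W) (A : Finset W) (v : W) :
    delN H A v ⊆ A.erase v := fun a ha => by
  rw [mem_delN] at ha; exact mem_erase.2 ⟨ha.2.1, ha.1⟩

lemma delN_subset (H : SimpleGraph W) (A : Finset W) (v : W) : delN H A v ⊆ A :=
  (delN_subset_erase H A v).trans (erase_subset v A)

lemma delN2_subset (H : SimpleGraph W) (A : Finset W) (u v : W) : delN2 H A u v ⊆ A :=
  fun a ha => (mem_delN2.1 ha).1

lemma JJ_zero (H : SimpleGraph W) (A : Finset W) : JJ H A 0 = 1 := by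
  classical
  rw [JJ, Finset.sum_eq_single (∅ : Finset W)]
  · simp
  · intro s hs hne
    rw [neg_zero, zero_pow]
    simpa [Finset.card_eq_zero] using hne
  · intro h
    exact absurd (Finset.mem_filter.2 ⟨Finset.empty_mem_powerset A, fun v hv => by simp at hv⟩) h

lemma JJ_empty (H : SimpleGraph W) (y : ℝ) : JJ H (∅ : Finset W) y = 1 := by
  classical
  rw [JJ, Finset.powerset_empty, Finset.filter_singleton]
  simp [SimpleGraph.IsIndepFinset]

lemma JJ_continuous (H : SimpleGraph W) (A : Finset W) : Continuous (JJ H A) := by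
  classical
  unfold JJ
  exact continuous_finset_sum _ (fun s _ => (continuous_id.neg).pow _)

def rtSet (H : SimpleGraph W) (A : Finset W) : Set ℝ :=
  insert 1 {y : ℝ | y ∈ Set.Icc (0:ℝ) 1 ∧ JJ H A y = 0}

noncomputable def bb (H : SimpleGraph W) (A : Finset W) : ℝ := sInf (rtSet H A)

lemma rtSet_closed (H : SimpleGraph W) (A : Finset W) : IsClosed (rtSet H A) := by
  rw [rtSet, Set.insert_eq]
  refine IsClosed.union isClosed_singleton ?_
  have : {y : ℝ | y ∈ Set.Icc (0:ℝ) 1 ∧ JJ H A y = 0}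
      = Set.Icc (0:ℝ) 1 ∩ (JJ H A) ⁻¹' {0} := by
    ext y
    simp only [Set.mem_setOf_eq, Set.mem_inter_iff, Set.mem_preimage, Set.mem_singleton_iff]
  rw [this]
  exact IsClosed.inter isClosed_Icc ((isClosed_singleton).preimage (JJ_continuous H A))

lemma rtSet_bddBelow (H : SimpleGraph W) (A : Finset W) : BddBelow (rtSet H A) := by
  refine ⟨0, fun y hy => ?_⟩
  rcases hy with rfl | ⟨hy, -⟩
  · norm_num
  · exact hy.1

lemma bb_mem (H : SimpleGraph W) (A : Finset W) : bb H A ∈ rtSet H A :=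
  (rtSet_closed H A).csInf_mem ⟨1, Set.mem_insert 1 _⟩ (rtSet_bddBelow H A)

lemma bb_le_one (H : SimpleGraph W) (A : Finset W) : bb H A ≤ 1 :=
  csInf_le (rtSet_bddBelow H A) (Set.mem_insert 1 _)

lemma bb_pos (H : SimpleGraph W) (A : Finset W) : 0 < bb H A := by
  rcases bb_mem H A with h | ⟨⟨h0, -⟩, hroot⟩
  · rw [h]; norm_num
  · rcases lt_or_eq_of_le h0 with h | h
    · exact h
    · exfalso
      rw [← h, JJ_zero] at hroot
      norm_num at hroot

lemma bb_le_of_root {H : SimpleGraph W} {A : Finset W} {y : ℝ}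
    (h0 : 0 ≤ y) (h1 : y ≤ 1) (hy : JJ H A y = 0) : bb H A ≤ y :=
  csInf_le (rtSet_bddBelow H A) (Or.inr ⟨⟨h0, h1⟩, hy⟩)

lemma exists_root_of_nonpos {H : SimpleGraph W} {A : Finset W} {y : ℝ}
    (h0 : 0 ≤ y) (hy : JJ H A y ≤ 0) : ∃ z, 0 ≤ z ∧ z ≤ y ∧ JJ H A z = 0 := by
  have : (0:ℝ) ∈ Set.Icc (JJ H A y) (JJ H A 0) := by
    rw [JJ_zero]; exact ⟨hy, by norm_num⟩
  obtain ⟨z, hz, hz0⟩ := intermediate_value_Icc' h0 (JJ_continuous H A).continuousOn this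
  exact ⟨z, hz.1, hz.2, hz0⟩

lemma bb_le_of_nonpos {H : SimpleGraph W} {A : Finset W} {y : ℝ}
    (h0 : 0 ≤ y) (h1 : y ≤ 1) (hy : JJ H A y ≤ 0) : bb H A ≤ y := by
  obtain ⟨z, hz0, hzy, hzr⟩ := exists_root_of_nonpos h0 hy
  exact le_trans (bb_le_of_root hz0 (hzy.trans h1) hzr) hzy

lemma JJ_pos_of_lt_bb {H : SimpleGraph W} {A : Finset W} {y : ℝ}
    (h0 : 0 ≤ y) (hy : y < bb H A) : 0 < JJ H A y := by
  by_contra h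
  push_neg at h
  exact absurd (bb_le_of_nonpos h0 (le_trans hy.le (bb_le_one H A)) h) (not_le.2 hy)

lemma JJ_nonneg_at_bb (H : SimpleGraph W) (A : Finset W) : 0 ≤ JJ H A (bb H A) := by
  rcases bb_mem H A with h | ⟨-, hroot⟩
  · by_contra hneg
    push_neg at hneg
    rw [h] at hneg
    obtain ⟨z, hz0, hz1, hzr⟩ := exists_root_of_nonpos (by norm_num : (0:ℝ) ≤ 1) hneg.le
    have hb := bb_le_of_root hz0 hz1 hzr
    rw [h] at hb
    have : z = 1 := le_antisymm hz1 hb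
    rw [this] at hzr
    rw [hzr] at hneg
    exact lt_irrefl 0 hneg
  · rw [hroot]

/-- if JJ has an actual root in [0,1] then bb is a root -/
lemma bb_root_of_exists {H : SimpleGraph W} {A : Finset W}
    (h : ∃ z, 0 ≤ z ∧ z ≤ 1 ∧ JJ H A z = 0) : JJ H A (bb H A) = 0 := by
  obtain ⟨z, hz0, hz1, hzr⟩ := h
  rcases bb_mem H A with h1 | ⟨-, hroot⟩
  · have hb := bb_le_of_root hz0 hz1 hzr
    rw [h1] at hb ⊢
    rw [le_antisymm hz1 hb] at hzr
    exact hzr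
  · exact hroot

/-- nonneg value of JJ at points ≤ bb of a (smaller) set -/
lemma JJ_nonneg_of_le_bb {H : SimpleGraph W} {A : Finset W} {y : ℝ}
    (h0 : 0 ≤ y) (hy : y ≤ bb H A) : 0 ≤ JJ H A y := by
  rcases lt_or_eq_of_le hy with h | h
  · exact (JJ_pos_of_lt_bb h0 h).le
  · rw [h]; exact JJ_nonneg_at_bb H A

/-- vertex recurrence -/
lemma JJ_vertex (H : SimpleGraph W) (A : Finset W) (v : W) (hv : v ∈ A) (y : ℝ) :
    JJ H A y = JJ H (A.erase v) y - y * JJ H (delN H A v) y := by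
  classical
  rw [JJ, ← Finset.sum_filter_add_sum_filter_not (A.powerset.filter (fun s => H.IsIndepFinset s))
    (fun s => v ∈ s)]
  have h1 : ((A.powerset.filter (fun s => H.IsIndepFinset s)).filter (fun s => ¬ v ∈ s))
      = (A.erase v).powerset.filter (fun s => H.IsIndepFinset s) := by
    ext s
    simp only [mem_filter, mem_powerset]
    constructor
    · rintro ⟨⟨hsA, hind⟩, hvs⟩
      exact ⟨fun a ha => mem_erase.2 ⟨fun h => hvs (h ▸ ha), hsA ha⟩, hind⟩
    · rintro ⟨hsA, hind⟩
      exact ⟨⟨fun a ha => (mem_erase.1 (hsA ha)).2, hind⟩,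
        fun hv' => (mem_erase.1 (hsA hv')).1 rfl⟩
  have h2 : ∑ s ∈ ((A.powerset.filter (fun s => H.IsIndepFinset s)).filter (fun s => v ∈ s)),
      (-y) ^ s.card = (-y) * JJ H (delN H A v) y := by
    rw [JJ, Finset.mul_sum]
    refine Finset.sum_bij' (fun s _ => s.erase v) (fun t _ => insert v t) ?_ ?_ ?_ ?_ ?_
    · intro s hs
      obtain ⟨⟨hsA, hind⟩, hvs⟩ := by
        simpa only [mem_filter, mem_powerset] using hs
      rw [mem_filter, mem_powerset]
      constructor
      · intro a ha
        rw [mem_erase] at ha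
        rw [mem_delN]
        exact ⟨hsA ha.2, ha.1, hind v hvs a ha.2⟩
      · intro a ha b hb
        exact hind a (mem_of_mem_erase ha) b (mem_of_mem_erase hb)
    · intro t ht
      obtain ⟨htA, hind⟩ := by
        simpa only [mem_filter, mem_powerset] using ht
      have hvt : v ∉ t := fun hvt => ((mem_delN.1 (htA hvt)).2.1) rfl
      simp only [mem_filter, mem_powerset]
      refine ⟨⟨?_, ?_⟩, mem_insert_self v t⟩
      · intro a ha
        rcases mem_insert.1 ha with h | h
        · exact h ▸ hv
        · exact (mem_delN.1 (htA h)).1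
      · intro a ha b hb
        rcases mem_insert.1 ha with rfl | ha' <;> rcases mem_insert.1 hb with rfl | hb'
        · exact H.loopless.irrefl _
        · exact (mem_delN.1 (htA hb')).2.2
        · exact fun h => (mem_delN.1 (htA ha')).2.2 (H.adj_symm h)
        · exact hind a ha' b hb'
    · intro s hs
      obtain ⟨-, hvs⟩ := by simpa only [mem_filter] using hs
      exact insert_erase hvs
    · intro t ht
      obtain ⟨htA, -⟩ := by simpa only [mem_filter, mem_powerset] using ht
      exact erase_insert (fun hvt => ((mem_delN.1 (htA hvt)).2.1) rfl)
    · intro s hs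
      obtain ⟨-, hvs⟩ := by simpa only [mem_filter] using hs
      rw [Finset.card_erase_of_mem hvs, ← pow_succ']
      congr 1
      have hpos : 0 < s.card := Finset.card_pos.2 ⟨v, hvs⟩
      omega
  rw [h1, h2, ← JJ]
  ring

/-- edge recurrence -/
lemma JJ_edge (H : SimpleGraph W) (A : Finset W) (u v : W) (huv : H.Adj u v)
    (hu : u ∈ A) (hv : v ∈ A) (y : ℝ) :
    JJ (H.deleteEdges {s(u,v)}) A y = JJ H A y + y^2 * JJ H (delN2 H A u v) y := by
  classical
  have hne : u ≠ v := H.ne_of_adj huv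
  set H' := H.deleteEdges {s(u,v)} with hH'
  have hadj' : ∀ a b : W, H'.Adj a b ↔ H.Adj a b ∧ ¬ (s(a,b) = s(u,v)) := by
    intro a b
    rw [hH', SimpleGraph.deleteEdges_adj]
    simp
  rw [JJ, ← Finset.sum_filter_add_sum_filter_not
    (A.powerset.filter (fun s => H'.IsIndepFinset s)) (fun s => u ∈ s ∧ v ∈ s)]
  have h1 : ((A.powerset.filter (fun s => H'.IsIndepFinset s)).filter
      (fun s => ¬(u ∈ s ∧ v ∈ s))) = A.powerset.filter (fun s => H.IsIndepFinset s) := by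
    ext s
    simp only [mem_filter, mem_powerset]
    constructor
    · rintro ⟨⟨hsA, hind⟩, hnb⟩
      refine ⟨hsA, fun a ha b hb hab => ?_⟩
      have : ¬ H'.Adj a b := hind a ha b hb
      rw [hadj'] at this
      have heq : s(a,b) = s(u,v) := by tauto
      rw [Sym2.eq_iff] at heq
      rcases heq with ⟨rfl, rfl⟩ | ⟨rfl, rfl⟩
      · exact hnb ⟨ha, hb⟩
      · exact hnb ⟨hb, ha⟩
    · rintro ⟨hsA, hind⟩
      refine ⟨⟨hsA, fun a ha b hb hab => hind a ha b hb ((hadj' a b).1 hab).1⟩, fun hb => ?_⟩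
      exact hind u hb.1 v hb.2 huv
  have h2 : ∑ s ∈ ((A.powerset.filter (fun s => H'.IsIndepFinset s)).filter
      (fun s => u ∈ s ∧ v ∈ s)), (-y) ^ s.card
      = y^2 * JJ H (delN2 H A u v) y := by
    rw [JJ, Finset.mul_sum]
    refine Finset.sum_bij' (fun s _ => (s.erase u).erase v) (fun t _ => insert u (insert v t))
      ?_ ?_ ?_ ?_ ?_
    · intro s hs
      obtain ⟨⟨hsA, hind⟩, hus, hvs⟩ := by simpa only [mem_filter, mem_powerset] using hs
      rw [mem_filter, mem_powerset]
      constructor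
      · intro a ha
        have hav : a ≠ v := (mem_erase.1 ha).1
        have hau : a ≠ u := (mem_erase.1 (mem_of_mem_erase ha)).1
        have haA : a ∈ s := mem_of_mem_erase (mem_of_mem_erase ha)
        rw [mem_delN2]
        refine ⟨hsA haA, hau, hav, fun h => ?_, fun h => ?_⟩
        · have := hind u hus a haA
          rw [hadj'] at this
          have : s(u,a) = s(u,v) := by tauto
          rw [Sym2.eq_iff] at this
          tauto
        · have := hind v hvs a haA
          rw [hadj'] at this
          have : s(v,a) = s(u,v) := by tauto
          rw [Sym2.eq_iff] at this
          tauto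
      · intro a ha b hb hab
        have haa : a ∈ s := mem_of_mem_erase (mem_of_mem_erase ha)
        have hbb : b ∈ s := mem_of_mem_erase (mem_of_mem_erase hb)
        have := hind a haa b hbb
        rw [hadj'] at this
        have heq : s(a,b) = s(u,v) := by tauto
        rw [Sym2.eq_iff] at heq
        have hau : a ≠ u := (mem_erase.1 (mem_of_mem_erase ha)).1
        have hbv : b ≠ v := (mem_erase.1 hb).1
        have hbu : b ≠ u := (mem_erase.1 (mem_of_mem_erase hb)).1
        tauto
    · intro t ht
      obtain ⟨htA, hind⟩ := by simpa only [mem_filter, mem_powerset] using ht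
      have hmem : ∀ a ∈ t, a ∈ A ∧ a ≠ u ∧ a ≠ v ∧ ¬ H.Adj u a ∧ ¬ H.Adj v a :=
        fun a ha => mem_delN2.1 (htA ha)
      simp only [mem_filter, mem_powerset]
      refine ⟨⟨?_, ?_⟩, mem_insert_self u _, mem_insert.2 (Or.inr (mem_insert_self v _))⟩
      · intro a ha
        rcases mem_insert.1 ha with rfl | ha'
        · exact hu
        rcases mem_insert.1 ha' with rfl | ha''
        · exact hv
        · exact (hmem a ha'').1
      · intro a ha b hb
        have key : ∀ c, c = u ∨ c = v ∨ c ∈ t → ∀ d, d = u ∨ d = v ∨ d ∈ t → ¬ H'.Adj c d := by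
          rintro c (rfl | rfl | hc) d (rfl | rfl | hd) hcd
          · exact H'.loopless.irrefl _ hcd
          · rw [hadj'] at hcd; exact hcd.2 rfl
          · exact ((hmem d hd).2.2.2.1) (((hadj' _ _).1 hcd).1)
          · rw [hadj'] at hcd; exact hcd.2 (Sym2.eq_swap)
          · exact H'.loopless.irrefl _ hcd
          · exact ((hmem d hd).2.2.2.2) (((hadj' _ _).1 hcd).1)
          · exact ((hmem c hc).2.2.2.1) (H.adj_symm (((hadj' _ _).1 hcd).1))
          · exact ((hmem c hc).2.2.2.2) (H.adj_symm (((hadj' _ _).1 hcd).1))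
          · exact hind c hc d hd (((hadj' _ _).1 hcd).1)
        intro a' 
        exact (by
          have hamem : a = u ∨ a = v ∨ a ∈ t := by
            rcases mem_insert.1 ha with h | h
            · exact Or.inl h
            rcases mem_insert.1 h with h' | h'
            · exact Or.inr (Or.inl h')
            · exact Or.inr (Or.inr h')
          have hbmem : b = u ∨ b = v ∨ b ∈ t := by
            rcases mem_insert.1 hb with h | h
            · exact Or.inl h
            rcases mem_insert.1 h with h' | h'
            · exact Or.inr (Or.inl h')
            · exact Or.inr (Or.inr h')
          exact key a hamem b hbmem a')
    · intro s hs
      obtain ⟨⟨hsA, hind⟩, hus, hvs⟩ := by simpa only [mem_filter, mem_powerset] using hs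
      show insert u (insert v ((s.erase u).erase v)) = s
      ext a
      simp only [mem_insert, mem_erase]
      constructor
      · rintro (rfl | rfl | ⟨-, -, h⟩)
        · exact hus
        · exact hvs
        · exact h
      · intro h
        by_cases hau : a = u
        · exact Or.inl hau
        by_cases hav : a = v
        · exact Or.inr (Or.inl hav)
        · exact Or.inr (Or.inr ⟨hav, hau, h⟩)
    · intro t ht
      obtain ⟨htA, -⟩ := by simpa only [mem_filter, mem_powerset] using ht
      have hut : u ∉ insert v t := by
        rw [mem_insert]
        rintro (h | h)
        · exact hne h
        · exact (mem_delN2.1 (htA h)).2.1 rfl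
      show ((insert u (insert v t)).erase u).erase v = t
      rw [Finset.erase_insert hut]
      exact Finset.erase_insert (fun h => (mem_delN2.1 (htA h)).2.2.1 rfl)
    · intro s hs
      obtain ⟨⟨hsA, hind⟩, hus, hvs⟩ := by simpa only [mem_filter, mem_powerset] using hs
      have h2le : 2 ≤ s.card := by
        have : ({u, v} : Finset W) ⊆ s := by
          intro a ha
          rcases mem_insert.1 ha with rfl | ha'
          · exact hus
          · exact (mem_singleton.1 ha') ▸ hvs
        calc 2 = ({u,v} : Finset W).card := (Finset.card_pair hne).symm
        _ ≤ s.card := Finset.card_le_card this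
      rw [Finset.card_erase_of_mem (mem_erase.2 ⟨hne.symm, hvs⟩),
        Finset.card_erase_of_mem hus]
      have : (-y)^2 * (-y) ^ (s.card - 1 - 1) = (-y) ^ (s.card - 1 - 1 + 2) := by
        rw [pow_add]; ring
      have hyy : (y:ℝ)^2 = (-y)^2 := by ring
      rw [hyy, this]
      congr 1
      omega
  rw [h1, h2, ← JJ]
  ring

lemma JJ_edge_irrel (H : SimpleGraph W) (A : Finset W) (u v : W)
    (h : u ∉ A ∨ v ∉ A) (y : ℝ) :
    JJ (H.deleteEdges {s(u,v)}) A y = JJ H A y := by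
  classical
  rw [JJ, JJ]
  congr 1
  ext s
  simp only [mem_filter, mem_powerset, and_congr_right_iff]
  intro hsA
  constructor
  · intro hind a ha b hb hab
    refine hind a ha b hb ?_
    rw [SimpleGraph.deleteEdges_adj]
    refine ⟨hab, ?_⟩
    simp only [Set.mem_singleton_iff, Sym2.eq_iff]
    rintro (⟨rfl, rfl⟩ | ⟨rfl, rfl⟩)
    · rcases h with h | h
      · exact h (hsA ha)
      · exact h (hsA hb)
    · rcases h with h | h
      · exact h (hsA hb)
      · exact h (hsA ha)
  · intro hind a ha b hb hab
    exact hind a ha b hb (SimpleGraph.deleteEdges_adj.1 hab).1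

/-- monotonicity of bb under subsets -/
lemma bb_mono_aux (H : SimpleGraph W) :
    ∀ n (A B : Finset W), A.card ≤ n → B ⊆ A → bb H A ≤ bb H B := by
  intro n
  induction n with
  | zero =>
    intro A B hA hBA
    have hAe : A = ∅ := Finset.card_eq_zero.1 (Nat.le_zero.1 hA)
    have hBe : B = ∅ := Finset.subset_empty.1 (hAe ▸ hBA)
    rw [hAe, hBe]
  | succ n ih =>
    intro A B hA hBA
    by_cases hAB : B = A
    · rw [hAB]
    · obtain ⟨v, hvA, hvB⟩ := Finset.exists_of_ssubset (Finset.ssubset_iff_subset_ne.2 ⟨hBA, hAB⟩)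
      have hcard : (A.erase v).card ≤ n := by
        rw [Finset.card_erase_of_mem hvA]
        have := Finset.card_pos.2 ⟨v, hvA⟩
        omega
      have step : bb H A ≤ bb H (A.erase v) := by
        by_cases hroot : JJ H (A.erase v) (bb H (A.erase v)) = 0
        · set b' := bb H (A.erase v) with hb'
          have hnn : 0 ≤ JJ H (delN H A v) b' := by
            have hb : b' ≤ bb H (delN H A v) :=
              ih (A.erase v) (delN H A v) hcard (delN_subset_erase H A v)
            exact JJ_nonneg_of_le_bb (bb_pos H (A.erase v)).le hb
          have hJA : JJ H A b' ≤ 0 := by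
            rw [JJ_vertex H A v hvA, hroot, zero_sub, neg_nonpos]
            exact mul_nonneg (bb_pos H (A.erase v)).le hnn
          exact bb_le_of_nonpos (bb_pos H (A.erase v)).le (bb_le_one H (A.erase v)) hJA
        · rcases bb_mem H (A.erase v) with h1 | ⟨-, hr⟩
          · rw [h1]; exact bb_le_one H A
          · exact absurd hr hroot
      refine step.trans (ih (A.erase v) B hcard ?_)
      exact fun b hb => mem_erase.2 ⟨fun h => hvB (h ▸ hb), hBA hb⟩

lemma bb_mono {H : SimpleGraph W} {A B : Finset W} (hBA : B ⊆ A) : bb H A ≤ bb H B :=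
  bb_mono_aux H A.card A B le_rfl hBA

/-- existence of a root when A is nonempty -/
lemma bb_root_exists (H : SimpleGraph W) :
    ∀ n (A : Finset W), A.card ≤ n → A.Nonempty → JJ H A (bb H A) = 0 := by
  intro n
  induction n with
  | zero =>
    intro A hA hne
    rw [Finset.card_eq_zero.1 (Nat.le_zero.1 hA)] at hne
    exact absurd hne (by simp)
  | succ n ih =>
    intro A hA hne
    obtain ⟨v, hvA⟩ := hne
    by_cases hh : A.erase v = ∅
    · have hdel : delN H A v = ∅ :=
        Finset.subset_empty.1 (hh ▸ delN_subset_erase H A v)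
      have hJA : ∀ y : ℝ, JJ H A y = 1 - y := by
        intro y
        rw [JJ_vertex H A v hvA, hh, hdel]
        simp only [JJ_empty]
        ring
      apply bb_root_of_exists
      exact ⟨1, by norm_num, le_rfl, by rw [hJA]; ring⟩
    · have hcard : (A.erase v).card ≤ n := by
        rw [Finset.card_erase_of_mem hvA]
        have := Finset.card_pos.2 ⟨v, hvA⟩
        omega
      have hroot : JJ H (A.erase v) (bb H (A.erase v)) = 0 :=
        ih (A.erase v) hcard (Finset.nonempty_of_ne_empty hh)
      set b' := bb H (A.erase v) with hb'
      have hnn : 0 ≤ JJ H (delN H A v) b' :=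
        JJ_nonneg_of_le_bb (bb_pos H (A.erase v)).le
          (bb_mono (delN_subset_erase H A v))
      have hJA : JJ H A b' ≤ 0 := by
        rw [JJ_vertex H A v hvA, hroot, zero_sub, neg_nonpos]
        exact mul_nonneg (bb_pos H (A.erase v)).le hnn
      apply bb_root_of_exists
      obtain ⟨z, hz0, hzb, hzr⟩ := exists_root_of_nonpos (bb_pos H (A.erase v)).le hJA
      exact ⟨z, hz0, hzb.trans (bb_le_one H (A.erase v)), hzr⟩

/-- deleting an edge of H increases bb -/
lemma bb_mono_edge {H : SimpleGraph W} {u v : W} (huv : H.Adj u v) (A : Finset W) :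
    bb H A ≤ bb (H.deleteEdges {s(u,v)}) A := by
  refine le_csInf ⟨1, Set.mem_insert 1 _⟩ ?_
  rintro z (rfl | ⟨⟨hz0, hz1⟩, hzr⟩)
  · exact bb_le_one H A
  · by_contra hlt
    push_neg at hlt
    by_cases hmem : u ∈ A ∧ v ∈ A
    · rw [JJ_edge H A u v huv hmem.1 hmem.2] at hzr
      have hpos : 0 < JJ H A z := JJ_pos_of_lt_bb hz0 hlt
      have hneg : JJ H (delN2 H A u v) z < 0 := by
        nlinarith [sq_nonneg z]
      have : bb H (delN2 H A u v) ≤ z := by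
        by_contra hgt
        push_neg at hgt
        exact absurd (JJ_pos_of_lt_bb hz0 hgt) (not_lt.2 hneg.le)
      have h2 := bb_mono (H := H) (delN2_subset H A u v)
      linarith
    · rw [JJ_edge_irrel H A u v (by tauto) z] at hzr
      exact absurd hzr (ne_of_gt (JJ_pos_of_lt_bb hz0 hlt))

section FT
variable [Fintype W]

open Classical in
noncomputable def PD (H : SimpleGraph W) : Finset (W × W) :=
  Finset.univ.filter (fun p => H.Adj p.1 p.2)

lemma mem_PD {H : SimpleGraph W} {p : W × W} : p ∈ PD H ↔ H.Adj p.1 p.2 := by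
  classical
  rw [PD]; simp

lemma eq_of_PD_subset {H H' : SimpleGraph W} (hle : H ≤ H') (hsub : PD H' ⊆ PD H) :
    H = H' := by
  refine le_antisymm hle ?_
  intro a b hab
  have h1 : (a, b) ∈ PD H' := mem_PD.2 (by exact hab)
  exact mem_PD.1 (hsub h1)

lemma JJ_le_of_le_aux :
    ∀ N (H H' : SimpleGraph W), H ≤ H' → ((PD H') \ (PD H)).card ≤ N →
      ∀ (A : Finset W) (y : ℝ), 0 ≤ y → y < bb H' A → JJ H' A y ≤ JJ H A y := by
  intro N
  induction N with
  | zero =>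
    intro H H' hle hcard A y h0 hy
    have hsub : PD H' ⊆ PD H := by
      rw [← Finset.sdiff_eq_empty_iff_subset]
      exact Finset.card_eq_zero.1 (Nat.le_zero.1 hcard)
    rw [eq_of_PD_subset hle hsub]
  | succ N ih =>
    intro H H' hle hcard A y h0 hy
    by_cases hsub : PD H' ⊆ PD H
    · rw [eq_of_PD_subset hle hsub]
    · rw [Finset.not_subset] at hsub
      obtain ⟨⟨u, v⟩, hmem, hnot⟩ := hsub
      have huv' : H'.Adj u v := mem_PD.1 hmem
      have hnuv : ¬ H.Adj u v := fun h => hnot (mem_PD.2 h)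
      set H'' := H'.deleteEdges {s(u,v)} with hH''
      have hle2 : H ≤ H'' := by
        intro a b hab
        rw [hH'', SimpleGraph.deleteEdges_adj]
        refine ⟨hle hab, ?_⟩
        simp only [Set.mem_singleton_iff, Sym2.eq_iff]
        rintro (⟨rfl, rfl⟩ | ⟨rfl, rfl⟩)
        · exact hnuv hab
        · exact hnuv (H.adj_symm hab)
      have hcard2 : ((PD H'') \ (PD H)).card ≤ N := by
        have hss : (PD H'') \ (PD H) ⊂ (PD H') \ (PD H) := by
          rw [Finset.ssubset_iff_of_subset]
          · exact ⟨(u,v), Finset.mem_sdiff.2 ⟨hmem, hnot⟩, fun hc => by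
              have := mem_PD.1 (Finset.mem_sdiff.1 hc).1
              rw [hH'', SimpleGraph.deleteEdges_adj] at this
              exact this.2 rfl⟩
          · intro p hp
            rw [Finset.mem_sdiff] at hp ⊢
            refine ⟨mem_PD.2 ?_, hp.2⟩
            have := mem_PD.1 hp.1
            rw [hH'', SimpleGraph.deleteEdges_adj] at this
            exact this.1
        have := Finset.card_lt_card hss
        omega
      have step : JJ H' A y ≤ JJ H'' A y := by
        by_cases hmemA : u ∈ A ∧ v ∈ A
        · have heq := JJ_edge H' A u v huv' hmemA.1 hmemA.2 y
          have hnn : 0 ≤ JJ H' (delN2 H' A u v) y :=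
            JJ_nonneg_of_le_bb h0 (hy.le.trans (bb_mono (delN2_subset H' A u v)))
          have h2 : 0 ≤ y^2 * JJ H' (delN2 H' A u v) y := mul_nonneg (sq_nonneg y) hnn
          rw [hH'', heq]
          linarith
        · rw [hH'', JJ_edge_irrel H' A u v (by tauto) y]
      refine le_trans step (ih H H'' hle2 hcard2 A y h0 ?_)
      exact lt_of_lt_of_le hy (bb_mono_edge huv' A)

lemma JJ_le_of_le {H H' : SimpleGraph W} (hle : H ≤ H') {A : Finset W} {y : ℝ}
    (h0 : 0 ≤ y) (hy : y < bb H' A) : JJ H' A y ≤ JJ H A y :=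
  JJ_le_of_le_aux ((PD H') \ (PD H)).card H H' hle le_rfl A y h0 hy

lemma JJ_pos_of_le {H H' : SimpleGraph W} (hle : H ≤ H') {A : Finset W} {y : ℝ}
    (h0 : 0 ≤ y) (hy : y < bb H' A) : 0 < JJ H A y :=
  lt_of_lt_of_le (JJ_pos_of_lt_bb h0 hy) (JJ_le_of_le hle h0 hy)

end FT


set_option linter.unusedSectionVars false
set_option maxHeartbeats 1000000

variable {V : Type*} [Fintype V] [LinearOrder V] (G : SimpleGraph V)

/-- vertex type of the line graph / hat graph: ordered edges -/
def EV (G : SimpleGraph V) : Type _ := {p : V × V // p.1 < p.2 ∧ G.Adj p.1 p.2}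

instance : Finite (EV G) := by unfold EV; exact Subtype.finite

noncomputable instance : Fintype (EV G) := Fintype.ofFinite _

instance : DecidableEq (EV G) := fun e f =>
  decidable_of_iff (e.val = f.val) Subtype.ext_iff.symm

/-- the line graph on EV -/
def lineG : SimpleGraph (EV G) where
  Adj e f := e ≠ f ∧ (e.val.1 = f.val.1 ∨ e.val.1 = f.val.2 ∨ e.val.2 = f.val.1 ∨
    e.val.2 = f.val.2)
  symm := ⟨by
    rintro e f ⟨hne, h⟩
    exact ⟨hne.symm, by tauto⟩⟩
  loopless := ⟨fun e h => h.1 rfl⟩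

/-- the one-sided hat relation -/
def hrel (e f : EV G) : Prop :=
  e.val.2 ≤ f.val.2 ∧ (e.val.1 = f.val.1 ∨ e.val.2 = f.val.1 ∨
    (e.val.2 = f.val.2 ∧ ¬ G.Adj e.val.1 f.val.1))

/-- the hat graph on EV -/
def hatG : SimpleGraph (EV G) where
  Adj e f := e ≠ f ∧ (hrel G e f ∨ hrel G f e)
  symm := ⟨by
    rintro e f ⟨hne, h⟩
    exact ⟨hne.symm, h.symm⟩⟩
  loopless := ⟨fun e h => h.1 rfl⟩

lemma hat_le_line : hatG G ≤ lineG G := by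
  rintro e f ⟨hne, h⟩
  refine ⟨hne, ?_⟩
  rcases h with ⟨-, h | h | ⟨h, -⟩⟩ | ⟨-, h | h | ⟨h, -⟩⟩
  · exact Or.inl h
  · exact Or.inr (Or.inr (Or.inl h))
  · exact Or.inr (Or.inr (Or.inr h))
  · exact Or.inl h.symm
  · exact Or.inr (Or.inl h.symm)
  · exact Or.inr (Or.inr (Or.inr h.symm))

variable {G}

section IndepProps

variable {S : Finset (EV G)} (hS : (hatG G).IsIndepFinset S)
include hS

lemma prop1 {e f : EV G} (he : e ∈ S) (hf : f ∈ S) (h : e.val.1 = f.val.1) : e = f := by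
  by_contra hne
  rcases le_total e.val.2 f.val.2 with hle | hle
  · exact hS e he f hf ⟨hne, Or.inl ⟨hle, Or.inl h⟩⟩
  · exact hS f hf e he ⟨Ne.symm hne, Or.inl ⟨hle, Or.inl h.symm⟩⟩

lemma prop2 {e f : EV G} (he : e ∈ S) (hf : f ∈ S) : e.val.2 ≠ f.val.1 := by
  intro h
  by_cases hef : e = f
  · rw [hef] at h
    exact (ne_of_gt f.prop.1) h
  · have hle : e.val.2 ≤ f.val.2 := h ▸ (f.prop.1.le)
    exact hS e he f hf ⟨hef, Or.inl ⟨hle, Or.inr (Or.inl h)⟩⟩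

lemma prop3 {e f : EV G} (he : e ∈ S) (hf : f ∈ S) (hne : e ≠ f)
    (h : e.val.2 = f.val.2) : G.Adj e.val.1 f.val.1 := by
  by_contra hadj
  exact hS e he f hf ⟨hne, Or.inl ⟨h.le, Or.inr (Or.inr ⟨h, hadj⟩)⟩⟩

end IndepProps

/-- bottoms of a set of edges -/
def bots (S : Finset (EV G)) : Finset V := S.image (fun e => e.val.1)

lemma card_bots {S : Finset (EV G)} (hS : (hatG G).IsIndepFinset S) :
    (bots S).card = S.card :=
  Finset.card_image_of_injOn (fun e he f hf h => prop1 hS he hf h)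

lemma top_not_mem_bots {S : Finset (EV G)} (hS : (hatG G).IsIndepFinset S)
    {e : EV G} (he : e ∈ S) : e.val.2 ∉ bots S := by
  rw [bots, Finset.mem_image]
  rintro ⟨f, hf, hfe⟩
  exact prop2 hS he hf hfe.symm

open Classical in
/-- the part with top v -/
noncomputable def partOf (S : Finset (EV G)) (v : V) : Finset V :=
  insert v ((S.filter (fun e => e.val.2 = v)).image (fun e => e.val.1))

lemma mem_partOf {S : Finset (EV G)} {v x : V} :
    x ∈ partOf S v ↔ x = v ∨ ∃ e ∈ S, e.val.1 = x ∧ e.val.2 = v := by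
  classical
  rw [partOf]
  simp only [Finset.mem_insert, Finset.mem_image, Finset.mem_filter]
  constructor
  · rintro (h | ⟨e, ⟨he, h2⟩, h1⟩)
    · exact Or.inl h
    · exact Or.inr ⟨e, he, h1, h2⟩
  · rintro (h | ⟨e, he, h1, h2⟩)
    · exact Or.inl h
    · exact Or.inr ⟨e, ⟨he, h2⟩, h1⟩

lemma self_mem_partOf {S : Finset (EV G)} {v : V} : v ∈ partOf S v :=
  mem_partOf.2 (Or.inl rfl)

lemma le_of_mem_partOf {S : Finset (EV G)} {v x : V} (h : x ∈ partOf S v) : x ≤ v := by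
  rcases mem_partOf.1 h with rfl | ⟨e, -, h1, h2⟩
  · exact le_rfl
  · rw [← h1, ← h2]
    exact e.prop.1.le

open Classical in
/-- the parts of the partition associated to an independent set -/
noncomputable def phiParts (S : Finset (EV G)) : Finset (Finset V) :=
  (Finset.univ.filter (fun v => v ∉ bots S)).image (partOf S)

section Phi

variable {S : Finset (EV G)} (hS : (hatG G).IsIndepFinset S)
include hS

lemma partOf_eq_top {v w : V} (hv : v ∉ bots S) (hw : w ∉ bots S)
    (h : partOf S v = partOf S w) : v = w := by
  have hv' : v ∈ partOf S w := h ▸ self_mem_partOf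
  rcases mem_partOf.1 hv' with h1 | ⟨e, he, h1, -⟩
  · exact h1
  · exact absurd (by rw [bots, Finset.mem_image]; exact ⟨e, he, h1⟩) hv

lemma partOf_disjoint {v w : V} (hv : v ∉ bots S) (hw : w ∉ bots S) (hvw : v ≠ w) :
    Disjoint (partOf S v) (partOf S w) := by
  rw [Finset.disjoint_left]
  intro x hxv hxw
  rcases mem_partOf.1 hxv with rfl | ⟨e, he, he1, he2⟩
  · rcases mem_partOf.1 hxw with h1 | ⟨e, he, h1, -⟩
    · exact hvw h1
    · exact hv (by rw [bots, Finset.mem_image]; exact ⟨e, he, h1⟩)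
  · rcases mem_partOf.1 hxw with h1 | ⟨f, hf, hf1, hf2⟩
    · exact hw (by rw [bots, Finset.mem_image]; exact ⟨e, he, h1 ▸ he1⟩)
    · have : e = f := prop1 hS he hf (by rw [he1, hf1])
      rw [this] at he2
      exact hvw (he2 ▸ hf2 ▸ rfl)

/-- the partition associated to an independent set of hatG -/
noncomputable def phiPart : Finpartition (Finset.univ : Finset V) where
  parts := phiParts S
  supIndep := by
    rw [Finset.supIndep_iff_pairwiseDisjoint]
    intro p hp q hq hpq
    classical
    rw [phiParts, Finset.coe_image] at hp hq
    obtain ⟨v, hv, rfl⟩ := hp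
    obtain ⟨w, hw, rfl⟩ := hq
    simp only [Finset.coe_filter, Set.mem_setOf_eq] at hv hw
    have hvw : v ≠ w := fun h => hpq (h ▸ rfl)
    exact partOf_disjoint hS hv.2 hw.2 hvw
  sup_parts := by
    classical
    apply Finset.Subset.antisymm
    · intro x hx
      exact Finset.mem_univ x
    · intro x hx
      rw [Finset.mem_sup]
      by_cases hxb : x ∈ bots S
      · rw [bots, Finset.mem_image] at hxb
        obtain ⟨e, he, rfl⟩ := hxb
        refine ⟨partOf S e.val.2, ?_, mem_partOf.2 (Or.inr ⟨e, he, rfl, rfl⟩)⟩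
        rw [phiParts, Finset.mem_image]
        exact ⟨e.val.2, Finset.mem_filter.2 ⟨Finset.mem_univ _, top_not_mem_bots hS he⟩, rfl⟩
      · refine ⟨partOf S x, ?_, self_mem_partOf⟩
        rw [phiParts, Finset.mem_image]
        exact ⟨x, Finset.mem_filter.2 ⟨Finset.mem_univ _, hxb⟩, rfl⟩
  bot_notMem := by
    classical
    rw [phiParts, Finset.mem_image]
    rintro ⟨v, -, hv⟩
    have : v ∈ (⊥ : Finset V) := hv ▸ self_mem_partOf
    simp at this

lemma phiPart_parts : (phiPart hS).parts = phiParts S := rfl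

lemma phiPart_isCliqueCover : ∀ p ∈ phiParts S, G.IsClique (p : Set V) := by
  classical
  intro p hp
  rw [phiParts, Finset.mem_image] at hp
  obtain ⟨v, hv, rfl⟩ := hp
  intro x hx y hy hxy
  rw [Finset.mem_coe] at hx hy
  rcases mem_partOf.1 hx with rfl | ⟨e, he, he1, he2⟩
  · rcases mem_partOf.1 hy with h1 | ⟨f, hf, hf1, hf2⟩
    · exact absurd h1.symm hxy
    · rw [← hf1, ← hf2]
      exact (f.prop.2).symm
  · rcases mem_partOf.1 hy with rfl | ⟨f, hf, hf1, hf2⟩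
    · rw [← he1, ← he2]
      exact e.prop.2
    · have hef : e ≠ f := fun h => hxy (by rw [← he1, ← hf1, h])
      have := prop3 hS he hf hef (by rw [he2, hf2])
      rw [he1, hf1] at this
      exact this

lemma phiParts_card : (phiParts S).card = Fintype.card V - S.card := by
  classical
  rw [phiParts, Finset.card_image_of_injOn]
  · have heq : Finset.univ.filter (fun v => v ∉ bots S) = Finset.univ \ bots S := by
      ext x
      simp [Finset.mem_sdiff]
    rw [heq, Finset.card_sdiff_of_subset (Finset.subset_univ _), Finset.card_univ, card_bots hS]
  · intro v hv w hw h
    simp only [Finset.coe_filter, Set.mem_setOf_eq] at hv hw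
    exact partOf_eq_top hS hv.2 hw.2 h

end Phi

section Psi

variable {P : Finpartition (Finset.univ : Finset V)}

open Classical in
noncomputable def psiSet (G : SimpleGraph V) (P : Finpartition (Finset.univ : Finset V)) :
    Finset (EV G) :=
  Finset.univ.filter (fun e => e.val.2 ∈ P.part e.val.1 ∧ ∀ x ∈ P.part e.val.1, x ≤ e.val.2)

lemma mem_psiSet {e : EV G} :
    e ∈ psiSet G P ↔ e.val.2 ∈ P.part e.val.1 ∧ ∀ x ∈ P.part e.val.1, x ≤ e.val.2 := by
  classical
  rw [psiSet]
  simp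

lemma psiSet_indep (hP : ∀ p ∈ P.parts, G.IsClique (p : Set V)) :
    (hatG G).IsIndepFinset (psiSet G P) := by
  have claim : ∀ e ∈ psiSet G P, ∀ f ∈ psiSet G P, e ≠ f → ¬ hrel G e f := by
    rintro e he f hf hne ⟨hle, hcase⟩
    obtain ⟨he2, hemax⟩ := (mem_psiSet (G := G)).1 he
    obtain ⟨hf2, hfmax⟩ := (mem_psiSet (G := G)).1 hf
    have he1 : e.val.1 ∈ P.part e.val.1 := P.mem_part (Finset.mem_univ _)
    have hf1 : f.val.1 ∈ P.part f.val.1 := P.mem_part (Finset.mem_univ _)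
    rcases hcase with h | h | ⟨h, hnadj⟩
    · -- e1 = f1
      have hpp : P.part e.val.1 = P.part f.val.1 := by rw [h]
      have h1 : f.val.2 ≤ e.val.2 := hemax _ (hpp ▸ hf2)
      exact hne (Subtype.ext (Prod.ext h (le_antisymm hle h1)))
    · -- e2 = f1
      have hpp : P.part f.val.1 = P.part e.val.1 :=
        (P.mem_part_iff_part_eq_part (Finset.mem_univ _) (Finset.mem_univ _)).1 (h ▸ he2)
      have : f.val.2 ≤ e.val.2 := hemax _ (hpp ▸ hf2)
      have : f.val.2 ≤ f.val.1 := this.trans h.le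
      exact absurd this (not_le.2 f.prop.1)
    · -- e2 = f2, ¬Adj e1 f1
      have hpe : P.part e.val.2 = P.part e.val.1 :=
        (P.mem_part_iff_part_eq_part (Finset.mem_univ _) (Finset.mem_univ _)).1 he2
      have hpf : P.part f.val.2 = P.part f.val.1 :=
        (P.mem_part_iff_part_eq_part (Finset.mem_univ _) (Finset.mem_univ _)).1 hf2
      have hpp : P.part e.val.1 = P.part f.val.1 := by rw [← hpe, ← hpf, h]
      by_cases h11 : e.val.1 = f.val.1
      · exact hne (Subtype.ext (Prod.ext h11 h))
      · refine hnadj ?_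
        have hcl := hP (P.part e.val.1) (P.part_mem.2 (Finset.mem_univ _))
        exact hcl (Finset.mem_coe.2 he1) (Finset.mem_coe.2 (hpp ▸ hf1)) h11
  intro e he f hf hadj
  obtain ⟨hne, h | h⟩ := hadj
  · exact claim e he f hf hne h
  · exact claim f hf e he hne.symm h

lemma mem_bots_psiSet_iff (hP : ∀ p ∈ P.parts, G.IsClique (p : Set V)) {x : V} :
    x ∈ bots (psiSet G P) ↔ ¬ (∀ z ∈ P.part x, z ≤ x) := by
  constructor
  · intro hx
    rw [bots, Finset.mem_image] at hx
    obtain ⟨e, he, rfl⟩ := hx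
    obtain ⟨he2, -⟩ := (mem_psiSet (G := G)).1 he
    intro hmax
    exact absurd (hmax _ he2) (not_le.2 e.prop.1)
  · intro hnm
    push_neg at hnm
    obtain ⟨z, hz, hxz⟩ := hnm
    have hxx : x ∈ P.part x := P.mem_part (Finset.mem_univ _)
    have hne : (P.part x).Nonempty := ⟨x, hxx⟩
    set m := (P.part x).max' hne with hm
    have hmm : m ∈ P.part x := (P.part x).max'_mem hne
    have hxm : x < m := lt_of_lt_of_le hxz ((P.part x).le_max' z hz)
    have hadj : G.Adj x m :=
      hP (P.part x) (P.part_mem.2 (Finset.mem_univ _)) (Finset.mem_coe.2 hxx)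
        (Finset.mem_coe.2 hmm) (ne_of_lt hxm)
    refine (by rw [bots, Finset.mem_image]
               exact ⟨⟨(x, m), hxm, hadj⟩, (mem_psiSet (G := G)).2 ⟨hmm, fun w hw => (P.part x).le_max' w hw⟩, rfl⟩)

lemma partOf_psiSet (hP : ∀ p ∈ P.parts, G.IsClique (p : Set V)) {v : V}
    (hv : v ∉ bots (psiSet G P)) : partOf (psiSet G P) v = P.part v := by
  have hvmax : ∀ z ∈ P.part v, z ≤ v := by
    by_contra h
    exact hv ((mem_bots_psiSet_iff hP).2 h)
  ext x
  rw [mem_partOf]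
  constructor
  · rintro (rfl | ⟨e, he, rfl, rfl⟩)
    · exact P.mem_part (Finset.mem_univ _)
    · obtain ⟨he2, -⟩ := (mem_psiSet (G := G)).1 he
      have hpp : P.part e.val.1 = P.part e.val.2 :=
        ((P.mem_part_iff_part_eq_part (Finset.mem_univ _) (Finset.mem_univ _)).1 he2).symm
      exact hpp ▸ (P.mem_part (Finset.mem_univ _))
  · intro hx
    by_cases hxv : x = v
    · exact Or.inl hxv
    · have hppx : P.part x = P.part v :=
        (P.mem_part_iff_part_eq_part (Finset.mem_univ _) (Finset.mem_univ _)).1 hx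
      have hlt : x < v := lt_of_le_of_ne (hvmax x hx) hxv
      have hvv : v ∈ P.part v := P.mem_part (Finset.mem_univ _)
      have hadj : G.Adj x v :=
        hP (P.part v) (P.part_mem.2 (Finset.mem_univ _)) (Finset.mem_coe.2 hx)
          (Finset.mem_coe.2 hvv) hxv
      refine Or.inr ⟨⟨(x, v), hlt, hadj⟩, (mem_psiSet (G := G)).2 ⟨?_, ?_⟩, rfl, rfl⟩
      · exact hppx ▸ hvv
      · intro z hz
        exact hvmax z (hppx ▸ hz)

/-- roundtrip: parts of phi of psi -/
lemma phiParts_psiSet (hP : ∀ p ∈ P.parts, G.IsClique (p : Set V)) :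
    phiParts (psiSet G P) = P.parts := by
  classical
  ext q
  rw [phiParts, Finset.mem_image]
  constructor
  · rintro ⟨v, hv, rfl⟩
    rw [Finset.mem_filter] at hv
    rw [partOf_psiSet hP hv.2]
    exact P.part_mem.2 (Finset.mem_univ _)
  · intro hq
    have hne : q.Nonempty := P.nonempty_of_mem_parts hq
    set m := q.max' hne with hm
    have hmm : m ∈ q := q.max'_mem hne
    have hpm : P.part m = q := P.part_eq_of_mem hq hmm
    have hmb : m ∉ bots (psiSet G P) := by
      rw [mem_bots_psiSet_iff hP]
      push_neg
      intro z hz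
      rw [hpm] at hz
      exact q.le_max' z hz
    refine ⟨m, Finset.mem_filter.2 ⟨Finset.mem_univ _, hmb⟩, ?_⟩
    rw [partOf_psiSet hP hmb, hpm]

/-- roundtrip: psi of phi -/
lemma psiSet_phiPart {S : Finset (EV G)} (hS : (hatG G).IsIndepFinset S) :
    psiSet G (phiPart hS) = S := by
  classical
  ext e
  rw [mem_psiSet]
  set Q := phiPart hS with hQ
  constructor
  · rintro ⟨he2, hemax⟩
    have hp : Q.part e.val.1 ∈ Q.parts := Q.part_mem.2 (Finset.mem_univ _)
    rw [hQ, phiPart_parts, phiParts, Finset.mem_image] at hp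
    obtain ⟨v, hv, hpv⟩ := hp
    rw [Finset.mem_filter] at hv
    have he1 : e.val.1 ∈ partOf S v := hpv ▸ Q.mem_part (Finset.mem_univ _)
    have he2' : e.val.2 ∈ partOf S v := hpv ▸ he2
    have hvle : v ≤ e.val.2 := hemax v (hpv ▸ (self_mem_partOf (S := S) (v := v)))
    have h2v : e.val.2 = v := le_antisymm (le_of_mem_partOf he2') hvle
    rcases mem_partOf.1 he1 with h1 | ⟨f, hf, hf1, hf2⟩
    · exfalso
      have hlt := e.prop.1
      rw [h1, h2v] at hlt
      exact lt_irrefl v hlt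
    · have : f = e := Subtype.ext (Prod.ext hf1 (by rw [hf2, h2v]))
      exact this ▸ hf
  · intro he
    have hvb : e.val.2 ∉ bots S := top_not_mem_bots hS he
    have hpart : partOf S e.val.2 ∈ Q.parts := by
      rw [hQ, phiPart_parts, phiParts, Finset.mem_image]
      exact ⟨e.val.2, Finset.mem_filter.2 ⟨Finset.mem_univ _, hvb⟩, rfl⟩
    have he1 : e.val.1 ∈ partOf S e.val.2 := mem_partOf.2 (Or.inr ⟨e, he, rfl, rfl⟩)
    have hQp : Q.part e.val.1 = partOf S e.val.2 := Q.part_eq_of_mem hpart he1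
    rw [hQp]
    exact ⟨self_mem_partOf, fun x hx => le_of_mem_partOf hx⟩

end Psi

section Counts

lemma numIndepSets_eq_natCard {W : Type*} (H : SimpleGraph W) (k : ℕ) :
    numIndepSets H k = Nat.card {s : Finset W // H.IsIndepFinset s ∧ s.card = k} := by
  rw [numIndepSets, ← Nat.card_coe_set_eq]
  rfl

/-- the C4 count identity -/
lemma clique_count (k : ℕ) (hk : k ≤ Fintype.card V) :
    {P : Finpartition (Finset.univ : Finset V) |
      (∀ p ∈ P.parts, G.IsClique (p : Set V)) ∧ P.parts.card = Fintype.card V - k}.ncard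
    = numIndepSets (hatG G) k := by
  rw [numIndepSets_eq_natCard, ← Nat.card_coe_set_eq]
  apply Nat.card_congr
  refine Equiv.symm ?_
  refine ⟨fun S => ⟨phiPart S.prop.1, ?_⟩, fun P => ⟨psiSet G P.val, ?_⟩, ?_, ?_⟩
  · refine ⟨fun p hp => phiPart_isCliqueCover S.prop.1 p hp, ?_⟩
    rw [phiPart_parts, phiParts_card S.prop.1, S.prop.2]
  · obtain ⟨hP, hcard⟩ := P.prop
    refine ⟨psiSet_indep hP, ?_⟩
    have h1 := phiParts_card (psiSet_indep hP)
    rw [phiParts_psiSet hP, hcard] at h1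
    have h2 : (psiSet G P.val).card = (bots (psiSet G P.val)).card :=
      (card_bots (psiSet_indep hP)).symm
    have h3 : (bots (psiSet G P.val)).card ≤ Fintype.card V :=
      (Finset.card_le_card (Finset.subset_univ _)).trans (le_of_eq Finset.card_univ)
    omega
  · intro S
    exact Subtype.ext (psiSet_phiPart S.prop.1)
  · intro P
    refine Subtype.ext (Finpartition.ext ?_)
    rw [phiPart_parts]
    exact phiParts_psiSet P.prop.1

/-- independent sets in hatG have at most n elements -/
lemma numIndepSets_hat_zero (k : ℕ) (hk : Fintype.card V < k) : numIndepSets (hatG G) k = 0 := by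
  rw [numIndepSets]
  have he : {s : Finset (EV G) | (hatG G).IsIndepFinset s ∧ s.card = k} = ∅ := by
    rw [Set.eq_empty_iff_forall_notMem]
    rintro S ⟨hS, hcard⟩
    have h2 : S.card = (bots S).card := (card_bots hS).symm
    have h3 : (bots S).card ≤ Fintype.card V := by
      rw [← Finset.card_univ]
      exact Finset.card_le_card (Finset.subset_univ _)
    omega
  rw [he, Set.ncard_empty]

/-- independent sets in lineG have at most n elements -/
lemma numIndepSets_line_zero (k : ℕ) (hk : Fintype.card V < k) : numIndepSets (lineG G) k = 0 := by
  rw [numIndepSets]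
  have he : {s : Finset (EV G) | (lineG G).IsIndepFinset s ∧ s.card = k} = ∅ := by
    rw [Set.eq_empty_iff_forall_notMem]
    rintro S ⟨hS, hcard⟩
    have hinj : Set.InjOn (fun e : EV G => e.val.1) S := by
      intro e he f hf h
      by_contra hne
      exact hS e he f hf ⟨hne, Or.inl h⟩
    have h2 : S.card = (S.image (fun e => e.val.1)).card :=
      (Finset.card_image_of_injOn hinj).symm
    have h3 : (S.image (fun e => e.val.1)).card ≤ Fintype.card V := by
      rw [← Finset.card_univ]
      exact Finset.card_le_card (Finset.subset_univ _)
    omega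
  rw [he, Set.ncard_empty]

end Counts

section Match

/-- the Sym2 edge of an EV -/
def qe (e : EV G) : Sym2 V := s(e.val.1, e.val.2)

lemma qe_injective : Function.Injective (qe (G := G)) := by
  intro e f h
  rw [qe, qe, Sym2.eq_iff] at h
  rcases h with ⟨h1, h2⟩ | ⟨h1, h2⟩
  · exact Subtype.ext (Prod.ext h1 h2)
  · exfalso
    have he := e.prop.1
    have hf := f.prop.1
    rw [h1, h2] at he
    exact lt_asymm he hf

lemma qe_mem_edgeSet (e : EV G) : qe e ∈ G.edgeSet := by
  rw [qe, SimpleGraph.mem_edgeSet]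
  exact e.prop.2

lemma exists_qe {x : Sym2 V} (hx : x ∈ G.edgeSet) : ∃ e : EV G, qe e = x := by
  induction x using Sym2.ind with
  | _ a b =>
    rw [SimpleGraph.mem_edgeSet] at hx
    rcases lt_trichotomy a b with h | h | h
    · exact ⟨⟨(a, b), h, hx⟩, rfl⟩
    · exact absurd h hx.ne
    · exact ⟨⟨(b, a), h, hx.symm⟩, Sym2.eq_swap⟩

open Classical in
lemma match_count (k : ℕ) :
    {s : Finset (Sym2 V) | G.IsMatchingFinset s ∧ s.card = k}.ncard = numIndepSets (lineG G) k := by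
  classical
  rw [numIndepSets_eq_natCard, ← Nat.card_coe_set_eq]
  apply Nat.card_congr
  have toS : ∀ s : Finset (Sym2 V), G.IsMatchingFinset s →
      ∃ S : Finset (EV G), S.image qe = s ∧ (lineG G).IsIndepFinset S ∧ S.card = s.card := by
    intro s hs
    refine ⟨Finset.univ.filter (fun e => qe e ∈ s), ?_, ?_, ?_⟩
    · ext x
      rw [Finset.mem_image]
      constructor
      · rintro ⟨e, he, rfl⟩
        exact (Finset.mem_filter.1 he).2
      · intro hx
        obtain ⟨e, rfl⟩ := exists_qe (hs.1 hx)
        exact ⟨e, Finset.mem_filter.2 ⟨Finset.mem_univ _, hx⟩, rfl⟩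
    · rintro e he f hf ⟨hne, hshare⟩
      have hes : qe e ∈ s := (Finset.mem_filter.1 he).2
      have hfs : qe f ∈ s := (Finset.mem_filter.1 hf).2
      have hqne : qe e ≠ qe f := fun h => hne (qe_injective h)
      rcases hshare with h | h | h | h
      · exact hs.2 _ hes _ hfs hqne e.val.1
          ⟨Sym2.mem_mk_left _ _, h ▸ Sym2.mem_mk_left _ _⟩
      · exact hs.2 _ hes _ hfs hqne e.val.1
          ⟨Sym2.mem_mk_left _ _, h ▸ Sym2.mem_mk_right _ _⟩
      · exact hs.2 _ hes _ hfs hqne e.val.2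
          ⟨Sym2.mem_mk_right _ _, h ▸ Sym2.mem_mk_left _ _⟩
      · exact hs.2 _ hes _ hfs hqne e.val.2
          ⟨Sym2.mem_mk_right _ _, h ▸ Sym2.mem_mk_right _ _⟩
    · rw [← Finset.card_image_of_injOn (fun e _ f _ h => qe_injective h)]
      congr 1
      ext x
      rw [Finset.mem_image]
      constructor
      · rintro ⟨e, he, rfl⟩
        exact (Finset.mem_filter.1 he).2
      · intro hx
        obtain ⟨e, rfl⟩ := exists_qe (hs.1 hx)
        exact ⟨e, Finset.mem_filter.2 ⟨Finset.mem_univ _, hx⟩, rfl⟩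
  refine ⟨fun s => ⟨Finset.univ.filter (fun e => qe e ∈ s.val), ?_⟩,
    fun S => ⟨S.val.image qe, ?_, ?_⟩, ?_, ?_⟩
  · obtain ⟨S, hSim, hind, hcard⟩ := toS s.val s.prop.1
    have : Finset.univ.filter (fun e => qe e ∈ s.val) = S := by
      ext e
      rw [Finset.mem_filter, ← hSim, Finset.mem_image]
      constructor
      · rintro ⟨-, f, hf, hqf⟩
        rwa [← qe_injective hqf]
      · intro he
        exact ⟨Finset.mem_univ _, e, he, rfl⟩
    rw [this]
    exact ⟨hind, hcard.trans s.prop.2⟩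
  · constructor
    · intro x hx
      rw [Finset.coe_image] at hx
      obtain ⟨e, -, rfl⟩ := hx
      exact qe_mem_edgeSet e
    · rintro x hx y hy hxy v ⟨hvx, hvy⟩
      rw [Finset.mem_image] at hx hy
      obtain ⟨e, he, rfl⟩ := hx
      obtain ⟨f, hf, rfl⟩ := hy
      have hef : e ≠ f := fun h => hxy (h ▸ rfl)
      refine S.prop.1 e he f hf ⟨hef, ?_⟩
      rw [qe, Sym2.mem_iff] at hvx hvy
      rcases hvx with rfl | rfl <;> rcases hvy with h | h
      · exact Or.inl h
      · exact Or.inr (Or.inl h)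
      · exact Or.inr (Or.inr (Or.inl h))
      · exact Or.inr (Or.inr (Or.inr h))
  · rw [Finset.card_image_of_injOn (fun e _ f _ h => qe_injective h)]
    exact S.prop.2
  · intro s
    apply Subtype.ext
    show (Finset.univ.filter (fun e => qe e ∈ s.val)).image qe = s.val
    obtain ⟨S, hSim, -, -⟩ := toS s.val s.prop.1
    ext x
    rw [Finset.mem_image]
    constructor
    · rintro ⟨e, he, rfl⟩
      exact (Finset.mem_filter.1 he).2
    · intro hx
      obtain ⟨e, rfl⟩ := exists_qe (s.prop.1.1 hx)
      exact ⟨e, Finset.mem_filter.2 ⟨Finset.mem_univ _, hx⟩, rfl⟩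
  · intro S
    apply Subtype.ext
    show Finset.univ.filter (fun e => qe e ∈ S.val.image qe) = S.val
    ext e
    rw [Finset.mem_filter, Finset.mem_image]
    constructor
    · rintro ⟨-, f, hf, hqf⟩
      rwa [← qe_injective hqf]
    · intro he
      exact ⟨Finset.mem_univ _, e, he, rfl⟩

end Match

section Expand
variable [Fintype W]

lemma numIndepSets_gt_card_zero (H : SimpleGraph W) (k : ℕ) (hk : Fintype.card W < k) : numIndepSets H k = 0 := by
  rw [numIndepSets]
  have he : {s : Finset W | H.IsIndepFinset s ∧ s.card = k} = ∅ := by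
    rw [Set.eq_empty_iff_forall_notMem]
    rintro s ⟨-, hcard⟩
    have h2 : s.card ≤ Fintype.card W := (Finset.card_le_univ s).trans_eq Finset.card_univ
    omega
  rw [he, Set.ncard_empty]

lemma JJ_expand (H : SimpleGraph W) (y : ℝ) :
    JJ H Finset.univ y = ∑ k ∈ Finset.range (Fintype.card W + 1),
      (-1:ℝ)^k * (numIndepSets H k : ℝ) * y^k := by
  classical
  rw [JJ, ← Finset.sum_fiberwise_of_maps_to (g := Finset.card)
    (t := Finset.range (Fintype.card W + 1)) (fun s hs => by
      rw [Finset.mem_range]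
      exact Nat.lt_succ_of_le ((Finset.card_le_univ s).trans (le_of_eq Finset.card_univ)))]
  refine Finset.sum_congr rfl (fun k hk => ?_)
  have hterm : ∀ s ∈ (Finset.univ.powerset.filter (fun s => H.IsIndepFinset s)).filter
      (fun s => s.card = k), (-y : ℝ) ^ s.card = (-1:ℝ)^k * y^k := by
    intro s hs
    rw [(Finset.mem_filter.1 hs).2, neg_pow]
  have hset : {s : Finset W | H.IsIndepFinset s ∧ s.card = k}
      = ↑((Finset.univ.powerset.filter (fun s => H.IsIndepFinset s)).filter
          (fun s => s.card = k)) := by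
    ext s
    simp [Finset.mem_filter]
  have hcount : ((Finset.univ.powerset.filter (fun s => H.IsIndepFinset s)).filter
      (fun s => s.card = k)).card = numIndepSets H k := by
    rw [numIndepSets, hset, Set.ncard_coe_finset]
  rw [Finset.sum_congr rfl hterm, Finset.sum_const, nsmul_eq_mul, hcount]
  ring

lemma sum_range_succ_ext {f : ℕ → ℝ} {a b : ℕ} (ha : ∀ k, a < k → f k = 0)
    (hb : ∀ k, b < k → f k = 0) :
    ∑ k ∈ Finset.range (a+1), f k = ∑ k ∈ Finset.range (b+1), f k := by
  rcases le_total a b with h | h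
  · refine Finset.sum_subset (Finset.range_subset_range.2 (by omega)) ?_
    intro x hx hnx
    rw [Finset.mem_range] at hx
    rw [Finset.mem_range] at hnx
    exact ha x (by omega)
  · refine (Finset.sum_subset (Finset.range_subset_range.2 (by omega)) ?_).symm
    intro x hx hnx
    rw [Finset.mem_range] at hx
    rw [Finset.mem_range] at hnx
    exact hb x (by omega)

end Expand

section FinalGlue
variable {V : Type*} [Fintype V] [LinearOrder V] {G : SimpleGraph V}

lemma match_count_eq (G : SimpleGraph V) (k : ℕ) :
    numMatchings G k = numIndepSets (lineG G) k :=
  match_count (G := G) k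

lemma clique_count_eq (G : SimpleGraph V) (k : ℕ) (hk : k ≤ Fintype.card V) :
    numCliqueCovers G (Fintype.card V - k) = numIndepSets (hatG G) k :=
  clique_count (G := G) k hk

lemma matchPoly_eval (G : SimpleGraph V) {x : ℝ} (hx : 0 < x) :
    (matchPoly G).eval x = x ^ (Fintype.card V) * JJ (lineG G) Finset.univ (1/x) := by
  classical
  set n := Fintype.card V with hn
  have h1 : (matchPoly G).eval x = ∑ k ∈ Finset.range (n + 1),
      (-1:ℝ)^k * (numIndepSets (lineG G) k : ℝ) * x^(n - k) := by
    rw [matchPoly, Polynomial.eval_finset_sum]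
    refine Finset.sum_congr rfl fun k hk => ?_
    rw [Polynomial.eval_mul, Polynomial.eval_C, Polynomial.eval_pow, Polynomial.eval_X,
      match_count_eq]
  have hfg : ∀ k, (-1:ℝ)^k * (numIndepSets (lineG G) k : ℝ) * x^(n - k)
      = x^n * ((-1:ℝ)^k * (numIndepSets (lineG G) k : ℝ) * (1/x)^k) := by
    intro k
    by_cases hk : k ≤ n
    · have hxk : x^k ≠ 0 := pow_ne_zero _ hx.ne'
      have hpow : x^(n-k) * x^k = x^n := by
        rw [← pow_add]
        congr 1
        omega
      rw [one_div, inv_pow, ← hpow]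
      field_simp
    · rw [numIndepSets_line_zero (G := G) k (by omega)]
      push_cast
      ring
  rw [h1, Finset.sum_congr rfl (fun k _ => hfg k), JJ_expand, Finset.mul_sum]
  refine sum_range_succ_ext ?_ ?_
  · intro k hk
    rw [numIndepSets_line_zero (G := G) k hk]
    push_cast
    ring
  · intro k hk
    rw [numIndepSets_gt_card_zero (lineG G) k hk]
    push_cast
    ring

lemma adjPoly_eval (G : SimpleGraph V) {x : ℝ} (hx : 0 < x) :
    (adjPoly G).eval x = x ^ (Fintype.card V) * JJ (hatG G) Finset.univ (1/x) := by
  classical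
  set n := Fintype.card V with hn
  have h1 : (adjPoly G).eval x = ∑ k ∈ Finset.range (n + 1),
      (-1:ℝ)^(n - k) * (numCliqueCovers G k : ℝ) * x^k := by
    rw [adjPoly, Polynomial.eval_finset_sum]
    refine Finset.sum_congr rfl fun k hk => ?_
    rw [Polynomial.eval_mul, Polynomial.eval_C, Polynomial.eval_pow, Polynomial.eval_X]
  have h2 : ∑ k ∈ Finset.range (n + 1),
        (-1:ℝ)^(n - k) * (numCliqueCovers G k : ℝ) * x^k
      = ∑ j ∈ Finset.range (n + 1),
        (-1:ℝ)^(n - (n - j)) * (numCliqueCovers G (n - j) : ℝ) * x^(n - j) := by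
    rw [← Finset.sum_range_reflect]
    refine Finset.sum_congr rfl fun j hj => ?_
    simp only [Nat.add_sub_cancel]
  have h3 : ∀ j ∈ Finset.range (n + 1),
      (-1:ℝ)^(n - (n - j)) * (numCliqueCovers G (n - j) : ℝ) * x^(n - j)
      = (-1:ℝ)^j * (numIndepSets (hatG G) j : ℝ) * x^(n - j) := by
    intro j hj
    rw [Finset.mem_range] at hj
    have hj' : j ≤ n := by omega
    have hnn : n - (n - j) = j := by omega
    rw [hnn, clique_count_eq G j hj']
  have hfg : ∀ k, (-1:ℝ)^k * (numIndepSets (hatG G) k : ℝ) * x^(n - k)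
      = x^n * ((-1:ℝ)^k * (numIndepSets (hatG G) k : ℝ) * (1/x)^k) := by
    intro k
    by_cases hk : k ≤ n
    · have hxk : x^k ≠ 0 := pow_ne_zero _ hx.ne'
      have hpow : x^(n-k) * x^k = x^n := by
        rw [← pow_add]
        congr 1
        omega
      rw [one_div, inv_pow, ← hpow]
      field_simp
    · rw [numIndepSets_hat_zero (G := G) k (by omega)]
      push_cast
      ring
  rw [h1, h2, Finset.sum_congr rfl h3, Finset.sum_congr rfl (fun k _ => hfg k),
    JJ_expand, Finset.mul_sum]
  refine sum_range_succ_ext ?_ ?_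
  · intro k hk
    rw [numIndepSets_hat_zero (G := G) k hk]
    push_cast
    ring
  · intro k hk
    rw [numIndepSets_gt_card_zero (hatG G) k hk]
    push_cast
    ring

theorem main (G : SimpleGraph V) (he : ∃ a b, G.Adj a b) (g t : ℝ)
    (hg : IsGammaZero (adjPoly G) g) (ht : IsGammaZero (matchPoly G) t) : g ≤ t := by
  classical
  obtain ⟨a, b, hab⟩ := he
  have hWne : Nonempty (EV G) := by
    rcases lt_trichotomy a b with h | h | h
    · exact ⟨⟨(a,b), h, hab⟩⟩
    · exact absurd h hab.ne
    · exact ⟨⟨(b,a), h, hab.symm⟩⟩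
  have huniv : (Finset.univ : Finset (EV G)).Nonempty := Finset.univ_nonempty
  set β := bb (lineG G) (Finset.univ) with hβ
  have hβpos : 0 < β := bb_pos _ _
  have hβ1 : β ≤ 1 := bb_le_one _ _
  have hroot : JJ (lineG G) Finset.univ β = 0 :=
    bb_root_exists (lineG G) (Finset.univ.card) Finset.univ le_rfl huniv
  have hx : (0:ℝ) < 1/β := by positivity
  have hminv : (matchPoly G).eval (1/β) = 0 := by
    rw [matchPoly_eval G hx, one_div_one_div, hroot, mul_zero]
  have ht2 : 1/β ≤ t := ht.2 _ hminv
  have h1β : (1:ℝ) ≤ 1/β := by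
    rw [le_div_iff₀ hβpos]
    simpa using hβ1
  by_contra hgt
  push_neg at hgt
  have hgpos : 0 < g := lt_of_lt_of_le zero_lt_one (h1β.trans (ht2.trans hgt.le))
  have h2 : 1/β < g := lt_of_le_of_lt ht2 hgt
  have hylt : 1/g < β := by
    have h3 : 1/g < 1/(1/β) := one_div_lt_one_div_of_lt hx h2
    rwa [one_div_one_div] at h3
  have hpos : 0 < JJ (hatG G) Finset.univ (1/g) :=
    JJ_pos_of_le (hat_le_line G) (by positivity) hylt
  have hzero := hg.1
  rw [adjPoly_eval G hgpos] at hzero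
  nlinarith [pow_pos hgpos (Fintype.card V)]

end FinalGlue

lemma adjPoly_congr {V : Type*} [Fintype V] (i1 i2 : DecidableEq V) (G : SimpleGraph V) :
    @adjPoly V _ i1 G = @adjPoly V _ i2 G :=
  congrArg (fun i : DecidableEq V => @adjPoly V _ i G) (Subsingleton.elim i1 i2)

end Aux

/-- for connected `G` with at least one edge, `γ(G) ≤ t(G)`, where `t(G)`
is the largest real zero of the matching polynomial. -/
theorem stmt15 {V : Type*} [Fintype V] [DecidableEq V] (G : SimpleGraph V)
    (hc : G.Connected) (he : ∃ a b, G.Adj a b) (g t : ℝ)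
    (hg : IsGammaZero (adjPoly G) g) (ht : IsGammaZero (matchPoly G) t) :
    g ≤ t := by
  letI lo : LinearOrder V :=
    LinearOrder.lift' (fun v => (Fintype.equivFin V) v) (Equiv.injective _)
  refine Aux.main G ⟨he.choose, he.choose_spec.choose, he.choose_spec.choose_spec⟩ g t ?_ ht
  exact (Aux.adjPoly_congr _ _ G) ▸ hg
end

section
/- Let G be a connected graph with at least one edge and maximum degree Δ ≥ 2. Then the largest real zero γ(G) of the adjoint polynomial satisfies γ(G) ≤ 4(Δ − 1). -/
open Polynomial

namespace Stmt16Aux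

open Finset

variable {V : Type*} [Fintype V] [DecidableEq V] (G : SimpleGraph V) [DecidableRel G.Adj]

/-- Number of partitions of the finset `A` into `k` cliques of `G`. -/
noncomputable def cc (A : Finset V) (k : ℕ) : ℕ :=
  {P : Finpartition A | (∀ p ∈ P.parts, G.IsClique (p : Set V)) ∧ P.parts.card = k}.ncard

lemma cc_eq_card (A : Finset V) (k : ℕ) :
    cc G A k = (Finset.univ.filter
      (fun P : Finpartition A =>
        (∀ p ∈ P.parts, G.IsClique (p : Set V)) ∧ P.parts.card = k)).card := by
  rw [cc, Set.ncard_eq_toFinset_card']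
  congr 1
  ext P
  simp

lemma parts_of_empty (P : Finpartition (∅ : Finset V)) : P.parts = ∅ := by
  ext p
  simp only [Finset.notMem_empty, iff_false]
  intro hp
  obtain ⟨x, hx⟩ := P.nonempty_of_mem_parts hp
  exact absurd (P.le hp hx) (Finset.notMem_empty x)

lemma cc_empty_zero : cc G (∅ : Finset V) 0 = 1 := by
  rw [cc_eq_card]
  have h1 : (Finset.univ.filter
      (fun P : Finpartition (∅ : Finset V) =>
        (∀ p ∈ P.parts, G.IsClique (p : Set V)) ∧ P.parts.card = 0)) = Finset.univ := by
    apply Finset.filter_true_of_mem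
    intro P _
    rw [parts_of_empty P]
    simp
  rw [h1, Finset.card_univ]
  rw [Fintype.card_eq_one_iff]
  refine ⟨(Finpartition.empty _).copy Finset.bot_eq_empty, fun Q => ?_⟩
  apply Finpartition.ext
  rw [parts_of_empty, parts_of_empty]

lemma cc_zero_of_nonempty {A : Finset V} (hA : A.Nonempty) : cc G A 0 = 0 := by
  rw [cc_eq_card, Finset.card_eq_zero]
  rw [Finset.filter_eq_empty_iff]
  rintro P - ⟨-, h0⟩
  have h1 := P.sup_parts
  rw [Finset.card_eq_zero.mp h0] at h1
  simp only [Finset.sup_empty, Finset.bot_eq_empty] at h1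
  exact hA.ne_empty h1.symm

lemma cc_eq_zero_of_lt {A : Finset V} {k : ℕ} (h : A.card < k) : cc G A k = 0 := by
  rw [cc_eq_card, Finset.card_eq_zero]
  rw [Finset.filter_eq_empty_iff]
  rintro P - ⟨-, h0⟩
  exact absurd (h0 ▸ P.card_parts_le_card) (by omega)

/-- The cliques contained in a finset `W`. -/
def cliqueFinsets (W : Finset V) : Finset (Finset V) :=
  W.powerset.filter fun S => G.IsClique (S : Set V)

lemma mem_cliqueFinsets {W S : Finset V} :
    S ∈ cliqueFinsets G W ↔ S ⊆ W ∧ G.IsClique (S : Set V) := by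
  simp [cliqueFinsets]

lemma parts_avoid_of_mem {A : Finset V} (P : Finpartition A) {B : Finset V}
    (hB : B ∈ P.parts) : (P.avoid B).parts = P.parts.erase B := by
  ext c
  rw [Finpartition.mem_avoid, Finset.mem_erase]
  constructor
  · rintro ⟨d, hd, hdB, rfl⟩
    have hne : d ≠ B := by rintro rfl; exact hdB le_rfl
    have hdisj : Disjoint d B := P.disjoint hd hB hne
    rw [hdisj.sdiff_eq_left]
    exact ⟨hne, hd⟩
  · rintro ⟨hcB, hc⟩
    have hdisj : Disjoint c B := P.disjoint hc hB hcB
    exact ⟨c, hc, fun hle => P.ne_bot hc (hdisj.eq_bot_of_le hle), hdisj.sdiff_eq_left⟩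

/-- The key recursion: partitions of `A` into `k+1` cliques, classified by the
clique containing `v`. -/
lemma cc_succ {A : Finset V} {v : V} (hv : v ∈ A) (k : ℕ) :
    cc G A (k + 1) = ∑ S ∈ cliqueFinsets G (G.neighborFinset v ∩ A),
      cc G (A \ insert v S) k := by
  rw [cc_eq_card]
  have hmap : ∀ P ∈ (Finset.univ.filter
      (fun P : Finpartition A =>
        (∀ p ∈ P.parts, G.IsClique (p : Set V)) ∧ P.parts.card = k + 1)),
      (P.part v).erase v ∈ cliqueFinsets G (G.neighborFinset v ∩ A) := by
    intro P hP
    rw [Finset.mem_filter] at hP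
    obtain ⟨-, hcov, -⟩ := hP
    have hpm := P.part_mem.mpr hv
    have hvp := P.mem_part hv
    rw [mem_cliqueFinsets]
    constructor
    · intro u hu
      rw [Finset.mem_erase] at hu
      rw [Finset.mem_inter, SimpleGraph.mem_neighborFinset]
      exact ⟨(hcov _ hpm) hvp (hu.2) (Ne.symm hu.1), P.le hpm hu.2⟩
    · exact (hcov _ hpm).subset (by simp [Finset.erase_subset])
  rw [Finset.card_eq_sum_card_fiberwise hmap]
  refine Finset.sum_congr rfl (fun S hS => ?_)
  rw [mem_cliqueFinsets] at hS
  obtain ⟨hSsub, hSclique⟩ := hS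
  have hSN : S ⊆ G.neighborFinset v := hSsub.trans Finset.inter_subset_left
  have hSA : S ⊆ A := hSsub.trans Finset.inter_subset_right
  have hvS : v ∉ S := fun h => G.notMem_neighborFinset_self v (hSN h)
  have hBA : insert v S ⊆ A := Finset.insert_subset hv hSA
  have hBne : (insert v S : Finset V) ≠ ⊥ := by
    simp [Finset.bot_eq_empty]
  have hBclique : G.IsClique ((insert v S : Finset V) : Set V) := by
    rw [Finset.coe_insert]
    refine hSclique.insert (fun b hb _ => ?_)
    rw [← SimpleGraph.mem_neighborFinset]
    exact hSN hb
  have hsup : (A \ insert v S) ⊔ insert v S = A := by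
    rw [Finset.sup_eq_union]; exact Finset.sdiff_union_of_subset hBA
  rw [cc_eq_card]
  refine Finset.card_bij' (fun P _ => P.avoid (insert v S))
    (fun Q _ => Q.extend hBne Finset.sdiff_disjoint hsup) ?_ ?_ ?_ ?_
  · -- hi : image is in the target filter
    intro P hP
    simp only [Finset.mem_filter, Finset.mem_univ, true_and] at hP
    obtain ⟨⟨hcov, hcard⟩, hfib⟩ := hP
    have hvp := P.mem_part hv
    have hpart : P.part v = insert v S := by
      rw [← hfib]; exact (Finset.insert_erase hvp).symm
    have hBmem : insert v S ∈ P.parts := hpart ▸ P.part_mem.mpr hv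
    have hparts := parts_avoid_of_mem P hBmem
    simp only [Finset.mem_filter, Finset.mem_univ, true_and]
    constructor
    · intro p hp
      rw [hparts] at hp
      exact hcov _ (Finset.mem_of_mem_erase hp)
    · rw [hparts, Finset.card_erase_of_mem hBmem, hcard]
      omega
  · -- hj
    intro Q hQ
    simp only [Finset.mem_filter, Finset.mem_univ, true_and] at hQ
    obtain ⟨hcov, hcard⟩ := hQ
    have hBnotin : insert v S ∉ Q.parts := by
      intro h
      have := Q.le h (Finset.mem_insert_self v S)
      rw [Finset.mem_sdiff] at this
      exact this.2 (Finset.mem_insert_self v S)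
    have hparts : (Q.extend hBne Finset.sdiff_disjoint hsup).parts
        = insert (insert v S) Q.parts := rfl
    simp only [Finset.mem_filter, Finset.mem_univ, true_and]
    refine ⟨⟨?_, ?_⟩, ?_⟩
    · intro p hp
      rw [hparts, Finset.mem_insert] at hp
      rcases hp with rfl | hp
      · exact hBclique
      · exact hcov _ hp
    · rw [hparts, Finset.card_insert_of_notMem hBnotin, hcard]
    · have hBmem : insert v S ∈ (Q.extend hBne Finset.sdiff_disjoint hsup).parts := by
        rw [hparts]; exact Finset.mem_insert_self _ _
      rw [Finpartition.part_eq_of_mem _ hBmem (Finset.mem_insert_self v S)]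
      exact Finset.erase_insert hvS
  · -- left inverse
    intro P hP
    simp only [Finset.mem_filter, Finset.mem_univ, true_and] at hP
    obtain ⟨⟨hcov, hcard⟩, hfib⟩ := hP
    have hvp := P.mem_part hv
    have hpart : P.part v = insert v S := by
      rw [← hfib]; exact (Finset.insert_erase hvp).symm
    have hBmem : insert v S ∈ P.parts := hpart ▸ P.part_mem.mpr hv
    apply Finpartition.ext
    show insert (insert v S) (P.avoid (insert v S)).parts = P.parts
    rw [parts_avoid_of_mem P hBmem]
    exact Finset.insert_erase hBmem
  · -- right inverse
    intro Q hQ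
    simp only [Finset.mem_filter, Finset.mem_univ, true_and] at hQ
    obtain ⟨hcov, hcard⟩ := hQ
    have hBnotin : insert v S ∉ Q.parts := by
      intro h
      have := Q.le h (Finset.mem_insert_self v S)
      rw [Finset.mem_sdiff] at this
      exact this.2 (Finset.mem_insert_self v S)
    apply Finpartition.ext
    have hBmem : insert v S ∈ (Q.extend hBne Finset.sdiff_disjoint hsup).parts :=
      Finset.mem_insert_self _ _
    rw [parts_avoid_of_mem _ hBmem]
    show (insert (insert v S) Q.parts).erase (insert v S) = Q.parts
    exact Finset.erase_insert hBnotin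

/-- The (sign-adjusted) adjoint polynomial of the induced subgraph on `A`, evaluated at `x`. -/
noncomputable def phi (A : Finset V) (x : ℝ) : ℝ :=
  ∑ k ∈ Finset.range (A.card + 1), (-1 : ℝ) ^ (A.card + k) * (cc G A k : ℝ) * x ^ k

lemma phi_eq_sum {A : Finset V} (x : ℝ) {N : ℕ} (hN : A.card ≤ N) :
    phi G A x = ∑ k ∈ Finset.range (N + 1),
      (-1 : ℝ) ^ (A.card + k) * (cc G A k : ℝ) * x ^ k := by
  rw [phi]
  apply Finset.sum_subset
  · exact Finset.range_subset_range.mpr (by omega)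
  · intro k _ hk'
    rw [Finset.mem_range, not_lt] at hk'
    rw [cc_eq_zero_of_lt G (by omega)]
    simp

lemma phi_empty (x : ℝ) : phi G (∅ : Finset V) x = 1 := by
  simp [phi, cc_empty_zero]

lemma sdiff_insert_eq {A S : Finset V} {v : V} :
    A \ insert v S = (A.erase v) \ S := by
  ext w
  simp only [Finset.mem_sdiff, Finset.mem_insert, Finset.mem_erase, not_or]
  tauto

lemma phi_rec {A : Finset V} {v : V} (hv : v ∈ A) (x : ℝ) :
    phi G A x = x * ∑ S ∈ cliqueFinsets G (G.neighborFinset v ∩ A),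
      (-1 : ℝ) ^ S.card * phi G (A \ insert v S) x := by
  obtain ⟨m, hm⟩ : ∃ m, A.card = m + 1 :=
    ⟨A.card - 1, by have := Finset.card_pos.mpr ⟨v, hv⟩; omega⟩
  have hstep : ∀ S ∈ cliqueFinsets G (G.neighborFinset v ∩ A),
      (A \ insert v S).card + (S.card + 1) = A.card ∧ (A \ insert v S).card ≤ m := by
    intro S hS
    rw [mem_cliqueFinsets] at hS
    have hSN : S ⊆ G.neighborFinset v := hS.1.trans Finset.inter_subset_left
    have hSA : S ⊆ A := hS.1.trans Finset.inter_subset_right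
    have hvS : v ∉ S := fun h => G.notMem_neighborFinset_self v (hSN h)
    have hBA : insert v S ⊆ A := Finset.insert_subset hv hSA
    have h1 : (A \ insert v S).card = A.card - (S.card + 1) := by
      rw [Finset.card_sdiff_of_subset hBA, Finset.card_insert_of_notMem hvS]
    have h2 := Finset.card_le_card hBA
    rw [Finset.card_insert_of_notMem hvS] at h2
    omega
  calc phi G A x
      = ∑ k ∈ Finset.range (m + 1 + 1),
          (-1 : ℝ) ^ (A.card + k) * (cc G A k : ℝ) * x ^ k := by rw [phi, hm]
    _ = (∑ j ∈ Finset.range (m + 1),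
          (-1 : ℝ) ^ (A.card + (j + 1)) * (cc G A (j + 1) : ℝ) * x ^ (j + 1))
        + (-1 : ℝ) ^ (A.card + 0) * (cc G A 0 : ℝ) * x ^ 0 := Finset.sum_range_succ' _ _
    _ = ∑ j ∈ Finset.range (m + 1),
          (-1 : ℝ) ^ (A.card + (j + 1)) * (cc G A (j + 1) : ℝ) * x ^ (j + 1) := by
        rw [cc_zero_of_nonempty G ⟨v, hv⟩]; simp
    _ = ∑ j ∈ Finset.range (m + 1), ∑ S ∈ cliqueFinsets G (G.neighborFinset v ∩ A),
          (-1 : ℝ) ^ (A.card + (j + 1)) * (cc G (A \ insert v S) j : ℝ) * x ^ (j + 1) := by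
        refine Finset.sum_congr rfl (fun j _ => ?_)
        rw [cc_succ G hv j]
        push_cast
        rw [Finset.mul_sum, Finset.sum_mul]
    _ = ∑ S ∈ cliqueFinsets G (G.neighborFinset v ∩ A), ∑ j ∈ Finset.range (m + 1),
          (-1 : ℝ) ^ (A.card + (j + 1)) * (cc G (A \ insert v S) j : ℝ) * x ^ (j + 1) :=
        Finset.sum_comm
    _ = x * ∑ S ∈ cliqueFinsets G (G.neighborFinset v ∩ A),
          (-1 : ℝ) ^ S.card * phi G (A \ insert v S) x := by
        rw [Finset.mul_sum]
        refine Finset.sum_congr rfl (fun S hS => ?_)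
        obtain ⟨hc1, hc2⟩ := hstep S hS
        rw [phi_eq_sum G x hc2, Finset.mul_sum, Finset.mul_sum]
        refine Finset.sum_congr rfl (fun j _ => ?_)
        have hsign : A.card + (j + 1) = (S.card + ((A \ insert v S).card + j)) + 2 := by omega
        rw [hsign, pow_add, pow_add, pow_add]
        ring

/-- Inclusion-exclusion sum over cliques inside `W`, deleted from `B`. -/
noncomputable def Psi (B W : Finset V) (x : ℝ) : ℝ :=
  ∑ S ∈ cliqueFinsets G W, (-1 : ℝ) ^ S.card * phi G (B \ S) x

lemma Psi_empty (B : Finset V) (x : ℝ) : Psi G B ∅ x = phi G B x := by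
  rw [Psi]
  have h : cliqueFinsets G (∅ : Finset V) = {∅} := by
    ext S
    simp [mem_cliqueFinsets, Finset.subset_empty]
    rintro rfl
    simp
  rw [h]
  simp

lemma phi_eq_psi {A : Finset V} {v : V} (hv : v ∈ A) (x : ℝ) :
    phi G A x = x * Psi G (A.erase v) (G.neighborFinset v ∩ A) x := by
  rw [phi_rec G hv x, Psi]
  congr 1
  refine Finset.sum_congr rfl (fun S _ => ?_)
  rw [sdiff_insert_eq]

lemma Psi_rec {B W : Finset V} {u : V} (hu : u ∈ W) (x : ℝ) :
    Psi G B W x = Psi G B (W.erase u) x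
      - Psi G (B.erase u) ((W.erase u) ∩ G.neighborFinset u) x := by
  have hsplit := Finset.sum_filter_add_sum_filter_not (cliqueFinsets G W)
    (fun S => u ∈ S) (fun S => (-1 : ℝ) ^ S.card * phi G (B \ S) x)
  have hnot : (cliqueFinsets G W).filter (fun S => ¬ u ∈ S) = cliqueFinsets G (W.erase u) := by
    ext S
    simp only [Finset.mem_filter, mem_cliqueFinsets, Finset.subset_erase]
    tauto
  have hyes : ∑ S ∈ (cliqueFinsets G W).filter (fun S => u ∈ S),
      (-1 : ℝ) ^ S.card * phi G (B \ S) x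
      = - Psi G (B.erase u) ((W.erase u) ∩ G.neighborFinset u) x := by
    rw [Psi, ← Finset.sum_neg_distrib]
    refine Finset.sum_bij' (i := fun S _ => S.erase u) (j := fun S' _ => insert u S')
      ?_ ?_ ?_ ?_ ?_
    · intro S hS
      simp only [Finset.mem_filter, mem_cliqueFinsets] at hS
      obtain ⟨⟨hSW, hSc⟩, huS⟩ := hS
      rw [mem_cliqueFinsets]
      refine ⟨Finset.subset_inter (Finset.erase_subset_erase u hSW) ?_, ?_⟩
      · intro w hw
        rw [Finset.mem_erase] at hw
        rw [SimpleGraph.mem_neighborFinset]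
        exact hSc huS hw.2 (Ne.symm hw.1)
      · exact hSc.subset (by simp [Finset.erase_subset])
    · intro S' hS'
      rw [mem_cliqueFinsets] at hS'
      obtain ⟨hsub, hSc⟩ := hS'
      have h1 : S' ⊆ W.erase u := hsub.trans Finset.inter_subset_left
      have h2 : S' ⊆ G.neighborFinset u := hsub.trans Finset.inter_subset_right
      simp only [Finset.mem_filter, mem_cliqueFinsets]
      refine ⟨⟨?_, ?_⟩, Finset.mem_insert_self u S'⟩
      · exact Finset.insert_subset hu (h1.trans (Finset.erase_subset u W))
      · rw [Finset.coe_insert]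
        refine hSc.insert (fun b hb _ => ?_)
        rw [← SimpleGraph.mem_neighborFinset]
        exact h2 hb
    · intro S hS
      simp only [Finset.mem_filter] at hS
      exact Finset.insert_erase hS.2
    · intro S' hS'
      rw [mem_cliqueFinsets] at hS'
      have : u ∉ S' := fun h =>
        Finset.notMem_erase u W ((hS'.1.trans Finset.inter_subset_left) h)
      exact Finset.erase_insert this
    · intro S hS
      simp only [Finset.mem_filter] at hS
      obtain ⟨-, huS⟩ := hS
      have hcard : S.card = (S.erase u).card + 1 := by
        rw [Finset.card_erase_of_mem huS]
        have := Finset.card_pos.mpr ⟨u, huS⟩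
        omega
      have hsd : B \ S = (B.erase u) \ (S.erase u) := by
        ext w
        simp only [Finset.mem_sdiff, Finset.mem_erase]
        constructor
        · rintro ⟨hwB, hwS⟩
          exact ⟨⟨fun h => hwS (h ▸ huS), hwB⟩, fun h => hwS h.2⟩
        · rintro ⟨⟨hwu, hwB⟩, hwS⟩
          exact ⟨hwB, fun h => hwS ⟨hwu, h⟩⟩
      rw [hcard, hsd, pow_succ]
      ring
  have h0 : Psi G B W x = ∑ S ∈ cliqueFinsets G W, (-1 : ℝ) ^ S.card * phi G (B \ S) x := rfl
  have h2 : ∑ S ∈ (cliqueFinsets G W).filter (fun S => ¬ u ∈ S),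
      (-1 : ℝ) ^ S.card * phi G (B \ S) x = Psi G B (W.erase u) x := by
    rw [hnot]; rfl
  linarith [hsplit, h2, hyes, h0]

lemma psi_bounds {x r : ℝ} (hr0 : 0 ≤ r) :
    ∀ W B : Finset V, (W.card : ℝ) * r ≤ 1 →
      (∀ T ∈ W.powerset, 0 ≤ phi G (B \ T) x ∧
        ∀ u ∈ W, u ∉ T → phi G ((B \ T).erase u) x ≤ r * phi G (B \ T) x) →
      (1 - (W.card : ℝ) * r) * phi G B x ≤ Psi G B W x ∧ Psi G B W x ≤ phi G B x := by
  intro W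
  induction W using Finset.strongInduction with
  | _ W IH =>
    intro B hWr hyp
    have hphiB : 0 ≤ phi G B x := by
      have := (hyp ∅ (by simp)).1; rwa [Finset.sdiff_empty] at this
    rcases W.eq_empty_or_nonempty with rfl | ⟨u, hu⟩
    · rw [Psi_empty]
      simp
    · set W1 := W.erase u with hW1
      set W2 := W1 ∩ G.neighborFinset u with hW2
      have hW1ss : W1 ⊂ W := Finset.erase_ssubset hu
      have hW2ss : W2 ⊂ W := lt_of_le_of_lt Finset.inter_subset_left hW1ss
      have hcard : W.card = W1.card + 1 := by
        rw [hW1, Finset.card_erase_of_mem hu]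
        have := Finset.card_pos.mpr ⟨u, hu⟩
        omega
      have hc2 : W2.card ≤ W1.card := Finset.card_le_card Finset.inter_subset_left
      have hW1r : (W1.card : ℝ) * r ≤ 1 := by
        refine le_trans ?_ hWr
        have : (W1.card : ℝ) ≤ (W.card : ℝ) := by exact_mod_cast (by omega : W1.card ≤ W.card)
        nlinarith
      have hW2r : (W2.card : ℝ) * r ≤ 1 := by
        refine le_trans ?_ hW1r
        have : (W2.card : ℝ) ≤ (W1.card : ℝ) := by exact_mod_cast hc2
        nlinarith
      have hyp1 : ∀ T ∈ W1.powerset, 0 ≤ phi G (B \ T) x ∧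
          ∀ u' ∈ W1, u' ∉ T → phi G ((B \ T).erase u') x ≤ r * phi G (B \ T) x := by
        intro T hT
        rw [Finset.mem_powerset] at hT
        have hTW : T ∈ W.powerset :=
          Finset.mem_powerset.mpr (hT.trans (Finset.erase_subset u W))
        exact ⟨(hyp T hTW).1,
          fun u' hu' hu'T => (hyp T hTW).2 u' (Finset.mem_of_mem_erase hu') hu'T⟩
      have hyp2 : ∀ T ∈ W2.powerset, 0 ≤ phi G ((B.erase u) \ T) x ∧
          ∀ u' ∈ W2, u' ∉ T →
            phi G (((B.erase u) \ T).erase u') x ≤ r * phi G ((B.erase u) \ T) x := by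
        intro T hT
        rw [Finset.mem_powerset] at hT
        have hTW1 : T ⊆ W1 := hT.trans Finset.inter_subset_left
        have hkey : (B.erase u) \ T = B \ (insert u T) := by
          ext w
          simp only [Finset.mem_sdiff, Finset.mem_erase, Finset.mem_insert, not_or]
          tauto
        have hins : insert u T ∈ W.powerset := Finset.mem_powerset.mpr
          (Finset.insert_subset hu (hTW1.trans (Finset.erase_subset u W)))
        constructor
        · rw [hkey]; exact (hyp _ hins).1
        · intro u' hu' hu'T
          have hu'W1 : u' ∈ W1 := Finset.inter_subset_left hu'
          rw [hkey]
          exact (hyp _ hins).2 u' (Finset.mem_of_mem_erase hu'W1)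
            (by
              rw [Finset.mem_insert, not_or]
              exact ⟨Finset.ne_of_mem_erase hu'W1, hu'T⟩)
      have IH1 := IH W1 hW1ss B hW1r hyp1
      have IH2 := IH W2 hW2ss (B.erase u) hW2r hyp2
      have hrec := Psi_rec G (B := B) (x := x) hu
      have hphiBu : phi G (B.erase u) x ≤ r * phi G B x := by
        have := (hyp ∅ (by simp)).2 u hu (Finset.notMem_empty u)
        rwa [Finset.sdiff_empty] at this
      have hphiBu0 : 0 ≤ phi G (B.erase u) x := by
        have := (hyp {u} (Finset.mem_powerset.mpr (Finset.singleton_subset_iff.mpr hu))).1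
        rwa [Finset.sdiff_singleton_eq_erase] at this
      have hcast : (W.card : ℝ) = (W1.card : ℝ) + 1 := by exact_mod_cast hcard
      have h2lb : 0 ≤ Psi G (B.erase u) W2 x := by
        refine le_trans ?_ IH2.1
        have : 0 ≤ 1 - (W2.card : ℝ) * r := by linarith
        exact mul_nonneg this hphiBu0
      constructor
      · -- lower bound
        rw [hrec]
        have h2u : Psi G (B.erase u) W2 x ≤ phi G (B.erase u) x := IH2.2
        have h1l : (1 - (W1.card : ℝ) * r) * phi G B x ≤ Psi G B W1 x := IH1.1
        have : Psi G (B.erase u) W2 x ≤ r * phi G B x := le_trans h2u hphiBu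
        rw [hcast]
        nlinarith
      · -- upper bound
        rw [hrec]
        linarith [IH1.2]

lemma main (D : ℕ) (hD : 2 ≤ D) (hdeg : ∀ v : V, G.degree v ≤ D)
    {x : ℝ} (hx : 4 * ((D : ℝ) - 1) < x) :
    ∀ A : Finset V, 0 < phi G A x ∧
      ∀ v ∈ A, (G.neighborFinset v ∩ A).card ≤ D - 1 →
        phi G (A.erase v) x ≤ (2 / x) * phi G A x := by
  have hD2 : (2 : ℝ) ≤ (D : ℝ) := by exact_mod_cast hD
  have hx4 : (4 : ℝ) < x := by linarith
  have hx0 : (0 : ℝ) < x := by linarith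
  have hr0 : (0 : ℝ) ≤ 2 / x := by positivity
  have hDx : 2 * (D : ℝ) < x := by linarith
  intro A
  induction A using Finset.strongInduction with
  | _ A IH =>
    have core : ∀ v ∈ A,
        (1 - ((G.neighborFinset v ∩ A).card : ℝ) * (2 / x)) * phi G (A.erase v) x
          ≤ Psi G (A.erase v) (G.neighborFinset v ∩ A) x
        ∧ Psi G (A.erase v) (G.neighborFinset v ∩ A) x ≤ phi G (A.erase v) x := by
      intro v hv
      have hWD : ((G.neighborFinset v ∩ A).card : ℝ) ≤ (D : ℝ) := by
        exact_mod_cast le_trans (Finset.card_le_card Finset.inter_subset_left) (hdeg v)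
      apply psi_bounds G hr0
      · calc ((G.neighborFinset v ∩ A).card : ℝ) * (2 / x)
            ≤ (D : ℝ) * (2 / x) := mul_le_mul_of_nonneg_right hWD hr0
          _ ≤ 1 := by rw [mul_div_assoc', div_le_one hx0]; linarith
      · intro T hT
        rw [Finset.mem_powerset] at hT
        have hss : (A.erase v) \ T ⊂ A :=
          lt_of_le_of_lt Finset.sdiff_subset (Finset.erase_ssubset hv)
        have hP := IH _ hss
        refine ⟨le_of_lt hP.1, ?_⟩
        intro u huW huT
        have huNv : u ∈ G.neighborFinset v := (Finset.mem_inter.mp huW).1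
        have hadj : G.Adj v u := by rwa [SimpleGraph.mem_neighborFinset] at huNv
        have huA : u ∈ (A.erase v) \ T := by
          rw [Finset.mem_sdiff, Finset.mem_erase]
          exact ⟨⟨hadj.ne', (Finset.mem_inter.mp huW).2⟩, huT⟩
        apply hP.2 u huA
        have hvNu : v ∈ G.neighborFinset u := by
          rw [SimpleGraph.mem_neighborFinset]; exact hadj.symm
        have hsub : G.neighborFinset u ∩ ((A.erase v) \ T) ⊆ (G.neighborFinset u).erase v := by
          intro w hw
          rw [Finset.mem_inter, Finset.mem_sdiff, Finset.mem_erase] at hw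
          rw [Finset.mem_erase]
          exact ⟨hw.2.1.1, hw.1⟩
        calc (G.neighborFinset u ∩ ((A.erase v) \ T)).card
            ≤ ((G.neighborFinset u).erase v).card := Finset.card_le_card hsub
          _ = G.degree u - 1 := by rw [Finset.card_erase_of_mem hvNu]; rfl
          _ ≤ D - 1 := Nat.sub_le_sub_right (hdeg u) 1
    constructor
    · rcases A.eq_empty_or_nonempty with rfl | ⟨v, hv⟩
      · rw [phi_empty]; norm_num
      · rw [phi_eq_psi G hv x]
        have hpos : 0 < phi G (A.erase v) x := (IH _ (Finset.erase_ssubset hv)).1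
        have h := (core v hv).1
        have hWD : ((G.neighborFinset v ∩ A).card : ℝ) ≤ (D : ℝ) := by
          exact_mod_cast le_trans (Finset.card_le_card Finset.inter_subset_left) (hdeg v)
        have hfac : 0 < 1 - ((G.neighborFinset v ∩ A).card : ℝ) * (2 / x) := by
          have h1 : ((G.neighborFinset v ∩ A).card : ℝ) * (2 / x) ≤ (D : ℝ) * (2 / x) :=
            mul_le_mul_of_nonneg_right hWD hr0
          have h2 : (D : ℝ) * (2 / x) < 1 := by
            rw [mul_div_assoc', div_lt_one hx0]; linarith
          linarith
        have : 0 < Psi G (A.erase v) (G.neighborFinset v ∩ A) x :=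
          lt_of_lt_of_le (mul_pos hfac hpos) h
        exact mul_pos hx0 this
    · intro v hv hdv
      rw [phi_eq_psi G hv x]
      have hpos : 0 < phi G (A.erase v) x := (IH _ (Finset.erase_ssubset hv)).1
      have h := (core v hv).1
      have hcast : ((G.neighborFinset v ∩ A).card : ℝ) ≤ (D : ℝ) - 1 := by
        have h1 : ((G.neighborFinset v ∩ A).card : ℝ) ≤ ((D - 1 : ℕ) : ℝ) := by
          exact_mod_cast hdv
        rwa [Nat.cast_sub (by omega), Nat.cast_one] at h1
      have h1 : ((D : ℝ) - 1) * (2 / x) ≤ 1 / 2 := by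
        rw [mul_div_assoc', div_le_div_iff₀ hx0 (by norm_num)]
        linarith
      have h2 : ((G.neighborFinset v ∩ A).card : ℝ) * (2 / x) ≤ ((D : ℝ) - 1) * (2 / x) :=
        mul_le_mul_of_nonneg_right hcast hr0
      have h3 : (1 / 2 : ℝ) * phi G (A.erase v) x
          ≤ Psi G (A.erase v) (G.neighborFinset v ∩ A) x := by
        have h5 : (1 / 2 : ℝ) ≤ 1 - ((G.neighborFinset v ∩ A).card : ℝ) * (2 / x) := by
          linarith
        exact le_trans (mul_le_mul_of_nonneg_right h5 hpos.le) h
      have hrw : (2 / x) * (x * Psi G (A.erase v) (G.neighborFinset v ∩ A) x)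
          = 2 * Psi G (A.erase v) (G.neighborFinset v ∩ A) x := by
        field_simp
      rw [hrw]
      linarith

lemma adjPoly_eval (x : ℝ) : (adjPoly G).eval x = phi G Finset.univ x := by
  rw [adjPoly, phi, Finset.card_univ, Polynomial.eval_finset_sum]
  refine Finset.sum_congr rfl (fun k hk => ?_)
  rw [Finset.mem_range] at hk
  have hnum : numCliqueCovers G k = cc G Finset.univ k := rfl
  have hsign : (-1 : ℝ) ^ (Fintype.card V - k) = (-1 : ℝ) ^ (Fintype.card V + k) := by
    have h : Fintype.card V + k = (Fintype.card V - k) + 2 * k := by omega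
    rw [h, pow_add, pow_mul, neg_one_sq, one_pow, mul_one]
  simp [hsign, hnum, mul_assoc]

end Stmt16Aux


/-- for connected `G` with at least one edge and maximum degree `Δ ≥ 2`,
the largest real zero of the adjoint polynomial satisfies `γ(G) ≤ 4(Δ - 1)`. -/
theorem stmt16 {V : Type*} [Fintype V] [DecidableEq V] (G : SimpleGraph V)
    [DecidableRel G.Adj] (hc : G.Connected) (he : ∃ a b, G.Adj a b)
    (hD : 2 ≤ G.maxDegree) (g : ℝ) (hg : IsGammaZero (adjPoly G) g) :
    g ≤ 4 * ((G.maxDegree : ℝ) - 1) := by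
  by_contra hlt
  push_neg at hlt
  have hdeg : ∀ v, G.degree v ≤ G.maxDegree := fun v => G.degree_le_maxDegree v
  have hmain := (Stmt16Aux.main G G.maxDegree hD hdeg hlt Finset.univ).1
  rw [← Stmt16Aux.adjPoly_eval] at hmain
  rw [hg.1] at hmain
  exact lt_irrefl 0 hmain
end

section
/- Let G be a connected graph with at least one edge and H a proper subgraph of G with at least one edge. Then γ(H) < γ(G), where γ denotes the largest real zero of the adjoint polynomial. -/
open Polynomial

namespace S17

set_option linter.unusedSectionVars false

open Finset
open scoped Classical

variable {V : Type*} [Fintype V] [DecidableEq V]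

/-- `S` is a collection of pairwise disjoint cliques of `G`, each of size ≥ 2, inside `U`. -/
def OkS (G : SimpleGraph V) (U : Finset V) (S : Finset (Finset V)) : Prop :=
  (∀ C ∈ S, C ⊆ U ∧ 2 ≤ C.card ∧ G.IsClique (C : Set V)) ∧
    (S : Set (Finset V)).PairwiseDisjoint id

noncomputable def okF (G : SimpleGraph V) (U : Finset V) : Finset (Finset (Finset V)) :=
  Finset.univ.filter (fun S => OkS G U S)

/-- The clique partition function. -/
noncomputable def Zc (G : SimpleGraph V) (U : Finset V) (x : ℝ) : ℝ :=
  ∑ S ∈ okF G U, ∏ C ∈ S, (-x) ^ (C.card - 1)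

lemma mem_okF {G : SimpleGraph V} {U : Finset V} {S : Finset (Finset V)} :
    S ∈ okF G U ↔ OkS G U S := by simp [okF]

lemma Zc_continuous (G : SimpleGraph V) (U : Finset V) : Continuous (fun x => Zc G U x) := by
  apply continuous_finset_sum
  intro S _
  exact continuous_finset_prod _ (fun C _ => (continuous_id.neg).pow _)

lemma Zc_congr {G G' : SimpleGraph V} (U : Finset V) (x : ℝ)
    (h : ∀ C : Finset V, C ⊆ U → 2 ≤ C.card →
      (G.IsClique (C : Set V) ↔ G'.IsClique (C : Set V))) :
    Zc G U x = Zc G' U x := by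
  have : okF G U = okF G' U := by
    ext S
    simp only [mem_okF, OkS]
    constructor
    · rintro ⟨h1, h2⟩
      exact ⟨fun C hC => ⟨(h1 C hC).1, (h1 C hC).2.1,
        (h C (h1 C hC).1 (h1 C hC).2.1).mp (h1 C hC).2.2⟩, h2⟩
    · rintro ⟨h1, h2⟩
      exact ⟨fun C hC => ⟨(h1 C hC).1, (h1 C hC).2.1,
        (h C (h1 C hC).1 (h1 C hC).2.1).mpr (h1 C hC).2.2⟩, h2⟩
  rw [Zc, this, Zc]

lemma isClique_congr {G G' : SimpleGraph V} {C : Finset V}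
    (h : ∀ a ∈ C, ∀ b ∈ C, a ≠ b → (G.Adj a b ↔ G'.Adj a b)) :
    G.IsClique (C : Set V) ↔ G'.IsClique (C : Set V) := by
  simp only [SimpleGraph.isClique_iff, Set.Pairwise]
  constructor
  · intro hp a ha b hb hab
    exact (h a ha b hb hab).mp (hp ha hb hab)
  · intro hp a ha b hb hab
    exact (h a ha b hb hab).mpr (hp ha hb hab)

/-- if `v` has no `G`-neighbour inside `U` then it can be dropped from the ground set. -/
lemma Zc_isolated {G : SimpleGraph V} {U : Finset V} {v : V}
    (h : ∀ w ∈ U, ¬ G.Adj v w) (x : ℝ) :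
    Zc G U x = Zc G (U.erase v) x := by
  have : okF G U = okF G (U.erase v) := by
    ext S
    simp only [mem_okF, OkS]
    constructor
    · rintro ⟨h1, h2⟩
      refine ⟨fun C hC => ⟨?_, (h1 C hC).2.1, (h1 C hC).2.2⟩, h2⟩
      obtain ⟨hCU, hcard, hclique⟩ := h1 C hC
      rw [Finset.subset_erase]
      refine ⟨hCU, fun hvC => ?_⟩
      obtain ⟨w, hw, hwv⟩ := Finset.exists_mem_ne (s := C) (by omega) v
      exact h w (hCU hw) (hclique hvC hw (Ne.symm hwv))
    · rintro ⟨h1, h2⟩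
      exact ⟨fun C hC => ⟨(h1 C hC).1.trans (Finset.erase_subset _ _),
        (h1 C hC).2.1, (h1 C hC).2.2⟩, h2⟩
  rw [Zc, this, Zc]

lemma Zc_empty (G : SimpleGraph V) (x : ℝ) : Zc G ∅ x = 1 := by
  have : okF G ∅ = {∅} := by
    ext S
    simp only [mem_okF, OkS, Finset.mem_singleton]
    constructor
    · rintro ⟨h1, _⟩
      by_contra hS
      obtain ⟨C, hC⟩ := Finset.nonempty_iff_ne_empty.mpr hS
      obtain ⟨hCU, hcard, _⟩ := h1 C hC
      rw [Finset.subset_empty] at hCU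
      subst hCU
      simp at hcard
    · rintro rfl
      exact ⟨by simp, by simp⟩
  rw [Zc, this]; simp

lemma Zc_at_zero (G : SimpleGraph V) (U : Finset V) : Zc G U 0 = 1 := by
  rw [Zc]
  rw [Finset.sum_eq_single (∅ : Finset (Finset V))]
  · simp
  · intro S hS hSne
    obtain ⟨C, hC⟩ := Finset.nonempty_iff_ne_empty.mpr hSne
    apply Finset.prod_eq_zero hC
    have := ((mem_okF.mp hS).1 C hC).2.1
    have h1 : 1 ≤ C.card - 1 := by omega
    simp [zero_pow (by omega : C.card - 1 ≠ 0)]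
  · intro h
    exact absurd (mem_okF.mpr ⟨by simp, by simp⟩) h

noncomputable def cliquesAt (G : SimpleGraph V) (U : Finset V) (v : V) : Finset (Finset V) :=
  Finset.univ.filter (fun C => v ∈ C ∧ C ⊆ U ∧ 2 ≤ C.card ∧ G.IsClique (C : Set V))

lemma mem_cliquesAt {G : SimpleGraph V} {U : Finset V} {v : V} {C : Finset V} :
    C ∈ cliquesAt G U v ↔ v ∈ C ∧ C ⊆ U ∧ 2 ≤ C.card ∧ G.IsClique (C : Set V) := by
  simp [cliquesAt]

noncomputable def theC (v : V) (S : Finset (Finset V)) : Finset V :=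
  (S.filter (fun C => v ∈ C)).sup id

lemma theC_spec {v : V} {S : Finset (Finset V)}
    (hpd : (S : Set (Finset V)).PairwiseDisjoint id)
    {C₀ : Finset V} (hC₀ : C₀ ∈ S) (hv : v ∈ C₀) :
    theC v S = C₀ := by
  have hfil : S.filter (fun C => v ∈ C) = {C₀} := by
    ext D
    simp only [Finset.mem_filter, Finset.mem_singleton]
    constructor
    · rintro ⟨hD, hvD⟩
      by_contra hne
      have hdisj := hpd (Finset.mem_coe.mpr hD) (Finset.mem_coe.mpr hC₀) hne
      exact (Finset.disjoint_left.mp hdisj) hvD hv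
    · rintro rfl; exact ⟨hC₀, hv⟩
  rw [theC, hfil, Finset.sup_singleton]
  rfl

/-- master splitting lemma for sums over systems containing a marked clique. -/
theorem Zc_marked (G : SimpleGraph V) (U : Finset V) (v : V) (M : Finset V → Prop)
    (hM : ∀ C, M C → v ∈ C)
    (A : Finset (Finset (Finset V)))
    (hA : ∀ S, S ∈ A ↔ S ∈ okF G U ∧ ∃ C ∈ S, M C)
    (B : Finset (Finset V))
    (hB : ∀ C, C ∈ B ↔ M C ∧ C ⊆ U ∧ 2 ≤ C.card ∧ G.IsClique (C : Set V)) (x : ℝ) :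
    ∑ S ∈ A, ∏ D ∈ S, (-x) ^ (D.card - 1)
      = ∑ C ∈ B, (-x) ^ (C.card - 1) * Zc G (U \ C) x := by
  classical
  have hrw : ∀ C ∈ B,
      (-x) ^ (C.card - 1) * Zc G (U \ C) x
        = ∑ S' ∈ okF G (U \ C), ∏ D ∈ insert C S', (-x) ^ (D.card - 1) := by
    intro C hC
    rw [hB] at hC
    rw [Zc, Finset.mul_sum]
    apply Finset.sum_congr rfl
    intro S' hS'
    rw [Finset.prod_insert]
    intro hmem
    have h1 := ((mem_okF.mp hS').1 C hmem).1
    have hvC := hM C hC.1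
    exact (Finset.mem_sdiff.mp (h1 hvC)).2 hvC
  rw [Finset.sum_congr rfl hrw, Finset.sum_sigma']
  symm
  apply Finset.sum_nbij' (i := fun P => insert P.1 P.2)
    (j := fun S => ⟨theC v S, S.erase (theC v S)⟩)
  · -- hi
    rintro ⟨C, S'⟩ hP
    rw [Finset.mem_sigma] at hP
    obtain ⟨hC, hS'⟩ := hP
    rw [hB] at hC
    obtain ⟨hMC, hCU, hCcard, hCcl⟩ := hC
    obtain ⟨h1, h2⟩ := mem_okF.mp hS'
    have hCS' : C ∉ S' := by
      intro hmem
      have hvC := hM C hMC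
      exact (Finset.mem_sdiff.mp ((h1 C hmem).1 hvC)).2 hvC
    rw [hA]
    refine ⟨mem_okF.mpr ⟨?_, ?_⟩, ⟨C, Finset.mem_insert_self _ _, hMC⟩⟩
    · intro D hD
      rcases Finset.mem_insert.mp hD with rfl | hD'
      · exact ⟨hCU, hCcard, hCcl⟩
      · exact ⟨((h1 D hD').1).trans (Finset.sdiff_subset), (h1 D hD').2.1, (h1 D hD').2.2⟩
    · rw [Finset.coe_insert]
      apply Set.PairwiseDisjoint.insert h2
      intro D hD hne
      have hsub := (h1 D (Finset.mem_coe.mp hD)).1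
      exact ((Finset.subset_sdiff.mp hsub).2).symm.symm |>.symm
  · -- hj
    intro S hS
    rw [hA] at hS
    obtain ⟨hSok, C₀, hC₀S, hMC₀⟩ := hS
    obtain ⟨h1, h2⟩ := mem_okF.mp hSok
    have hv₀ := hM C₀ hMC₀
    have hth : theC v S = C₀ := theC_spec h2 hC₀S hv₀
    rw [Finset.mem_sigma, hth]
    constructor
    · rw [hB]
      exact ⟨hMC₀, (h1 C₀ hC₀S).1, (h1 C₀ hC₀S).2.1, (h1 C₀ hC₀S).2.2⟩
    · rw [mem_okF]
      refine ⟨?_, h2.subset (by simp [Finset.erase_subset])⟩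
      intro D hD
      have hDS := Finset.mem_of_mem_erase hD
      have hne := Finset.ne_of_mem_erase hD
      refine ⟨Finset.subset_sdiff.mpr ⟨(h1 D hDS).1, ?_⟩, (h1 D hDS).2.1, (h1 D hDS).2.2⟩
      exact h2 (Finset.mem_coe.mpr hDS) (Finset.mem_coe.mpr hC₀S) hne
  · -- left : j (i P) = P
    rintro ⟨C, S'⟩ hP
    rw [Finset.mem_sigma] at hP
    obtain ⟨hC, hS'⟩ := hP
    rw [hB] at hC
    obtain ⟨hMC, hCU, hCcard, hCcl⟩ := hC
    obtain ⟨h1, h2⟩ := mem_okF.mp hS'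
    have hvC := hM C hMC
    have hCS' : C ∉ S' := by
      intro hmem
      exact (Finset.mem_sdiff.mp ((h1 C hmem).1 hvC)).2 hvC
    have hpd : ((insert C S' : Finset (Finset V)) : Set (Finset V)).PairwiseDisjoint id := by
      rw [Finset.coe_insert]
      apply Set.PairwiseDisjoint.insert h2
      intro D hD hne
      exact (Finset.subset_sdiff.mp (h1 D (Finset.mem_coe.mp hD)).1).2.symm
    have hth : theC v (insert C S') = C :=
      theC_spec hpd (Finset.mem_insert_self _ _) hvC
    show (⟨theC v (insert C S'), (insert C S').erase (theC v (insert C S'))⟩ :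
        Σ _ : Finset V, Finset (Finset V)) = ⟨C, S'⟩
    rw [hth, Finset.erase_insert hCS']
  · -- right : i (j S) = S
    intro S hS
    rw [hA] at hS
    obtain ⟨hSok, C₀, hC₀S, hMC₀⟩ := hS
    obtain ⟨-, h2⟩ := mem_okF.mp hSok
    have hth : theC v S = C₀ := theC_spec h2 hC₀S (hM C₀ hMC₀)
    simp only [hth]
    exact Finset.insert_erase hC₀S
  · -- weights
    rintro ⟨C, S'⟩ _
    rfl

/-- The fundamental vertex recursion. -/
theorem Zc_split (G : SimpleGraph V) (U : Finset V) (v : V) (x : ℝ) :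
    Zc G U x = Zc G (U.erase v) x
      + ∑ C ∈ cliquesAt G U v, (-x) ^ (C.card - 1) * Zc G (U \ C) x := by
  classical
  conv_lhs => rw [Zc]
  rw [← Finset.sum_filter_add_sum_filter_not (okF G U) (fun S => ∃ C ∈ S, v ∈ C)]
  rw [add_comm]
  congr 1
  · have heq : (okF G U).filter (fun S => ¬ ∃ C ∈ S, v ∈ C) = okF G (U.erase v) := by
      ext S
      simp only [Finset.mem_filter, mem_okF, OkS, not_exists, not_and]
      constructor
      · rintro ⟨⟨h1, h2⟩, h3⟩
        refine ⟨fun C hC => ⟨Finset.subset_erase.mpr ⟨(h1 C hC).1, ?_⟩,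
          (h1 C hC).2.1, (h1 C hC).2.2⟩, h2⟩
        exact h3 C hC
      · rintro ⟨h1, h2⟩
        refine ⟨⟨fun C hC => ⟨(Finset.subset_erase.mp (h1 C hC).1).1,
          (h1 C hC).2.1, (h1 C hC).2.2⟩, h2⟩, ?_⟩
        exact fun C hC => (Finset.subset_erase.mp (h1 C hC).1).2
    rw [heq, Zc]
  · apply Zc_marked G U v (fun C => v ∈ C) (fun C h => h)
    · intro S
      rw [Finset.mem_filter]
    · intro C
      rw [mem_cliquesAt]

/-- Phantom graph: delete `q` and all its edges, and restrict `p`'s neighbourhood to the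
common neighbourhood of `p` and `q`. -/
def phG (G : SimpleGraph V) (p q : V) : SimpleGraph V where
  Adj a b :=
    (G.Adj a b ∧ a ≠ p ∧ a ≠ q ∧ b ≠ p ∧ b ≠ q) ∨
    (a = p ∧ b ≠ p ∧ b ≠ q ∧ G.Adj p b ∧ G.Adj q b) ∨
    (b = p ∧ a ≠ p ∧ a ≠ q ∧ G.Adj p a ∧ G.Adj q a)
  symm := by
    constructor
    intro a b h
    rcases h with ⟨h1, h2, h3, h4, h5⟩ | h | h
    · exact Or.inl ⟨h1.symm, h4, h5, h2, h3⟩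
    · exact Or.inr (Or.inr h)
    · exact Or.inr (Or.inl h)
  loopless := by
    constructor
    intro a h
    rcases h with ⟨h1, _⟩ | ⟨rfl, h2, _⟩ | ⟨rfl, h2, _⟩
    · exact h1.ne rfl
    · exact h2 rfl
    · exact h2 rfl

lemma phG_le (G : SimpleGraph V) (p q : V) : phG G p q ≤ G := by
  intro a b h
  rcases h with ⟨h1, _⟩ | ⟨rfl, _, _, h4, _⟩ | ⟨rfl, _, _, h4, _⟩
  · exact h1
  · exact h4
  · exact h4.symm

lemma phG_not_adj_q (G : SimpleGraph V) (p q : V) (hne : p ≠ q) (b : V) :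
    ¬ (phG G p q).Adj q b := by
  rintro (⟨_, _, h, _, _⟩ | ⟨h, _⟩ | ⟨_, _, h, _, _⟩)
  · exact h rfl
  · exact hne h.symm
  · exact h rfl

lemma phG_adj_off {G : SimpleGraph V} {p q a b : V}
    (ha : a ≠ p) (ha' : a ≠ q) (hb : b ≠ p) (hb' : b ≠ q) :
    (phG G p q).Adj a b ↔ G.Adj a b := by
  constructor
  · rintro (⟨h1, _⟩ | ⟨rfl, _⟩ | ⟨rfl, _⟩)
    · exact h1
    · exact absurd rfl ha
    · exact absurd rfl hb
  · intro h
    exact Or.inl ⟨h, ha, ha', hb, hb'⟩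

lemma phG_adj_p {G : SimpleGraph V} {p q b : V} (h : (phG G p q).Adj p b) :
    G.Adj p b ∧ G.Adj q b := by
  rcases h with ⟨_, h2, _⟩ | ⟨_, _, _, h4, h5⟩ | ⟨rfl, h2, _⟩
  · exact absurd rfl h2
  · exact ⟨h4, h5⟩
  · exact absurd rfl h2

/-- The edge deletion formula. -/
theorem Zc_deleteEdge (G : SimpleGraph V) (p q : V) (hpq : G.Adj p q) (U : Finset V)
    (hp : p ∈ U) (hq : q ∈ U) (x : ℝ) :
    Zc (G.deleteEdges {s(p,q)}) U x = Zc G U x + x * Zc (phG G p q) (U.erase q) x := by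
  classical
  have hne : p ≠ q := hpq.ne
  have hok : okF (G.deleteEdges {s(p,q)}) U
      = (okF G U).filter (fun S => ¬ ∃ C ∈ S, p ∈ C ∧ q ∈ C) := by
    ext S
    rw [Finset.mem_filter, mem_okF, mem_okF]
    unfold OkS
    constructor
    · rintro ⟨h1, h2⟩
      refine ⟨⟨fun C hC => ⟨(h1 C hC).1, (h1 C hC).2.1, ?_⟩, h2⟩, ?_⟩
      · intro a ha b hb hab
        exact (SimpleGraph.deleteEdges_adj.mp ((h1 C hC).2.2 ha hb hab)).1
      · rintro ⟨C, hC, hpC, hqC⟩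
        have h3 := (h1 C hC).2.2 (Finset.mem_coe.mpr hpC) (Finset.mem_coe.mpr hqC) hne
        rw [SimpleGraph.deleteEdges_adj] at h3
        exact h3.2 rfl
    · rintro ⟨⟨h1, h2⟩, h3⟩
      refine ⟨fun C hC => ⟨(h1 C hC).1, (h1 C hC).2.1, ?_⟩, h2⟩
      intro a ha b hb hab
      rw [SimpleGraph.deleteEdges_adj]
      refine ⟨(h1 C hC).2.2 ha hb hab, fun hmem => h3 ?_⟩
      rw [Set.mem_singleton_iff, Sym2.eq_iff] at hmem
      rcases hmem with ⟨rfl, rfl⟩ | ⟨rfl, rfl⟩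
      · exact ⟨C, hC, Finset.mem_coe.mp ha, Finset.mem_coe.mp hb⟩
      · exact ⟨C, hC, Finset.mem_coe.mp hb, Finset.mem_coe.mp ha⟩
  set BothF := Finset.univ.filter
      (fun C => (p ∈ C ∧ q ∈ C) ∧ C ⊆ U ∧ 2 ≤ C.card ∧ G.IsClique (C : Set V)) with hBothF
  have hmarked := Zc_marked G U p (fun C => p ∈ C ∧ q ∈ C) (fun C h => h.1)
    ((okF G U).filter (fun S => ∃ C ∈ S, p ∈ C ∧ q ∈ C))
    (fun S => Finset.mem_filter)
    BothF
    (fun C => by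
      rw [hBothF, Finset.mem_filter]
      exact ⟨fun h => h.2, fun h => ⟨Finset.mem_univ _, h⟩⟩) x
  have hkey : ∑ C ∈ BothF, (-x) ^ (C.card - 1) * Zc G (U \ C) x
      = -x * Zc (phG G p q) (U.erase q) x := by
    rw [Zc_split (phG G p q) (U.erase q) p x]
    have hg1 : Zc (phG G p q) ((U.erase q).erase p) x = Zc G ((U.erase q).erase p) x := by
      apply Zc_congr
      intro C hCU _
      apply isClique_congr
      intro a ha b hb hab
      have h1 : a ≠ p := Finset.ne_of_mem_erase (hCU ha)
      have h2 : a ≠ q := Finset.ne_of_mem_erase (Finset.mem_of_mem_erase (hCU ha))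
      have h3 : b ≠ p := Finset.ne_of_mem_erase (hCU hb)
      have h4 : b ≠ q := Finset.ne_of_mem_erase (Finset.mem_of_mem_erase (hCU hb))
      exact phG_adj_off h1 h2 h3 h4
    have hg2 : ∀ C' ∈ cliquesAt (phG G p q) (U.erase q) p,
        (-x) ^ (C'.card - 1) * Zc (phG G p q) ((U.erase q) \ C') x
          = (-x) ^ (C'.card - 1) * Zc G ((U.erase q) \ C') x := by
      intro C' hC'
      obtain ⟨hpC', hC'U, -, -⟩ := mem_cliquesAt.mp hC'
      congr 1
      apply Zc_congr
      intro C hCU _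
      apply isClique_congr
      intro a ha b hb hab
      have h2 : a ≠ q := Finset.ne_of_mem_erase (Finset.mem_sdiff.mp (hCU ha)).1
      have h1 : a ≠ p := fun h => (Finset.mem_sdiff.mp (hCU ha)).2 (h ▸ hpC')
      have h4 : b ≠ q := Finset.ne_of_mem_erase (Finset.mem_sdiff.mp (hCU hb)).1
      have h3 : b ≠ p := fun h => (Finset.mem_sdiff.mp (hCU hb)).2 (h ▸ hpC')
      exact phG_adj_off h1 h2 h3 h4
    rw [hg1, Finset.sum_congr rfl hg2]
    have hins : ({p} : Finset V) ∉ cliquesAt (phG G p q) (U.erase q) p := by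
      intro h
      have := (mem_cliquesAt.mp h).2.2.1
      simp at this
    have hsum : ∑ C ∈ BothF, (-x) ^ (C.card - 1) * Zc G (U \ C) x
        = ∑ C' ∈ insert ({p} : Finset V) (cliquesAt (phG G p q) (U.erase q) p),
            -x * ((-x) ^ (C'.card - 1) * Zc G ((U.erase q) \ C') x) := by
      apply Finset.sum_nbij' (i := fun C => C.erase q) (j := fun C' => insert q C')
      · -- i maps into target
        intro C hC
        rw [hBothF, Finset.mem_filter] at hC
        obtain ⟨-, ⟨hpC, hqC⟩, hCU, hcard, hclique⟩ := hC
        by_cases hC3 : 2 ≤ (C.erase q).card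
        · apply Finset.mem_insert_of_mem
          rw [mem_cliquesAt]
          refine ⟨Finset.mem_erase.mpr ⟨hne, hpC⟩, ?_, hC3, ?_⟩
          · exact Finset.erase_subset_erase q hCU
          · intro a ha b hb hab
            have haC : a ∈ C := Finset.mem_of_mem_erase (Finset.mem_coe.mp ha)
            have hbC : b ∈ C := Finset.mem_of_mem_erase (Finset.mem_coe.mp hb)
            have haq : a ≠ q := Finset.ne_of_mem_erase (Finset.mem_coe.mp ha)
            have hbq : b ≠ q := Finset.ne_of_mem_erase (Finset.mem_coe.mp hb)
            by_cases hap : a = p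
            · subst hap
              exact Or.inr (Or.inl ⟨rfl, (Ne.symm hab), hbq,
                hclique hpC hbC hab, hclique hqC hbC (Ne.symm hbq)⟩)
            · by_cases hbp : b = p
              · subst hbp
                exact Or.inr (Or.inr ⟨rfl, hap, haq,
                  hclique hpC haC (Ne.symm hab), hclique hqC haC (Ne.symm haq)⟩)
              · exact Or.inl ⟨hclique haC hbC hab, hap, haq, hbp, hbq⟩
        · have hpe : p ∈ C.erase q := Finset.mem_erase.mpr ⟨hne, hpC⟩
          have h1 : 0 < (C.erase q).card := Finset.card_pos.mpr ⟨p, hpe⟩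
          have h2 : (C.erase q).card = 1 := by omega
          obtain ⟨a, ha⟩ := Finset.card_eq_one.mp h2
          have : p = a := by rw [ha] at hpe; exact Finset.mem_singleton.mp hpe
          rw [ha, ← this]
          exact Finset.mem_insert_self _ _
      · -- j maps back
        intro C' hC'
        rw [hBothF, Finset.mem_filter]
        rcases Finset.mem_insert.mp hC' with rfl | hC'm
        · refine ⟨Finset.mem_univ _, ⟨?_, Finset.mem_insert_self _ _⟩, ?_, ?_, ?_⟩
          · exact Finset.mem_insert_of_mem (Finset.mem_singleton_self p)
          · intro a ha
            rcases Finset.mem_insert.mp ha with rfl | ha'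
            · exact hq
            · rw [Finset.mem_singleton.mp ha']; exact hp
          · rw [Finset.card_insert_of_notMem (by simp [Ne.symm hne]), Finset.card_singleton]
          · intro a ha b hb hab
            simp only [Finset.coe_insert, Set.mem_insert_iff, Finset.coe_singleton,
              Set.mem_singleton_iff] at ha hb
            rcases ha with rfl | rfl <;> rcases hb with rfl | rfl
            · exact absurd rfl hab
            · exact hpq.symm
            · exact hpq
            · exact absurd rfl hab
        · obtain ⟨hpC', hsubC', hcardC', hcliqueC'⟩ := mem_cliquesAt.mp hC'm
          have hqC' : q ∉ C' := fun h => Finset.notMem_erase q U (hsubC' h)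
          refine ⟨Finset.mem_univ _, ⟨Finset.mem_insert_of_mem hpC',
            Finset.mem_insert_self _ _⟩, ?_, ?_, ?_⟩
          · exact Finset.insert_subset hq (hsubC'.trans (Finset.erase_subset _ _))
          · have := Finset.card_le_card (Finset.subset_insert q C')
            omega
          · intro a ha b hb hab
            simp only [Finset.coe_insert, Set.mem_insert_iff] at ha hb
            rcases ha with rfl | haC' <;> rcases hb with rfl | hbC'
            · exact absurd rfl hab
            · by_cases hbp : b = p
              · subst hbp; exact hpq.symm
              · exact (phG_adj_p (hcliqueC' (Finset.mem_coe.mpr hpC')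
                  (Finset.mem_coe.mpr hbC') (Ne.symm hbp))).2
            · by_cases hap : a = p
              · subst hap; exact hpq
              · exact ((phG_adj_p (hcliqueC' (Finset.mem_coe.mpr hpC')
                  (Finset.mem_coe.mpr haC') (Ne.symm hap))).2).symm
            · exact phG_le G p q (hcliqueC' (Finset.mem_coe.mpr haC')
                (Finset.mem_coe.mpr hbC') hab)
      · -- left inverse
        intro C hC
        rw [hBothF, Finset.mem_filter] at hC
        exact Finset.insert_erase hC.2.1.2
      · -- right inverse
        intro C' hC'
        rcases Finset.mem_insert.mp hC' with rfl | hC'm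
        · exact Finset.erase_insert (by simp [Ne.symm hne])
        · obtain ⟨hpC', hsubC', -, -⟩ := mem_cliquesAt.mp hC'm
          exact Finset.erase_insert (fun h => Finset.notMem_erase q U (hsubC' h))
      · -- weights
        intro C hC
        rw [hBothF, Finset.mem_filter] at hC
        obtain ⟨-, ⟨hpC, hqC⟩, hCU, hcard, -⟩ := hC
        have hce : (C.erase q).card = C.card - 1 := Finset.card_erase_of_mem hqC
        have hg : (U.erase q) \ (C.erase q) = U \ C := by
          ext a
          simp only [Finset.mem_sdiff, Finset.mem_erase]
          constructor
          · rintro ⟨⟨haq, haU⟩, hnc⟩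
            exact ⟨haU, fun haC => hnc ⟨haq, haC⟩⟩
          · rintro ⟨haU, hnaC⟩
            have haq : a ≠ q := fun h => hnaC (h ▸ hqC)
            exact ⟨⟨haq, haU⟩, fun h => hnaC h.2⟩
        rw [hg]
        have he1 : C.card - 1 = (C.card - 2) + 1 := by omega
        have he2 : (C.erase q).card - 1 = C.card - 2 := by omega
        rw [he1, he2, pow_succ]
        ring
    rw [hsum, Finset.sum_insert hins, mul_add, Finset.mul_sum]
    congr 1
    simp [Finset.erase_eq]
  -- final assembly
  have htot := Finset.sum_filter_add_sum_filter_not (okF G U)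
      (fun S => ∃ C ∈ S, p ∈ C ∧ q ∈ C) (fun S => ∏ D ∈ S, (-x) ^ (D.card - 1))
  have hZ : Zc G U x = ∑ S ∈ okF G U, ∏ D ∈ S, (-x) ^ (D.card - 1) := rfl
  have hleft : Zc (G.deleteEdges {s(p,q)}) U x
      = ∑ S ∈ (okF G U).filter (fun S => ¬ ∃ C ∈ S, p ∈ C ∧ q ∈ C),
          ∏ D ∈ S, (-x) ^ (D.card - 1) := by
    rw [Zc, hok]
  rw [hleft]
  rw [hmarked, hkey] at htot
  rw [hZ]
  linarith [htot]

theorem Zc_deleteEdge_not (G : SimpleGraph V) (p q : V) (U : Finset V)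
    (h : ¬ (p ∈ U ∧ q ∈ U)) (x : ℝ) :
    Zc (G.deleteEdges {s(p,q)}) U x = Zc G U x := by
  apply Zc_congr
  intro C hCU hcard
  apply isClique_congr
  intro a ha b hb hab
  simp only [SimpleGraph.deleteEdges_adj, Set.mem_singleton_iff]
  constructor
  · rintro ⟨h1, _⟩; exact h1
  · intro h1
    refine ⟨h1, fun he => ?_⟩
    rw [Sym2.eq_iff] at he
    rcases he with ⟨rfl, rfl⟩ | ⟨rfl, rfl⟩
    · exact h ⟨hCU ha, hCU hb⟩
    · exact h ⟨hCU hb, hCU ha⟩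

/-- Positivity of all partition functions with ground sets inside `U`, for `y ∈ [0,x]`. -/
def PosP (G : SimpleGraph V) (U : Finset V) (x : ℝ) : Prop :=
  ∀ W ⊆ U, ∀ y : ℝ, 0 ≤ y → y ≤ x → 0 < Zc G W y

/-- `vDel G q`: delete all edges at `q`. -/
def vDel (G : SimpleGraph V) (q : V) : SimpleGraph V where
  Adj a b := G.Adj a b ∧ a ≠ q ∧ b ≠ q
  symm := by constructor; rintro a b ⟨h1, h2, h3⟩; exact ⟨h1.symm, h3, h2⟩
  loopless := by constructor; rintro a ⟨h1, _⟩; exact h1.ne rfl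

lemma Zc_vDel (G : SimpleGraph V) (q : V) (W : Finset V) (x : ℝ) :
    Zc (vDel G q) W x = Zc G (W.erase q) x := by
  rw [Zc_isolated (G := vDel G q) (v := q) (fun w _ hadj => hadj.2.1 rfl) x]
  apply Zc_congr
  intro C hCU _
  apply isClique_congr
  intro a ha b hb hab
  have haq : a ≠ q := Finset.ne_of_mem_erase (hCU ha)
  have hbq : b ≠ q := Finset.ne_of_mem_erase (hCU hb)
  constructor
  · rintro ⟨h1, _⟩; exact h1
  · intro h1; exact ⟨h1, haq, hbq⟩

lemma vDel_le (G : SimpleGraph V) (q : V) : vDel G q ≤ G := fun _ _ h => h.1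

lemma phG_le_vDel (G : SimpleGraph V) (p q : V) (hpq : p ≠ q) : phG G p q ≤ vDel G q := by
  intro a b h
  rcases h with ⟨h1, _, h3, _, h5⟩ | ⟨rfl, h2, h3, h4, h5⟩ | ⟨rfl, h2, h3, h4, h5⟩
  · exact ⟨h1, h3, h5⟩
  · exact ⟨h4, hpq, h3⟩
  · exact ⟨h4.symm, h3, hpq⟩

/-- Transfer of positivity to subgraphs. -/
theorem posTrans : ∀ n : ℕ, ∀ G K : SimpleGraph V, G.edgeSet.ncard ≤ n → K ≤ G →
    ∀ U : Finset V, ∀ x : ℝ, PosP G U x → PosP K U x := by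
  intro n
  induction n using Nat.strong_induction_on with
  | _ n IH =>
    intro G K hcard hKG U x hpos
    by_cases heq : K = G
    · rwa [heq]
    obtain ⟨p, q, hGpq, hKpq⟩ : ∃ p q, G.Adj p q ∧ ¬ K.Adj p q := by
      by_contra hno
      push_neg at hno
      exact heq (le_antisymm hKG (fun a b hab => hno a b hab))
    -- PosP for vDel G q
    have hvdel : PosP (vDel G q) U x := by
      intro W hW y hy hyx
      rw [Zc_vDel]
      exact hpos _ ((Finset.erase_subset _ _).trans hW) y hy hyx
    have hvcard : (vDel G q).edgeSet.ncard < G.edgeSet.ncard := by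
      apply Set.ncard_lt_ncard _ (Set.toFinite _)
      constructor
      · exact SimpleGraph.edgeSet_mono (vDel_le G q)
      · intro hsub
        have h1 : s(p,q) ∈ (vDel G q).edgeSet := hsub (G.mem_edgeSet.mpr hGpq)
        exact ((vDel G q).mem_edgeSet.mp h1).2.2 rfl
    have hph : PosP (phG G p q) U x :=
      IH _ (lt_of_lt_of_le hvcard hcard) (vDel G q) (phG G p q) (le_refl _)
        (phG_le_vDel G p q hGpq.ne) U x hvdel
    have hG1 : PosP (G.deleteEdges {s(p,q)}) U x := by
      intro W hW y hy hyx
      by_cases hb : p ∈ W ∧ q ∈ W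
      · rw [Zc_deleteEdge G p q hGpq W hb.1 hb.2 y]
        have h1 := hpos W hW y hy hyx
        have h2 := hph (W.erase q) ((Finset.erase_subset _ _).trans hW) y hy hyx
        have h3 : 0 ≤ y * Zc (phG G p q) (W.erase q) y := mul_nonneg hy h2.le
        linarith
      · rw [Zc_deleteEdge_not G p q W hb y]
        exact hpos W hW y hy hyx
    have hKle : K ≤ G.deleteEdges {s(p,q)} := by
      intro a b hab
      rw [SimpleGraph.deleteEdges_adj]
      refine ⟨hKG hab, fun hmem => hKpq ?_⟩
      rw [Set.mem_singleton_iff, Sym2.eq_iff] at hmem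
      rcases hmem with ⟨rfl, rfl⟩ | ⟨rfl, rfl⟩
      · exact hab
      · exact hab.symm
    have hdcard : (G.deleteEdges {s(p,q)}).edgeSet.ncard < n := by
      rw [SimpleGraph.edgeSet_deleteEdges]
      have h1 := Set.ncard_diff_singleton_lt_of_mem
        (G.mem_edgeSet.mpr hGpq) (Set.toFinite _)
      calc (G.edgeSet \ {s(p,q)}).ncard < G.edgeSet.ncard := h1
      _ ≤ n := hcard
    exact IH _ hdcard (G.deleteEdges {s(p,q)}) K (le_refl _) hKle U x hG1

noncomputable def beta (G : SimpleGraph V) (U : Finset V) : ℝ :=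
  sSup {x : ℝ | 0 ≤ x ∧ PosP G U x}

def HasEdgeIn (G : SimpleGraph V) (U : Finset V) : Prop :=
  ∃ p ∈ U, ∃ q ∈ U, G.Adj p q

lemma posP_zero (G : SimpleGraph V) (U : Finset V) : PosP G U 0 := by
  intro W _ y hy hy0
  have : y = 0 := le_antisymm hy0 hy
  rw [this, Zc_at_zero]; norm_num

lemma Zc_pair {G : SimpleGraph V} {p q : V} (hpq : G.Adj p q) (x : ℝ) :
    Zc G {p, q} x = 1 - x := by
  have hne : p ≠ q := hpq.ne
  have hcard : ({p, q} : Finset V).card = 2 := by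
    rw [Finset.card_insert_of_notMem (by simp [hne]), Finset.card_singleton]
  have hok : okF G {p, q} = {∅, {{p, q}}} := by
    ext S
    simp only [mem_okF, OkS, Finset.mem_insert, Finset.mem_singleton]
    constructor
    · rintro ⟨h1, -⟩
      have hsub : S ⊆ {({p, q} : Finset V)} := by
        intro C hC
        obtain ⟨hsubC, hcardC, -⟩ := h1 C hC
        rw [Finset.mem_singleton]
        exact Finset.eq_of_subset_of_card_le hsubC (by omega)
      exact Finset.subset_singleton_iff.mp hsub
    · rintro (rfl | rfl)
      · exact ⟨by simp, by simp⟩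
      · refine ⟨?_, by simp⟩
        intro C hC
        rw [Finset.mem_singleton] at hC
        subst hC
        refine ⟨le_refl _, by omega, ?_⟩
        intro a ha b hb hab
        simp only [Finset.coe_insert, Set.mem_insert_iff, Finset.coe_singleton,
          Set.mem_singleton_iff] at ha hb
        rcases ha with rfl | rfl <;> rcases hb with rfl | rfl
        · exact absurd rfl hab
        · exact hpq
        · exact hpq.symm
        · exact absurd rfl hab
  rw [Zc, hok, Finset.sum_pair (Ne.symm (Finset.singleton_ne_empty _))]
  rw [Finset.prod_empty, Finset.prod_singleton, hcard]
  ring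

lemma betaSet_nonempty (G : SimpleGraph V) (U : Finset V) :
    {x : ℝ | 0 ≤ x ∧ PosP G U x}.Nonempty :=
  ⟨0, le_refl _, posP_zero G U⟩

lemma betaSet_bdd {G : SimpleGraph V} {U : Finset V} (h : HasEdgeIn G U) :
    ∀ x ∈ {x : ℝ | 0 ≤ x ∧ PosP G U x}, x ≤ 1 := by
  rintro x ⟨hx0, hx⟩
  by_contra hx1
  push_neg at hx1
  obtain ⟨p, hp, q, hq, hpq⟩ := h
  have hsub : ({p, q} : Finset V) ⊆ U := by
    intro a ha; rcases Finset.mem_insert.mp ha with rfl | ha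
    · exact hp
    · rw [Finset.mem_singleton.mp ha]; exact hq
  have := hx _ hsub 1 (by norm_num) (le_of_lt hx1)
  rw [Zc_pair hpq] at this
  norm_num at this

lemma beta_le_one {G : SimpleGraph V} {U : Finset V} (h : HasEdgeIn G U) :
    beta G U ≤ 1 :=
  csSup_le (betaSet_nonempty G U) (betaSet_bdd h)

/-- Open extension of positivity. -/
lemma posP_open {G : SimpleGraph V} {U : Finset V} {x : ℝ} (hx : 0 ≤ x)
    (h : ∀ W ⊆ U, ∀ y : ℝ, 0 ≤ y → y ≤ x → 0 < Zc G W y) :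
    ∃ ε > 0, PosP G U (x + ε) := by
  have key : ∀ W : Finset V, ∃ δ > 0, ∀ y : ℝ, dist y x < δ → W ⊆ U → 0 < Zc G W y := by
    intro W
    by_cases hW : W ⊆ U
    · have hpos : 0 < Zc G W x := h W hW x hx (le_refl x)
      obtain ⟨δ, hδ, hball⟩ := Metric.continuousAt_iff.mp
        (Zc_continuous G W).continuousAt (Zc G W x) hpos
      refine ⟨δ, hδ, fun y hy _ => ?_⟩
      have := hball hy
      rw [Real.dist_eq, abs_lt] at this
      linarith [this.1]
    · exact ⟨1, by norm_num, fun y _ hWU => absurd hWU hW⟩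
  choose δ hδpos hδ using key
  set D := (Finset.univ : Finset (Finset V)).image δ with hD
  have hDne : D.Nonempty := ⟨δ ∅, Finset.mem_image_of_mem δ (Finset.mem_univ _)⟩
  have hminpos : 0 < D.min' hDne := by
    obtain ⟨W', _, hW'⟩ := Finset.mem_image.mp (D.min'_mem hDne)
    rw [← hW']; exact hδpos W'
  refine ⟨D.min' hDne / 2, by linarith, ?_⟩
  intro W hW y hy hyx
  rcases le_or_gt y x with hle | hgt
  · exact h W hW y hy hle
  · apply hδ W y _ hW
    have h1 : D.min' hDne ≤ δ W :=
      Finset.min'_le _ _ (Finset.mem_image_of_mem δ (Finset.mem_univ _))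
    rw [Real.dist_eq, abs_lt]
    constructor <;> linarith

lemma beta_pos {G : SimpleGraph V} {U : Finset V} (h : HasEdgeIn G U) :
    0 < beta G U := by
  obtain ⟨ε, hε, hpos⟩ := posP_open (G := G) (U := U) (le_refl 0) (fun W hW y hy hy0 => by
    have : y = 0 := le_antisymm hy0 hy
    rw [this, Zc_at_zero]; norm_num)
  calc (0:ℝ) < 0 + ε := by linarith
  _ ≤ beta G U := le_csSup ⟨1, fun z hz => betaSet_bdd h z hz⟩ ⟨by linarith, hpos⟩

lemma pos_of_lt_beta {G : SimpleGraph V} {U : Finset V} {y : ℝ} (hy : 0 ≤ y)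
    (hlt : y < beta G U) {W : Finset V} (hW : W ⊆ U) : 0 < Zc G W y := by
  obtain ⟨z, hz, hyz⟩ := exists_lt_of_lt_csSup (betaSet_nonempty G U) hlt
  exact hz.2 W hW y hy (le_of_lt hyz)

lemma nonneg_of_pos_below {f : ℝ → ℝ} (hf : Continuous f) {b : ℝ} (hb : 0 < b)
    (h : ∀ y, 0 ≤ y → y < b → 0 < f y) : 0 ≤ f b := by
  by_contra hneg
  push_neg at hneg
  obtain ⟨δ, hδ, hball⟩ := Metric.continuousAt_iff.mp hf.continuousAt (-(f b)) (by linarith)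
  set y := max 0 (b - δ/2) with hy
  have hy0 : 0 ≤ y := le_max_left _ _
  have hyb : y < b := by
    rcases max_cases 0 (b - δ/2) with ⟨h1, h2⟩ | ⟨h1, h2⟩ <;> rw [hy, h1] <;> linarith
  have hdist : dist y b < δ := by
    rw [Real.dist_eq, abs_lt]
    rcases max_cases 0 (b - δ/2) with ⟨h1, h2⟩ | ⟨h1, h2⟩ <;> rw [hy, h1] <;>
      constructor <;> linarith
  have := hball hdist
  rw [Real.dist_eq, abs_lt] at this
  have := h y hy0 hyb
  linarith [this]

lemma nonneg_at_beta {G : SimpleGraph V} {U : Finset V} (h : HasEdgeIn G U)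
    {W : Finset V} (hW : W ⊆ U) : 0 ≤ Zc G W (beta G U) :=
  nonneg_of_pos_below (Zc_continuous G W) (beta_pos h)
    (fun y hy hlt => pos_of_lt_beta hy hlt hW)

lemma exists_vanish_at_beta {G : SimpleGraph V} {U : Finset V} (h : HasEdgeIn G U) :
    ∃ W ⊆ U, Zc G W (beta G U) = 0 := by
  by_contra hno
  push_neg at hno
  have hall : ∀ W ⊆ U, ∀ y : ℝ, 0 ≤ y → y ≤ beta G U → 0 < Zc G W y := by
    intro W hW y hy hyb
    rcases lt_or_eq_of_le hyb with hlt | rfl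
    · exact pos_of_lt_beta hy hlt hW
    · exact lt_of_le_of_ne (nonneg_at_beta h hW) (Ne.symm (hno W hW))
  obtain ⟨ε, hε, hpos⟩ := posP_open (le_of_lt (beta_pos h)) hall
  have : beta G U + ε ≤ beta G U :=
    le_csSup ⟨1, fun z hz => betaSet_bdd h z hz⟩ ⟨by linarith [beta_pos h], hpos⟩
  linarith

/-- auxiliary graph used in the chain argument: delete edges from `b` to `s`. -/
def delb (G : SimpleGraph V) (b : V) (s : Finset V) : SimpleGraph V where
  Adj a c := G.Adj a c ∧ ¬(a = b ∧ c ∈ s) ∧ ¬(c = b ∧ a ∈ s)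
  symm := by constructor; rintro a c ⟨h1, h2, h3⟩; exact ⟨h1.symm, h3, h2⟩
  loopless := by constructor; rintro a ⟨h1, _⟩; exact h1.ne rfl

lemma delb_le (G : SimpleGraph V) (b : V) (s : Finset V) : delb G b s ≤ G :=
  fun _ _ h => h.1

/-- The key chain lemma: if the ground set minus `b` vanishes but a further vertex
deletion is positive, the full ground set has negative partition function. -/
theorem chain_neg (G : SimpleGraph V) (U : Finset V) (b u₁ : V) (x : ℝ) (hx : 0 < x)
    (HA : ∀ K : SimpleGraph V, K ≤ G → ∀ W ⊆ U, 0 ≤ Zc K W x)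
    (hbU : b ∈ U) (hu₁ : u₁ ∈ U.erase b) (hadj : G.Adj b u₁)
    (HB : Zc G (U.erase b) x = 0)
    (HC : 0 < Zc G ((U.erase b).erase u₁) x) :
    Zc G U x < 0 := by
  classical
  set N := (U.erase b).filter (fun u => G.Adj b u) with hN
  have hu₁N : u₁ ∈ N := by
    rw [hN, Finset.mem_filter]; exact ⟨hu₁, hadj⟩
  have hu₁b : u₁ ≠ b := Finset.ne_of_mem_erase hu₁
  -- basic facts about elements of N
  have hNfact : ∀ u ∈ N, u ∈ U ∧ u ≠ b ∧ G.Adj b u := by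
    intro u hu
    rw [hN, Finset.mem_filter] at hu
    exact ⟨Finset.mem_of_mem_erase hu.1, Finset.ne_of_mem_erase hu.1, hu.2⟩
  -- the increasing chain
  have hstep : ∀ s : Finset V, s ⊆ N.erase u₁ → Zc G U x ≤ Zc (delb G b s) U x := by
    intro s
    induction s using Finset.induction_on with
    | empty =>
      intro _
      have hdel : delb G b ∅ = G := by
        ext a c
        simp [delb]
      rw [hdel]
    | @insert u s hus ih =>
      intro hsub
      have hs : s ⊆ N.erase u₁ := (Finset.subset_insert u s).trans hsub
      have huN : u ∈ N.erase u₁ := hsub (Finset.mem_insert_self u s)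
      obtain ⟨huU, hub, hGbu⟩ := hNfact u (Finset.mem_of_mem_erase huN)
      have hG2 : delb G b (insert u s) = (delb G b s).deleteEdges {s(b,u)} := by
        ext a c
        simp only [delb, SimpleGraph.deleteEdges_adj, Set.mem_singleton_iff, Sym2.eq_iff,
          Finset.mem_insert]
        constructor
        · rintro ⟨h1, h2, h3⟩
          refine ⟨⟨h1, fun hh => h2 ⟨hh.1, Or.inr hh.2⟩, fun hh => h3 ⟨hh.1, Or.inr hh.2⟩⟩, ?_⟩
          rintro (⟨rfl, rfl⟩ | ⟨rfl, rfl⟩)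
          · exact h2 ⟨rfl, Or.inl rfl⟩
          · exact h3 ⟨rfl, Or.inl rfl⟩
        · rintro ⟨⟨h1, h2, h3⟩, h4⟩
          refine ⟨h1, ?_, ?_⟩
          · rintro ⟨rfl, (rfl | hcs)⟩
            · exact h4 (Or.inl ⟨rfl, rfl⟩)
            · exact h2 ⟨rfl, hcs⟩
          · rintro ⟨rfl, (rfl | has)⟩
            · exact h4 (Or.inr ⟨rfl, rfl⟩)
            · exact h3 ⟨rfl, has⟩
      have hadj' : (delb G b s).Adj b u := by
        refine ⟨hGbu, ?_, ?_⟩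
        · rintro ⟨-, hu'⟩; exact hus hu'
        · rintro ⟨h, -⟩; exact hub h
      have hphnn : 0 ≤ Zc (phG (delb G b s) b u) (U.erase u) x :=
        HA _ ((phG_le _ _ _).trans (delb_le _ _ _)) _ (Finset.erase_subset _ _)
      calc Zc G U x ≤ Zc (delb G b s) U x := ih hs
      _ ≤ Zc (delb G b (insert u s)) U x := by
          rw [hG2, Zc_deleteEdge (delb G b s) b u hadj' U hbU huU x]
          have : 0 ≤ x * Zc (phG (delb G b s) b u) (U.erase u) x :=
            mul_nonneg hx.le hphnn
          linarith
  have hmain := hstep (N.erase u₁) (Finset.Subset.refl _)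
  set F' := delb G b (N.erase u₁) with hF'
  have hadjF' : F'.Adj b u₁ := by
    refine ⟨hadj, ?_, ?_⟩
    · rintro ⟨-, h⟩; exact Finset.notMem_erase u₁ N h
    · rintro ⟨h, -⟩; exact hu₁b h
  have hkey := Zc_deleteEdge F' b u₁ hadjF' U hbU (Finset.mem_of_mem_erase hu₁) x
  -- the graph with the last b-edge deleted has b isolated in U
  have hLHS : Zc (F'.deleteEdges {s(b,u₁)}) U x = 0 := by
    have hiso : ∀ w ∈ U, ¬ (F'.deleteEdges {s(b,u₁)}).Adj b w := by
      intro w hwU hadjw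
      rw [SimpleGraph.deleteEdges_adj] at hadjw
      obtain ⟨⟨hGbw, h2, h3⟩, h4⟩ := hadjw
      have hwb : w ≠ b := hGbw.ne'
      have hwN : w ∈ N := by
        rw [hN, Finset.mem_filter]
        exact ⟨Finset.mem_erase.mpr ⟨hwb, hwU⟩, hGbw⟩
      have hw1 : w ∉ N.erase u₁ := fun hmem => h2 ⟨rfl, hmem⟩
      have hwu : w = u₁ := by
        by_contra hne'
        exact hw1 (Finset.mem_erase.mpr ⟨hne', hwN⟩)
      subst hwu
      exact h4 rfl
    rw [Zc_isolated hiso x]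
    have hcg : Zc (F'.deleteEdges {s(b,u₁)}) (U.erase b) x = Zc G (U.erase b) x := by
      apply Zc_congr
      intro C hCU hcard
      apply isClique_congr
      intro a ha c hc hac
      have hab' : a ≠ b := Finset.ne_of_mem_erase (hCU ha)
      have hcb' : c ≠ b := Finset.ne_of_mem_erase (hCU hc)
      simp only [SimpleGraph.deleteEdges_adj, Set.mem_singleton_iff, Sym2.eq_iff]
      constructor
      · rintro ⟨⟨h1, -, -⟩, -⟩; exact h1
      · intro h1
        refine ⟨⟨h1, ?_, ?_⟩, ?_⟩
        · rintro ⟨h, -⟩; exact hab' h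
        · rintro ⟨h, -⟩; exact hcb' h
        · rintro (⟨rfl, rfl⟩ | ⟨rfl, rfl⟩)
          · exact hab' rfl
          · exact hcb' rfl
    rw [hcg, HB]
  -- the phantom term equals the doubly-erased partition function
  have hph : Zc (phG F' b u₁) (U.erase u₁) x = Zc G ((U.erase b).erase u₁) x := by
    have hiso : ∀ w ∈ U.erase u₁, ¬ (phG F' b u₁).Adj b w := by
      intro w hw hadjw
      rcases hadjw with ⟨-, h2, -⟩ | ⟨-, -, -, h4, -⟩ | ⟨-, h2, -⟩
      · exact h2 rfl
      · obtain ⟨hGbw, hh2, -⟩ := h4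
        have hwU : w ∈ U := Finset.mem_of_mem_erase hw
        have hwu₁ : w ≠ u₁ := Finset.ne_of_mem_erase hw
        have hwb : w ≠ b := hGbw.ne'
        apply hh2
        refine ⟨rfl, Finset.mem_erase.mpr ⟨hwu₁, ?_⟩⟩
        rw [hN, Finset.mem_filter]
        exact ⟨Finset.mem_erase.mpr ⟨hwb, hwU⟩, hGbw⟩
      · exact h2 rfl
    rw [Zc_isolated hiso x]
    rw [show (U.erase u₁).erase b = (U.erase b).erase u₁ from Finset.erase_right_comm]
    apply Zc_congr
    intro C hCU hcard
    apply isClique_congr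
    intro a ha c hc hac
    have h1 : a ≠ u₁ := Finset.ne_of_mem_erase (hCU ha)
    have h2 : a ≠ b := Finset.ne_of_mem_erase (Finset.mem_of_mem_erase (hCU ha))
    have h3 : c ≠ u₁ := Finset.ne_of_mem_erase (hCU hc)
    have h4 : c ≠ b := Finset.ne_of_mem_erase (Finset.mem_of_mem_erase (hCU hc))
    constructor
    · rintro (⟨hF, -⟩ | ⟨rfl, -⟩ | ⟨rfl, -⟩)
      · exact hF.1
      · exact absurd rfl h2
      · exact absurd rfl h4
    · intro hG'
      refine Or.inl ⟨⟨hG', ?_, ?_⟩, h2, h1, h4, h3⟩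
      · rintro ⟨h, -⟩; exact h2 h
      · rintro ⟨h, -⟩; exact h4 h
  rw [hLHS, hph] at hkey
  have hneg : Zc F' U x < 0 := by
    have : 0 < x * Zc G ((U.erase b).erase u₁) x := mul_pos hx HC
    linarith
  rw [hF'] at hneg
  linarith

def ConnOn (G : SimpleGraph V) (U : Finset V) : Prop :=
  ∀ W ⊆ U, W.Nonempty → W ≠ U → ∃ a ∈ W, ∃ c ∈ U \ W, G.Adj a c

lemma subK_nonneg {G : SimpleGraph V} {U : Finset V} (h : HasEdgeIn G U)
    (K : SimpleGraph V) (hK : K ≤ G) {W : Finset V} (hW : W ⊆ U) :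
    0 ≤ Zc K W (beta G U) := by
  apply nonneg_of_pos_below (Zc_continuous K W) (beta_pos h)
  intro y hy hlt
  have hPG : PosP G U y := fun W' hW' y' hy' hy'le =>
    pos_of_lt_beta hy' (lt_of_le_of_lt hy'le hlt) hW'
  exact posTrans (V := V) G.edgeSet.ncard G K (le_refl _) hK U y hPG W hW y hy (le_refl _)

/-- At the critical point of a connected graph, only the full ground set vanishes. -/
theorem vanish_eq_ground {G : SimpleGraph V} {U : Finset V}
    (hconn : ConnOn G U) (h : HasEdgeIn G U) :
    (∀ W ⊆ U, W ≠ U → 0 < Zc G W (beta G U)) ∧ Zc G U (beta G U) = 0 := by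
  set β := beta G U with hβ
  have hβpos := beta_pos h
  obtain ⟨W₁, hW₁U, hW₁⟩ := exists_vanish_at_beta h
  set B := Finset.univ.filter (fun W : Finset V => W ⊆ U ∧ Zc G W β = 0) with hB
  have hBne : B.Nonempty := ⟨W₁, by simp [hB, hβ, hW₁U, hW₁]⟩
  obtain ⟨W₀, hW₀B, hmin⟩ := Finset.exists_min_image B Finset.card hBne
  simp only [hB, Finset.mem_filter] at hW₀B
  obtain ⟨-, hW₀U, hW₀⟩ := hW₀B
  have hW₀ne : W₀.Nonempty := by
    rcases Finset.eq_empty_or_nonempty W₀ with rfl | hne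
    · rw [Zc_empty] at hW₀; norm_num at hW₀
    · exact hne
  have hW₀eq : W₀ = U := by
    by_contra hneq
    obtain ⟨a, haW, c, hcW, hac⟩ := hconn W₀ hW₀U hW₀ne hneq
    have hcU : c ∈ U := (Finset.mem_sdiff.mp hcW).1
    have hcW₀ : c ∉ W₀ := (Finset.mem_sdiff.mp hcW).2
    have hUsub : insert c W₀ ⊆ U := Finset.insert_subset hcU hW₀U
    have hneg : Zc G (insert c W₀) β < 0 := by
      apply chain_neg G (insert c W₀) c a β hβpos
      · intro K hK W hW
        exact subK_nonneg h K hK (hW.trans hUsub)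
      · exact Finset.mem_insert_self c W₀
      · rw [Finset.erase_insert hcW₀]; exact haW
      · exact hac.symm
      · rwa [Finset.erase_insert hcW₀]
      · rw [Finset.erase_insert hcW₀]
        have hsub : W₀.erase a ⊆ U := (Finset.erase_subset _ _).trans hW₀U
        rcases lt_or_eq_of_le (nonneg_at_beta h hsub) with hlt | heq
        · exact hlt
        · exfalso
          have hmem : W₀.erase a ∈ B := by simp [hB, hβ, hsub, heq.symm]
          have h1 := hmin _ hmem
          have h2 := Finset.card_erase_of_mem haW
          have h3 : 0 < W₀.card := Finset.card_pos.mpr ⟨a, haW⟩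
          omega
    have := nonneg_at_beta h hUsub
    linarith
  constructor
  · intro W hWU hWne
    rcases lt_or_eq_of_le (nonneg_at_beta h hWU) with hlt | heq
    · exact hlt
    · exfalso
      have : W ∈ B := by simp [hB, hβ, hWU, heq.symm]
      have hcard := hmin _ this
      rw [hW₀eq] at hcard
      exact hWne (Finset.eq_of_subset_of_card_le hWU hcard)
  · rw [← hW₀eq]; exact hW₀

lemma connOn_univ {G : SimpleGraph V} (hc : G.Connected) : ConnOn G Finset.univ := by
  intro W _ hWne hWuniv
  obtain ⟨w, hw⟩ := hWne
  have : ∃ v, v ∉ W := by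
    by_contra hno
    push_neg at hno
    exact hWuniv (Finset.eq_univ_iff_forall.mpr hno)
  obtain ⟨v, hv⟩ := this
  have hreach := (hc.preconnected w v).some
  clear hWuniv
  induction hreach with
  | nil => exact absurd hw hv
  | @cons a b c hab p ih =>
    by_cases hbW : b ∈ W
    · exact ih hbW hv
    · exact ⟨a, hw, b, by simp [hbW], hab⟩

/-- Strict monotonicity of beta under deleting an edge from a connected graph. -/
theorem beta_strict (G : SimpleGraph V) (hconn : ConnOn G Finset.univ)
    {p q : V} (hpq : G.Adj p q)
    (K : SimpleGraph V) (hK : K ≤ G.deleteEdges {s(p,q)}) (hKe : HasEdgeIn K Finset.univ) :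
    beta G Finset.univ < beta K Finset.univ := by
  set G₁ := G.deleteEdges {s(p,q)} with hG₁
  have hGedge : HasEdgeIn G Finset.univ := ⟨p, Finset.mem_univ _, q, Finset.mem_univ _, hpq⟩
  have hG₁edge : HasEdgeIn G₁ Finset.univ := by
    obtain ⟨a, -, b, -, hab⟩ := hKe
    exact ⟨a, Finset.mem_univ _, b, Finset.mem_univ _, hK hab⟩
  have hmono : ∀ A B : SimpleGraph V, B ≤ A → HasEdgeIn B Finset.univ →
      beta A Finset.univ ≤ beta B Finset.univ := by
    intro A B hBA hBe
    apply csSup_le (betaSet_nonempty _ _)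
    intro z hz
    apply le_csSup ⟨1, fun w hw => betaSet_bdd hBe w hw⟩
    exact ⟨hz.1, posTrans A.edgeSet.ncard A B le_rfl hBA _ _ hz.2⟩
  have hG₁le : G₁ ≤ G := fun a b hab => (SimpleGraph.deleteEdges_adj.mp hab).1
  have h1 : beta G Finset.univ ≤ beta G₁ Finset.univ := hmono G G₁ hG₁le hG₁edge
  have h2 : beta G₁ Finset.univ ≤ beta K Finset.univ := hmono G₁ K hK hKe
  rcases lt_or_eq_of_le h1 with hlt | heqβ
  · exact lt_of_lt_of_le hlt h2
  exfalso
  set β := beta G Finset.univ with hβ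
  have hβpos : 0 < β := beta_pos hGedge
  have hv := vanish_eq_ground hconn hGedge
  obtain ⟨W₀, hW₀sub, hW₀⟩ := exists_vanish_at_beta hG₁edge
  rw [← heqβ] at hW₀
  have hphpos : 0 < Zc (phG G p q) (Finset.univ.erase q) β := by
    have hopen : ∃ ε > 0, PosP G (Finset.univ.erase q) (β + ε) := by
      apply posP_open (G := G) (U := Finset.univ.erase q) (le_of_lt hβpos)
      intro W hW y hy hyβ
      rcases lt_or_eq_of_le hyβ with hlt' | rfl
      · exact pos_of_lt_beta hy hlt' (Finset.subset_univ W)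
      · apply hv.1 W (Finset.subset_univ W)
        intro hWuniv
        have hq : q ∈ W := hWuniv ▸ Finset.mem_univ q
        exact (Finset.notMem_erase q Finset.univ) (hW hq)
    obtain ⟨ε, hε, hPos⟩ := hopen
    have := posTrans G.edgeSet.ncard G (phG G p q) le_rfl (phG_le G p q) _ _ hPos
    exact this _ (Finset.Subset.refl _) β (le_of_lt hβpos) (by linarith)
  by_cases hWuniv : W₀ = Finset.univ
  · subst hWuniv
    rw [hG₁, Zc_deleteEdge G p q hpq Finset.univ (Finset.mem_univ p) (Finset.mem_univ q) β,
      hv.2] at hW₀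
    have : 0 < β * Zc (phG G p q) (Finset.univ.erase q) β := mul_pos hβpos hphpos
    linarith
  · by_cases hb : p ∈ W₀ ∧ q ∈ W₀
    · rw [hG₁, Zc_deleteEdge G p q hpq W₀ hb.1 hb.2 β] at hW₀
      have hZpos := hv.1 W₀ (Finset.subset_univ _) hWuniv
      have hphnn : 0 ≤ Zc (phG G p q) (W₀.erase q) β :=
        subK_nonneg hGedge _ (phG_le G p q) (Finset.subset_univ _)
      have : 0 ≤ β * Zc (phG G p q) (W₀.erase q) β := mul_nonneg hβpos.le hphnn
      linarith
    · rw [hG₁, Zc_deleteEdge_not G p q W₀ hb β] at hW₀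
      exact (hv.1 W₀ (Finset.subset_univ _) hWuniv).ne' hW₀

/-- weight of a clique system -/
noncomputable def wS (S : Finset (Finset V)) : ℕ := ∑ C ∈ S, (C.card - 1)

lemma wS_le {G : SimpleGraph V} {U : Finset V} {S : Finset (Finset V)} (hS : OkS G U S) :
    wS S ≤ Fintype.card V := by
  classical
  have h1 : wS S ≤ ∑ C ∈ S, C.card := Finset.sum_le_sum (fun C _ => Nat.sub_le _ _)
  have h2 : (S.biUnion id).card = ∑ C ∈ S, C.card := by
    rw [Finset.card_biUnion (fun x hx y hy hxy =>
      hS.2 (Finset.mem_coe.mpr hx) (Finset.mem_coe.mpr hy) hxy)]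
    rfl
  calc wS S ≤ ∑ C ∈ S, C.card := h1
  _ = (S.biUnion id).card := h2.symm
  _ ≤ Fintype.card V := by
      rw [← Finset.card_univ]
      exact Finset.card_le_card (Finset.subset_univ _)

noncomputable def cF (G : SimpleGraph V) (j : ℕ) : Finset (Finset (Finset V)) :=
  (okF G Finset.univ).filter (fun S => wS S = j)

lemma Zc_sum_form (G : SimpleGraph V) (x : ℝ) :
    Zc G Finset.univ x
      = ∑ j ∈ Finset.range (Fintype.card V + 1), ((cF G j).card : ℝ) * (-x) ^ j := by
  classical
  rw [Zc]
  rw [← Finset.sum_fiberwise_of_maps_to (g := wS)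
    (t := Finset.range (Fintype.card V + 1))
    (fun S hS => by
      rw [Finset.mem_range]
      have := wS_le (mem_okF.mp hS)
      omega)
    (fun S => ∏ D ∈ S, (-x) ^ (D.card - 1))]
  apply Finset.sum_congr rfl
  intro j _
  have hval : ∀ S ∈ (okF G Finset.univ).filter (fun S => wS S = j),
      ∏ D ∈ S, (-x) ^ (D.card - 1) = (-x) ^ j := by
    intro S hS
    rw [Finset.prod_pow_eq_pow_sum]
    rw [show ∑ C ∈ S, (C.card - 1) = wS S from rfl, (Finset.mem_filter.mp hS).2]
  rw [Finset.sum_congr rfl hval, Finset.sum_const, nsmul_eq_mul]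
  rfl

/-- the partition ↔ clique-system counting identity. -/
lemma count_eq (G : SimpleGraph V) (k : ℕ) (hk : k ≤ Fintype.card V) :
    numCliqueCovers G k = (cF G (Fintype.card V - k)).card := by
  classical
  set n := Fintype.card V with hn
  set f : Finpartition (Finset.univ : Finset V) → Finset (Finset V) :=
    fun P => P.parts.filter (fun C => 2 ≤ C.card) with hf
  set PP : Set (Finpartition (Finset.univ : Finset V)) :=
    {P | G.IsCliqueCover P ∧ P.parts.card = k} with hPP
  -- weight computation for partitions
  have hwP : ∀ P : Finpartition (Finset.univ : Finset V),
      wS (f P) + P.parts.card = n := by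
    intro P
    have h1 : wS (f P) = ∑ C ∈ P.parts, (C.card - 1) := by
      rw [hf, wS]
      exact Finset.sum_filter_of_ne (fun C _ hne => by omega)
    have h2 : ∑ C ∈ P.parts, (C.card - 1) + P.parts.card = ∑ C ∈ P.parts, C.card := by
      have heach : ∑ C ∈ P.parts, (C.card - 1 + 1) = ∑ C ∈ P.parts, C.card := by
        apply Finset.sum_congr rfl
        intro C hC
        have := Finset.card_pos.mpr (P.nonempty_of_mem_parts hC)
        omega
      rw [Finset.sum_add_distrib, Finset.sum_const, smul_eq_mul, mul_one] at heach
      exact heach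
    have h3 : ∑ C ∈ P.parts, C.card = n := by
      rw [P.sum_card_parts, Finset.card_univ]
    omega
  -- membership of image
  have hmem : ∀ P ∈ PP, f P ∈ cF G (n - k) := by
    intro P hP
    rw [hPP, Set.mem_setOf_eq] at hP
    obtain ⟨hcov, hcard⟩ := hP
    rw [cF, Finset.mem_filter, mem_okF]
    refine ⟨⟨?_, ?_⟩, ?_⟩
    · intro C hC
      rw [hf, Finset.mem_filter] at hC
      exact ⟨Finset.subset_univ _, hC.2, hcov C hC.1⟩
    · exact (P.supIndep.pairwiseDisjoint).subset
        (Finset.coe_subset.mpr (Finset.filter_subset _ _))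
    · have := hwP P
      omega
  -- injectivity
  have hinj : Set.InjOn f PP := by
    have hsub : ∀ P₁ P₂ : Finpartition (Finset.univ : Finset V),
        G.IsCliqueCover P₁ → G.IsCliqueCover P₂ → f P₁ = f P₂ →
        P₁.parts ⊆ P₂.parts := by
      intro P₁ P₂ _ _ hfe C hC
      by_cases h2 : 2 ≤ C.card
      · have : C ∈ f P₁ := by rw [hf, Finset.mem_filter]; exact ⟨hC, h2⟩
        rw [hfe, hf, Finset.mem_filter] at this
        exact this.1
      · have hCne := P₁.nonempty_of_mem_parts hC
        have hc1 : C.card = 1 := by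
          have := Finset.card_pos.mpr hCne
          omega
        obtain ⟨v, rfl⟩ := Finset.card_eq_one.mp hc1
        obtain ⟨D, hD, hvD⟩ := P₂.exists_mem (Finset.mem_univ v)
        by_cases hD2 : 2 ≤ D.card
        · exfalso
          have hDf : D ∈ f P₂ := by rw [hf, Finset.mem_filter]; exact ⟨hD, hD2⟩
          rw [← hfe, hf, Finset.mem_filter] at hDf
          have hDP₁ := hDf.1
          have hne : ({v} : Finset V) ≠ D := by
            intro h
            rw [← h] at hD2
            simp at hD2
          have hdisj := (P₁.supIndep.pairwiseDisjoint)
            (Finset.mem_coe.mpr hC) (Finset.mem_coe.mpr hDP₁) hne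
          exact (Finset.disjoint_left.mp hdisj) (Finset.mem_singleton_self v) hvD
        · have hDne := P₂.nonempty_of_mem_parts hD
          have hD1 : D.card = 1 := by
            have := Finset.card_pos.mpr hDne
            omega
          obtain ⟨w, rfl⟩ := Finset.card_eq_one.mp hD1
          have : v = w := Finset.mem_singleton.mp hvD
          rw [this]
          exact hD
    intro P₁ hP₁ P₂ hP₂ hfe
    rw [hPP, Set.mem_setOf_eq] at hP₁ hP₂
    exact Finpartition.ext (Finset.Subset.antisymm
      (hsub P₁ P₂ hP₁.1 hP₂.1 hfe) (hsub P₂ P₁ hP₂.1 hP₁.1 hfe.symm))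
  -- surjectivity
  have hsurj : ∀ S ∈ cF G (n - k), ∃ P ∈ PP, f P = S := by
    intro S hS
    rw [cF, Finset.mem_filter, mem_okF] at hS
    obtain ⟨⟨h1, h2⟩, hw⟩ := hS
    set R := Finset.univ \ S.biUnion id with hR
    have hdisjSR : ∀ C ∈ S, ∀ v ∈ R, v ∉ C := by
      intro C hC v hv hvC
      rw [hR, Finset.mem_sdiff] at hv
      exact hv.2 (Finset.mem_biUnion.mpr ⟨C, hC, hvC⟩)
    have hSimg : ∀ C ∈ S, C ∉ R.image (fun v => ({v} : Finset V)) := by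
      intro C hC hmem
      obtain ⟨v, -, hv⟩ := Finset.mem_image.mp hmem
      have := (h1 C hC).2.1
      rw [← hv] at this
      simp at this
    have hsupparts : (S ∪ R.image fun v => ({v} : Finset V)).sup id = Finset.univ := by
      rw [Finset.sup_union, Finset.sup_eq_biUnion, Finset.sup_eq_biUnion]
      have himg : (R.image fun v => ({v} : Finset V)).biUnion id = R := by
        ext a
        simp
      rw [himg, Finset.sup_eq_union, hR]
      exact Finset.union_sdiff_of_subset (Finset.subset_univ _)
    have hsupind : (S ∪ R.image fun v => ({v} : Finset V)).SupIndep id := by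
      rw [Finset.supIndep_iff_pairwiseDisjoint]
      intro C hC D hD hne
      rw [Finset.mem_coe, Finset.mem_union] at hC hD
      rcases hC with hCS | hCi <;> rcases hD with hDS | hDi
      · exact h2 (Finset.mem_coe.mpr hCS) (Finset.mem_coe.mpr hDS) hne
      · obtain ⟨v, hvR, rfl⟩ := Finset.mem_image.mp hDi
        show Disjoint C ({v} : Finset V)
        rw [Finset.disjoint_singleton_right]
        exact hdisjSR C hCS v hvR
      · obtain ⟨v, hvR, rfl⟩ := Finset.mem_image.mp hCi
        show Disjoint ({v} : Finset V) D
        rw [Finset.disjoint_singleton_left]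
        exact hdisjSR D hDS v hvR
      · obtain ⟨v, -, rfl⟩ := Finset.mem_image.mp hCi
        obtain ⟨w, -, rfl⟩ := Finset.mem_image.mp hDi
        show Disjoint ({v} : Finset V) ({w} : Finset V)
        rw [Finset.disjoint_singleton_left]
        intro h
        exact hne (by rw [Finset.mem_singleton.mp h])
    have hnotbot : (⊥ : Finset V) ∉ S ∪ R.image (fun v => ({v} : Finset V)) := by
      intro hbot
      rw [Finset.mem_union] at hbot
      rcases hbot with hb | hb
      · have := (h1 _ hb).2.1
        simp at this
      · obtain ⟨v, -, hv⟩ := Finset.mem_image.mp hb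
        exact Finset.singleton_ne_empty v hv
    set P : Finpartition (Finset.univ : Finset V) :=
      ⟨S ∪ R.image (fun v => ({v} : Finset V)), hsupind, hsupparts, hnotbot⟩ with hPdef
    have hfP : f P = S := by
      rw [hf]
      show (S ∪ R.image (fun v => ({v} : Finset V))).filter (fun C => 2 ≤ C.card) = S
      rw [Finset.filter_union]
      rw [Finset.filter_true_of_mem (fun C hC => (h1 C hC).2.1)]
      rw [Finset.filter_false_of_mem, Finset.union_empty]
      intro C hC
      obtain ⟨v, -, rfl⟩ := Finset.mem_image.mp hC
      simp
    refine ⟨P, ?_, hfP⟩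
    rw [hPP, Set.mem_setOf_eq]
    constructor
    · intro C hC
      have hC' : C ∈ S ∪ R.image (fun v => ({v} : Finset V)) := hC
      rw [Finset.mem_union] at hC'
      rcases hC' with h | h
      · exact (h1 C h).2.2
      · obtain ⟨v, -, rfl⟩ := Finset.mem_image.mp h
        rw [Finset.coe_singleton]
        exact SimpleGraph.isClique_singleton v
    · show (S ∪ R.image (fun v => ({v} : Finset V))).card = k
      rw [Finset.card_union_of_disjoint (Finset.disjoint_left.mpr hSimg)]
      rw [Finset.card_image_of_injective _ Finset.singleton_injective]
      have hm : (S.biUnion id).card = ∑ C ∈ S, C.card :=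
        Finset.card_biUnion (fun x hx y hy hxy =>
          h2 (Finset.mem_coe.mpr hx) (Finset.mem_coe.mpr hy) hxy)
      have hRcard : R.card = n - (S.biUnion id).card := by
        rw [hR, Finset.card_sdiff_of_subset (Finset.subset_univ _), Finset.card_univ]
      have hwsum : wS S + S.card = ∑ C ∈ S, C.card := by
        have heach : ∑ C ∈ S, (C.card - 1 + 1) = ∑ C ∈ S, C.card := by
          apply Finset.sum_congr rfl
          intro C hC
          have := (h1 C hC).2.1
          omega
        rw [Finset.sum_add_distrib, Finset.sum_const, smul_eq_mul, mul_one] at heach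
        exact heach
      have hble : (S.biUnion id).card ≤ n := by
        have h := Finset.card_le_card (Finset.subset_univ (S.biUnion id))
        rwa [Finset.card_univ] at h
      omega
  -- put it together
  have himage : f '' PP = ↑(cF G (n - k)) := by
    apply Set.eq_of_subset_of_subset
    · rintro x ⟨P, hP, rfl⟩
      exact Finset.mem_coe.mpr (hmem P hP)
    · intro S hS
      obtain ⟨P, hP, hfP⟩ := hsurj S (Finset.mem_coe.mp hS)
      exact ⟨P, hP, hfP⟩
  have : numCliqueCovers G k = PP.ncard := rfl
  rw [this, ← Set.ncard_image_of_injOn hinj, himage, Set.ncard_coe_finset]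

/-- the evaluation identity relating `adjPoly` and `Zc`. -/
theorem adjPoly_eval (G : SimpleGraph V) (t : ℝ) (ht : 0 < t) :
    (adjPoly G).eval t = t ^ (Fintype.card V) * Zc G Finset.univ (1/t) := by
  classical
  set n := Fintype.card V with hn
  have hL : (adjPoly G).eval t
      = ∑ k ∈ Finset.range (n+1), (-1:ℝ)^(n-k) * (numCliqueCovers G k : ℝ) * t^k := by
    rw [adjPoly, Polynomial.eval_finset_sum]
    apply Finset.sum_congr rfl
    intro k _
    simp [mul_assoc, hn]
  rw [hL, Zc_sum_form G (1/t), Finset.mul_sum]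
  rw [← Finset.sum_range_reflect
    (fun j => t^n * (((cF G j).card : ℝ) * (-(1/t))^j)) (n+1)]
  apply Finset.sum_congr rfl
  intro k hk
  rw [Finset.mem_range] at hk
  have hk' : k ≤ n := by omega
  have hidx : n + 1 - 1 - k = n - k := by omega
  rw [hidx, count_eq G k hk']
  have hpow : t^n * (-(1/t))^(n-k) = (-1:ℝ)^(n-k) * t^k := by
    have h3 : n - (n - k) = k := by omega
    have h2 : t^n * (1/t)^(n-k) = t^k := by
      calc t^n * (1/t)^(n-k) = t^n * (t^(n-k))⁻¹ := by rw [one_div, inv_pow]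
      _ = t^(n - (n-k)) := (pow_sub₀ t (ne_of_gt ht) (Nat.sub_le n k)).symm
      _ = t^k := by rw [h3]
    rw [neg_pow]
    calc t^n * ((-1:ℝ)^(n-k) * (1/t)^(n-k))
        = (-1:ℝ)^(n-k) * (t^n * (1/t)^(n-k)) := by ring
    _ = (-1:ℝ)^(n-k) * t^k := by rw [h2]
  calc (-1:ℝ)^(n-k) * ((cF G (n-k)).card : ℝ) * t^k
      = ((cF G (n-k)).card : ℝ) * ((-1:ℝ)^(n-k) * t^k) := by ring
  _ = ((cF G (n-k)).card : ℝ) * (t^n * (-(1/t))^(n-k)) := by rw [hpow]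
  _ = t^n * (((cF G (n-k)).card : ℝ) * (-(1/t))^(n-k)) := by ring

/-- transport along graph embeddings. -/
theorem Zc_map {W : Type*} [Fintype W] [DecidableEq W] (f : W ↪ V)
    (F : SimpleGraph W) (F' : SimpleGraph V)
    (hadj : ∀ a b, F.Adj a b ↔ F'.Adj (f a) (f b)) (U : Finset W) (x : ℝ) :
    Zc F U x = Zc F' (U.map f) x := by
  classical
  set pre : Finset V → Finset W := fun C' => U.filter (fun a => f a ∈ C') with hpre
  have hpre_map : ∀ C : Finset W, C ⊆ U → pre (C.map f) = C := by
    intro C hC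
    ext a
    rw [hpre]
    simp only [Finset.mem_filter, Finset.mem_map]
    constructor
    · rintro ⟨-, b, hb, hba⟩
      rwa [← f.injective hba]
    · intro ha
      exact ⟨hC ha, a, ha, rfl⟩
  have hmap_pre : ∀ C' : Finset V, C' ⊆ U.map f → (pre C').map f = C' := by
    intro C' hC'
    ext v
    simp only [hpre, Finset.mem_map, Finset.mem_filter]
    constructor
    · rintro ⟨a, ⟨-, hfa⟩, rfl⟩
      exact hfa
    · intro hv
      obtain ⟨a, haU, rfl⟩ := Finset.mem_map.mp (hC' hv)
      exact ⟨a, ⟨haU, hv⟩, rfl⟩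
  rw [Zc, Zc]
  apply Finset.sum_nbij' (i := fun S => S.image (fun C => C.map f))
    (j := fun S' => S'.image pre)
  · intro S hS
    obtain ⟨h1, h2⟩ := mem_okF.mp hS
    rw [mem_okF]
    constructor
    · intro C' hC'
      obtain ⟨C, hCS, rfl⟩ := Finset.mem_image.mp hC'
      refine ⟨Finset.map_subset_map.mpr (h1 C hCS).1, ?_, ?_⟩
      · rw [Finset.card_map]; exact (h1 C hCS).2.1
      · intro v hv w hw hvw
        obtain ⟨a, ha, rfl⟩ := Finset.mem_map.mp (Finset.mem_coe.mp hv)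
        obtain ⟨b, hb, rfl⟩ := Finset.mem_map.mp (Finset.mem_coe.mp hw)
        have hab : a ≠ b := fun h => hvw (by rw [h])
        exact (hadj a b).mp
          ((h1 C hCS).2.2 (Finset.mem_coe.mpr ha) (Finset.mem_coe.mpr hb) hab)
    · intro C' hC' D' hD' hne
      obtain ⟨C, hCS, rfl⟩ := Finset.mem_image.mp (Finset.mem_coe.mp hC')
      obtain ⟨D, hDS, rfl⟩ := Finset.mem_image.mp (Finset.mem_coe.mp hD')
      have hCD : C ≠ D := fun h => hne (by rw [h])
      show Disjoint (C.map f) (D.map f)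
      rw [Finset.disjoint_map]
      exact h2 (Finset.mem_coe.mpr hCS) (Finset.mem_coe.mpr hDS) hCD
  · intro S' hS'
    obtain ⟨h1, h2⟩ := mem_okF.mp hS'
    rw [mem_okF]
    constructor
    · intro C hC
      obtain ⟨C', hC'S, rfl⟩ := Finset.mem_image.mp hC
      refine ⟨Finset.filter_subset _ _, ?_, ?_⟩
      · have hcard := (h1 C' hC'S).2.1
        have hc : (pre C').map f = C' := hmap_pre C' (h1 C' hC'S).1
        rw [← hc, Finset.card_map] at hcard
        exact hcard
      · intro a ha b hb hab
        have hfa : f a ∈ C' := (Finset.mem_filter.mp (Finset.mem_coe.mp ha)).2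
        have hfb : f b ∈ C' := (Finset.mem_filter.mp (Finset.mem_coe.mp hb)).2
        have hne' : f a ≠ f b := fun h => hab (f.injective h)
        exact (hadj a b).mpr
          ((h1 C' hC'S).2.2 (Finset.mem_coe.mpr hfa) (Finset.mem_coe.mpr hfb) hne')
    · intro C hC D hD hne
      obtain ⟨C', hC'S, rfl⟩ := Finset.mem_image.mp (Finset.mem_coe.mp hC)
      obtain ⟨D', hD'S, rfl⟩ := Finset.mem_image.mp (Finset.mem_coe.mp hD)
      have hCD' : C' ≠ D' := fun h => hne (by rw [h])
      have hdisj := h2 (Finset.mem_coe.mpr hC'S) (Finset.mem_coe.mpr hD'S) hCD'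
      show Disjoint (pre C') (pre D')
      rw [Finset.disjoint_left]
      intro a haC haD
      exact (Finset.disjoint_left.mp hdisj)
        (Finset.mem_filter.mp haC).2 (Finset.mem_filter.mp haD).2
  · intro S hS
    obtain ⟨h1, -⟩ := mem_okF.mp hS
    rw [Finset.image_image]
    have heq : ∀ C ∈ S, (pre ∘ fun C => C.map f) C = id C := by
      intro C hC
      exact hpre_map C (h1 C hC).1
    rw [Finset.image_congr (fun C hC => heq C hC), Finset.image_id]
  · intro S' hS'
    obtain ⟨h1, -⟩ := mem_okF.mp hS'
    rw [Finset.image_image]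
    have heq : ∀ C' ∈ S', ((fun C => C.map f) ∘ pre) C' = id C' := by
      intro C' hC'
      exact hmap_pre C' (h1 C' hC').1
    rw [Finset.image_congr (fun C' hC' => heq C' hC'), Finset.image_id]
  · intro S hS
    obtain ⟨-, -⟩ := mem_okF.mp hS
    rw [Finset.prod_image (fun C _ D _ h => Finset.map_injective f h)]
    apply Finset.prod_congr rfl
    intro C _
    rw [Finset.card_map]

end S17

/-- for connected `G` with an edge and a proper subgraph `H` with an edge,
`γ(H) < γ(G)`. -/
theorem stmt17 {V : Type*} [Fintype V] [DecidableEq V] (G : SimpleGraph V)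
    (hc : G.Connected) (he : ∃ a b, G.Adj a b)
    (H : G.Subgraph) [Fintype H.verts] (hne : H ≠ ⊤) (heH : ∃ a b, H.Adj a b)
    (gH gG : ℝ) (hgH : IsGammaZero (adjPoly H.coe) gH)
    (hgG : IsGammaZero (adjPoly G) gG) :
    gH < gG := by
  classical
  open S17 in
  -- every vertex has a neighbour
  have hnbr : ∀ v : V, ∃ w, G.Adj v w := by
    intro v
    obtain ⟨a, b, hab⟩ := he
    have hr := (hc.preconnected v a).some
    cases hr with
    | nil => exact ⟨b, hab⟩
    | cons h p => exact ⟨_, h⟩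
  -- a G-edge not in H
  have hmiss : ∃ p q, G.Adj p q ∧ ¬ H.Adj p q := by
    by_contra hno
    push_neg at hno
    apply hne
    have hverts : H.verts = Set.univ := by
      apply Set.eq_univ_of_forall
      intro v
      obtain ⟨w, hw⟩ := hnbr v
      exact (hno v w hw).fst_mem
    apply SimpleGraph.Subgraph.ext
    · exact hverts
    · ext a b
      exact ⟨fun h => H.adj_sub h, fun h => hno a b h⟩
  obtain ⟨p, q, hGpq, hHpq⟩ := hmiss
  set Ht := H.spanningCoe with hHt
  have hHtle : Ht ≤ G := H.spanningCoe_le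
  have hHtedge : HasEdgeIn Ht Finset.univ := by
    obtain ⟨a, b, hab⟩ := heH
    exact ⟨a, Finset.mem_univ a, b, Finset.mem_univ b, hab⟩
  have hGedge : HasEdgeIn G Finset.univ := by
    obtain ⟨a, b, hab⟩ := he
    exact ⟨a, Finset.mem_univ a, b, Finset.mem_univ b, hab⟩
  have hKle : Ht ≤ G.deleteEdges {s(p,q)} := by
    intro a b hab
    rw [SimpleGraph.deleteEdges_adj]
    refine ⟨hHtle hab, fun hmem => ?_⟩
    rw [Set.mem_singleton_iff, Sym2.eq_iff] at hmem
    rcases hmem with ⟨rfl, rfl⟩ | ⟨rfl, rfl⟩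
    · exact hHpq hab
    · exact hHpq hab.symm
  set βG := beta G Finset.univ with hβG
  set βH := beta Ht Finset.univ with hβH
  have hstrict : βG < βH := beta_strict G (connOn_univ hc) hGpq Ht hKle hHtedge
  have hβGpos : 0 < βG := beta_pos hGedge
  have hβHpos : 0 < βH := lt_trans hβGpos hstrict
  have hβG1 : βG ≤ 1 := beta_le_one hGedge
  -- gG ≥ 1/βG
  have hvanish : Zc G Finset.univ βG = 0 :=
    (vanish_eq_ground (connOn_univ hc) hGedge).2
  have hGzero : (adjPoly G).eval (1/βG) = 0 := by
    rw [adjPoly_eval G (1/βG) (by positivity), one_div_one_div, hvanish, mul_zero]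
  have hgGlarge : 1/βG ≤ gG := hgG.2 _ hGzero
  -- gH ≤ 1/βH
  by_cases hgh0 : gH ≤ 0
  · have : (0:ℝ) < 1/βG := by positivity
    linarith
  · push_neg at hgh0
    have hHzero : Zc H.coe Finset.univ (1/gH) = 0 := by
      have := hgH.1
      rw [adjPoly_eval H.coe gH hgh0] at this
      have hne' : gH ^ (Fintype.card H.verts) ≠ 0 := by positivity
      exact (mul_eq_zero.mp this).resolve_left hne'
    have htrans : Zc Ht ((Finset.univ : Finset H.verts).map
        (Function.Embedding.subtype _)) (1/gH) = 0 := by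
      rw [← Zc_map (Function.Embedding.subtype _) H.coe Ht (fun a b => Iff.rfl)]
      exact hHzero
    have hge : βH ≤ 1/gH := by
      by_contra hlt
      push_neg at hlt
      have := pos_of_lt_beta (by positivity) hlt
        (W := (Finset.univ : Finset H.verts).map (Function.Embedding.subtype _))
        (Finset.subset_univ _)
      rw [htrans] at this
      norm_num at this
    have h1 : gH ≤ 1/βH := by
      rw [le_div_iff₀ hβHpos]
      calc gH * βH ≤ gH * (1/gH) := by
            apply mul_le_mul_of_nonneg_left hge (le_of_lt hgh0)
      _ = 1 := by field_simp
    have h2 : 1/βH < 1/βG := by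
      apply one_div_lt_one_div_of_lt hβGpos hstrict
    linarith
end
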